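/- arXiv:2309.08199 — 5 statements merged into one kernel-verified Lean document; each statement's English description precedes it below -/
import Mathlib

section
/- (Theorem 1(b), identification via selection probability and outcome mean) Under Assumptions (A1)–(A4), the average treatment effect satisfies τ = E[(R/ρ(X))·(m(1,X,V) − m(0,X,V))]. -/
open MeasureTheory ProbabilityTheory

lemma bdd_integrable {Ω : Type*} [MeasurableSpace Ω] {μ : Measure Ω} [IsFiniteMeasure μ]
    {f : Ω → ℝ} (hf : AEStronglyMeasurable f μ) {C : ℝ} (hb : ∀ ω, |f ω| ≤ C) :
    Integrable f μ :=
  Integrable.mono' (integrable_const C) hf (ae_of_all _ (by simpa [Real.norm_eq_abs] using hb))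

lemma condIndep_condexp_mul
    {Ω : Type*} {m : MeasurableSpace Ω} [mΩ : MeasurableSpace Ω]
    [StandardBorelSpace Ω] [Nonempty Ω]
    {μ : Measure Ω} [IsProbabilityMeasure μ] (hm : m ≤ mΩ)
    {f g : Ω → ℝ} (hf : Measurable f) (hg : Measurable g)
    {Cf Cg : ℝ} (hbf : ∀ ω, |f ω| ≤ Cf) (hbg : ∀ ω, |g ω| ≤ Cg)
    (hindep : CondIndepFun m hm f g μ) :
    μ[fun ω => f ω * g ω | m] =ᵐ[μ] fun ω => (μ[f|m]) ω * (μ[g|m]) ω := by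
  set κ := condExpKernel (mΩ := mΩ) μ m with hκ
  have h' := Kernel.indepFun_iff_measure_inter_preimage_eq_mul.mp hindep
  have hae : ∀ᵐ ω ∂(μ.trim hm), ∀ q r : ℚ,
      κ ω (f ⁻¹' Set.Iic (q:ℝ) ∩ g ⁻¹' Set.Iic (r:ℝ))
        = κ ω (f ⁻¹' Set.Iic (q:ℝ)) * κ ω (g ⁻¹' Set.Iic (r:ℝ)) := by
    rw [ae_all_iff]
    intro q
    rw [ae_all_iff]
    intro r
    exact h' _ _ measurableSet_Iic measurableSet_Iic
  have hreal : (inferInstance : MeasurableSpace ℝ)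
      = MeasurableSpace.generateFrom (⋃ q : ℚ, {Set.Iic (q:ℝ)}) := by
    rw [show (inferInstance : MeasurableSpace ℝ) = borel ℝ from BorelSpace.measurable_eq,
      Real.borel_eq_generateFrom_Iic_rat]
  have hpi : ∀ (h : Ω → ℝ), IsPiSystem (⋃ q : ℚ, {h ⁻¹' Set.Iic (q:ℝ)}) := by
    intro h s hs t ht _
    simp only [Set.mem_iUnion, Set.mem_singleton_iff] at hs ht ⊢
    obtain ⟨q, rfl⟩ := hs
    obtain ⟨r, rfl⟩ := ht
    refine ⟨min q r, ?_⟩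
    rw [← Set.preimage_inter, Set.Iic_inter_Iic]
    simp
  have hcomap : ∀ (h : Ω → ℝ), Measurable h → MeasurableSpace.comap h inferInstance
      = MeasurableSpace.generateFrom (⋃ q : ℚ, {h ⁻¹' Set.Iic (q:ℝ)}) := by
    intro h _
    rw [hreal, MeasurableSpace.comap_generateFrom]
    congr 1
    rw [Set.iUnion_singleton_eq_range, Set.iUnion_singleton_eq_range, ← Set.range_comp]
    rfl
  have hind : ∀ᵐ ω ∂μ, IndepFun f g (κ ω) := by
    refine ae_of_ae_trim hm (hae.mono fun ω hω => ?_)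
    rw [IndepFun_iff_Indep, hcomap f hf, hcomap g hg]
    refine IndepSets.indep' ?_ ?_ (hpi f) (hpi g) ?_
    · intro s hs
      simp only [Set.mem_iUnion, Set.mem_singleton_iff] at hs
      obtain ⟨q, rfl⟩ := hs
      exact hf measurableSet_Iic
    · intro s hs
      simp only [Set.mem_iUnion, Set.mem_singleton_iff] at hs
      obtain ⟨q, rfl⟩ := hs
      exact hg measurableSet_Iic
    · rw [IndepSets_iff]
      intro t1 t2 h1 h2
      simp only [Set.mem_iUnion, Set.mem_singleton_iff] at h1 h2
      obtain ⟨q, rfl⟩ := h1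
      obtain ⟨r, rfl⟩ := h2
      exact hω q r
  have hif : Integrable f μ := bdd_integrable hf.aestronglyMeasurable hbf
  have hig : Integrable g μ := bdd_integrable hg.aestronglyMeasurable hbg
  have hCf : 0 ≤ Cf := le_trans (abs_nonneg _) (hbf Classical.ofNonempty)
  have hifg : Integrable (fun ω => f ω * g ω) μ := by
    refine bdd_integrable ((hf.mul hg).aestronglyMeasurable) (C := Cf * Cg) fun ω => ?_
    rw [abs_mul]
    exact mul_le_mul (hbf ω) (hbg ω) (abs_nonneg _) hCf
  have h1 := condExp_ae_eq_integral_condExpKernel hm hif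
  have h2 := condExp_ae_eq_integral_condExpKernel hm hig
  have h3 := condExp_ae_eq_integral_condExpKernel hm hifg
  filter_upwards [h1, h2, h3, hind] with ω e1 e2 e3 hω
  rw [e1, e2, e3]
  exact IndepFun.integral_fun_mul_eq_mul_integral hω
    hf.aestronglyMeasurable
    hg.aestronglyMeasurable

theorem identification_sel_prob_outcome_mean
    {Ω 𝒳 𝒱 : Type*}
    [MeasurableSpace Ω] [StandardBorelSpace Ω] [Nonempty Ω]
    [MeasurableSpace 𝒳] [StandardBorelSpace 𝒳]
    [MeasurableSpace 𝒱] [StandardBorelSpace 𝒱]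
    (μ : Measure Ω) [IsProbabilityMeasure μ]
    (X : Ω → 𝒳) (V : Ω → 𝒱) (Z R Y0 Y1 : Ω → ℝ)
    (hX : Measurable X) (hV : Measurable V) (hZ : Measurable Z)
    (hR : Measurable R) (hY0 : Measurable Y0) (hY1 : Measurable Y1)
    (hZ01 : ∀ ω, Z ω = 0 ∨ Z ω = 1) (hR01 : ∀ ω, R ω = 0 ∨ R ω = 1)
    (hYbd : ∃ C, ∀ ω, |Y0 ω| ≤ C ∧ |Y1 ω| ≤ C)
    (Y : Ω → ℝ) (hYdef : ∀ ω, Y ω = Z ω * Y1 ω + (1 - Z ω) * Y0 ω)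
    (pi : 𝒳 × 𝒱 → ℝ) (rho : 𝒳 → ℝ)
    (hpiM : Measurable pi) (hrhoM : Measurable rho)
    (hpi : (fun ω => pi (X ω, V ω)) =ᵐ[μ]
      μ[Z | MeasurableSpace.comap (fun ω => (X ω, V ω)) inferInstance])
    (hrho : (fun ω => rho (X ω)) =ᵐ[μ]
      μ[R | MeasurableSpace.comap X inferInstance])
    (hA1 : CondIndepFun (MeasurableSpace.comap X inferInstance)
      (measurable_iff_comap_le.mp hX) R (fun ω => (Y ω, Z ω, V ω)) μ)
    (hA2 : CondIndepFun (MeasurableSpace.comap (fun ω => (X ω, V ω)) inferInstance)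
      (measurable_iff_comap_le.mp (hX.prodMk hV)) Z (fun ω => (Y0 ω, Y1 ω)) μ)
    (hA3 : ∀ᵐ ω ∂μ, 0 < pi (X ω, V ω) ∧ pi (X ω, V ω) < 1)
    (hA4 : ∀ᵐ ω ∂μ, 0 < rho (X ω))
    (mo : ℝ × 𝒳 × 𝒱 → ℝ) (hmoM : Measurable mo) (hmoBd : ∃ C, ∀ p, |mo p| ≤ C)
    (hmo : (fun ω => mo (Z ω, X ω, V ω)) =ᵐ[μ]
      μ[Y | MeasurableSpace.comap (fun ω => (Z ω, X ω, V ω)) inferInstance])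
 :
    ∫ ω, (Y1 ω - Y0 ω) ∂μ
      = ∫ ω, (R ω / rho (X ω)) * (mo (1, X ω, V ω) - mo (0, X ω, V ω)) ∂μ := by
  classical
  obtain ⟨C, hC⟩ := hYbd
  obtain ⟨D, hD⟩ := hmoBd
  have hω0 : Ω := Classical.ofNonempty
  have hD0 : 0 ≤ D := le_trans (abs_nonneg _) (hD (1, X hω0, V hω0))
  have hC0 : 0 ≤ C := le_trans (abs_nonneg _) (hC hω0).1
  have hXV : Measurable (fun ω => (X ω, V ω)) := hX.prodMk hV
  have hZXV : Measurable (fun ω => (Z ω, X ω, V ω)) := hZ.prodMk hXV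
  have hmX : (MeasurableSpace.comap X inferInstance) ≤ ‹MeasurableSpace Ω› := measurable_iff_comap_le.mp hX
  have hmXV : (MeasurableSpace.comap (fun ω => (X ω, V ω)) inferInstance) ≤ ‹MeasurableSpace Ω› := measurable_iff_comap_le.mp hXV
  have hmZXV : (MeasurableSpace.comap (fun ω => (Z ω, X ω, V ω)) inferInstance) ≤ ‹MeasurableSpace Ω› := measurable_iff_comap_le.mp hZXV
  have hle2 : (MeasurableSpace.comap (fun ω => (X ω, V ω)) inferInstance) ≤ (MeasurableSpace.comap (fun ω => (Z ω, X ω, V ω)) inferInstance) := by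
    have h1 : (MeasurableSpace.comap (fun ω => (X ω, V ω)) inferInstance) = MeasurableSpace.comap (fun ω => (Z ω, X ω, V ω))
        (MeasurableSpace.comap Prod.snd inferInstance) := by
      rw [MeasurableSpace.comap_comp]; rfl
    rw [h1]
    exact MeasurableSpace.comap_mono (measurable_iff_comap_le.mp measurable_snd)
  have hmeasX : Measurable[(MeasurableSpace.comap X inferInstance)] X := measurable_iff_comap_le.mpr le_rfl
  have hmeasXV : Measurable[(MeasurableSpace.comap (fun ω => (X ω, V ω)) inferInstance)] (fun ω => (X ω, V ω)) :=
    measurable_iff_comap_le.mpr le_rfl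
  have hmeasZXV : Measurable[(MeasurableSpace.comap (fun ω => (Z ω, X ω, V ω)) inferInstance)] (fun ω => (Z ω, X ω, V ω)) :=
    measurable_iff_comap_le.mpr le_rfl
  have hsmZ : StronglyMeasurable[(MeasurableSpace.comap (fun ω => (Z ω, X ω, V ω)) inferInstance)] Z :=
    (show Measurable[(MeasurableSpace.comap (fun ω => (Z ω, X ω, V ω)) inferInstance)] Z from measurable_fst.comp hmeasZXV).stronglyMeasurable
  have hsmob : ∀ b : ℝ, StronglyMeasurable[(MeasurableSpace.comap (fun ω => (X ω, V ω)) inferInstance)] (fun ω => mo (b, X ω, V ω)) := fun b =>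
    ((hmoM.comp (measurable_const.prodMk measurable_id)).comp hmeasXV).stronglyMeasurable
  have hmo1meas : Measurable (fun ω => mo (1, X ω, V ω)) :=
    (hmoM.comp (measurable_const.prodMk measurable_id)).comp hXV
  have hmo0meas : Measurable (fun ω => mo (0, X ω, V ω)) :=
    (hmoM.comp (measurable_const.prodMk measurable_id)).comp hXV
  have hYm : Measurable Y := by
    have h : Y = fun ω => Z ω * Y1 ω + (1 - Z ω) * Y0 ω := funext hYdef
    rw [h]
    exact (hZ.mul hY1).add ((measurable_const.sub hZ).mul hY0)
  have hYbd2 : ∀ ω, |Y ω| ≤ C := by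
    intro ω
    rcases hZ01 ω with h | h
    · rw [hYdef ω, h]; simpa using (hC ω).1
    · rw [hYdef ω, h]; simpa using (hC ω).2
  have hZbd : ∀ ω, |Z ω| ≤ 1 := fun ω => by rcases hZ01 ω with h | h <;> rw [h] <;> norm_num
  have hiZ : Integrable Z μ := bdd_integrable hZ.aestronglyMeasurable hZbd
  have hiY : Integrable Y μ := bdd_integrable hYm.aestronglyMeasurable hYbd2
  have hiY1 : Integrable Y1 μ := bdd_integrable hY1.aestronglyMeasurable (fun ω => (hC ω).2)
  have hiY0 : Integrable Y0 μ := bdd_integrable hY0.aestronglyMeasurable (fun ω => (hC ω).1)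
  have himo1 : Integrable (fun ω => mo (1, X ω, V ω)) μ :=
    bdd_integrable hmo1meas.aestronglyMeasurable (fun ω => hD _)
  have himo0 : Integrable (fun ω => mo (0, X ω, V ω)) μ :=
    bdd_integrable hmo0meas.aestronglyMeasurable (fun ω => hD _)
  -- ===== Step A : E[Y1] = E[mo1], E[Y0] = E[mo0] =====
  have harm : ∀ (W : Ω → ℝ) (b : ℝ), Measurable W → (∀ ω, |W ω| ≤ 1) →
      StronglyMeasurable[(MeasurableSpace.comap (fun ω => (Z ω, X ω, V ω)) inferInstance)] W →
      (∀ ω, W ω * mo (Z ω, X ω, V ω) = W ω * mo (b, X ω, V ω)) →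
      μ[(fun ω => W ω * Y ω)|(MeasurableSpace.comap (fun ω => (X ω, V ω)) inferInstance)] =ᵐ[μ] fun ω => mo (b, X ω, V ω) * (μ[W|(MeasurableSpace.comap (fun ω => (X ω, V ω)) inferInstance)]) ω := by
    intro W b hWm hWbd hWsm hWmo
    have hiW : Integrable W μ := bdd_integrable hWm.aestronglyMeasurable hWbd
    have hiWY : Integrable (fun ω => W ω * Y ω) μ := by
      refine bdd_integrable (hWm.mul hYm).aestronglyMeasurable (C := C) fun ω => ?_
      rw [abs_mul]
      calc |W ω| * |Y ω| ≤ 1 * C :=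
            mul_le_mul (hWbd ω) (hYbd2 ω) (abs_nonneg _) one_pos.le
        _ = C := one_mul C
    have t1 : μ[(fun ω => W ω * Y ω)|(MeasurableSpace.comap (fun ω => (Z ω, X ω, V ω)) inferInstance)] =ᵐ[μ] fun ω => W ω * mo (b, X ω, V ω) := by
      have h1 := condExp_mul_of_stronglyMeasurable_left hWsm hiWY hiY
      refine h1.trans ?_
      filter_upwards [hmo] with ω hω
      show W ω * (μ[Y|(MeasurableSpace.comap (fun ω => (Z ω, X ω, V ω)) inferInstance)]) ω = W ω * mo (b, X ω, V ω)
      rw [← hω, hWmo ω]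
    have t2 : μ[(fun ω => W ω * Y ω)|(MeasurableSpace.comap (fun ω => (X ω, V ω)) inferInstance)]
        =ᵐ[μ] μ[(fun ω => W ω * mo (b, X ω, V ω))|(MeasurableSpace.comap (fun ω => (X ω, V ω)) inferInstance)] :=
      (condExp_condExp_of_le hle2 hmZXV (f := fun ω => W ω * Y ω)).symm.trans
        (condExp_congr_ae t1)
    have hiWmo : Integrable (fun ω => mo (b, X ω, V ω) * W ω) μ := by
      refine bdd_integrable ((((hmoM.comp (measurable_const.prodMk measurable_id)).comp
        hXV)).mul hWm).aestronglyMeasurable (C := D) fun ω => ?_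
      rw [abs_mul]
      calc |mo (b, X ω, V ω)| * |W ω| ≤ D * 1 :=
            mul_le_mul (hD _) (hWbd ω) (abs_nonneg _) hD0
        _ = D := mul_one D
    have t3 := condExp_mul_of_stronglyMeasurable_left (hsmob b) hiWmo hiW
    refine t2.trans ?_
    refine (condExp_congr_ae (ae_of_all _ fun ω =>
      mul_comm (W ω) (mo (b, X ω, V ω)))).trans ?_
    exact t3
  -- treated arm
  have harm1 := harm Z 1 hZ hZbd hsmZ
    (fun ω => by rcases hZ01 ω with h | h <;> rw [h] <;> simp)
  have hA2Y1 : CondIndepFun (MeasurableSpace.comap (fun ω => (X ω, V ω)) inferInstance) hmXV Z Y1 μ := hA2.comp measurable_id measurable_snd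
  have hfac1 := condIndep_condexp_mul hmXV hZ hY1 hZbd (fun ω => (hC ω).2) hA2Y1
  have hZY1 : (fun ω => Z ω * Y ω) = fun ω => Z ω * Y1 ω := by
    funext ω; rw [hYdef ω]; rcases hZ01 ω with h | h <;> rw [h] <;> ring
  rw [hZY1] at harm1
  have key1 : ∀ᵐ ω ∂μ, (μ[Y1|(MeasurableSpace.comap (fun ω => (X ω, V ω)) inferInstance)]) ω = mo (1, X ω, V ω) := by
    filter_upwards [harm1, hfac1, hpi, hA3] with ω h1 h2 hp h3
    have hne : (μ[Z|(MeasurableSpace.comap (fun ω => (X ω, V ω)) inferInstance)]) ω ≠ 0 := by rw [← hp]; exact ne_of_gt h3.1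
    exact mul_left_cancel₀ hne (h2.symm.trans (h1.trans (mul_comm _ _)))
  have hEY1 : ∫ ω, Y1 ω ∂μ = ∫ ω, mo (1, X ω, V ω) ∂μ := by
    calc ∫ ω, Y1 ω ∂μ = ∫ ω, (μ[Y1|(MeasurableSpace.comap (fun ω => (X ω, V ω)) inferInstance)]) ω ∂μ := (integral_condExp hmXV).symm
      _ = ∫ ω, mo (1, X ω, V ω) ∂μ := integral_congr_ae key1
  -- control arm
  have hsmZ' : StronglyMeasurable[(MeasurableSpace.comap (fun ω => (Z ω, X ω, V ω)) inferInstance)] (fun ω => 1 - Z ω) :=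
    stronglyMeasurable_const.sub hsmZ
  have harm0 := harm (fun ω => 1 - Z ω) 0 (measurable_const.sub hZ)
    (fun ω => by
      show |1 - Z ω| ≤ 1
      rcases hZ01 ω with h | h <;> rw [h] <;> norm_num) hsmZ'
    (fun ω => by
      show (1 - Z ω) * mo (Z ω, X ω, V ω) = (1 - Z ω) * mo (0, X ω, V ω)
      rcases hZ01 ω with h | h <;> rw [h] <;> ring_nf)
  have hZY0 : (fun ω => (1 - Z ω) * Y ω) = fun ω => Y0 ω - Z ω * Y0 ω := by
    funext ω; rw [hYdef ω]; rcases hZ01 ω with h | h <;> rw [h] <;> ring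
  rw [hZY0] at harm0
  have hiZY0 : Integrable (fun ω => Z ω * Y0 ω) μ := by
    refine bdd_integrable (hZ.mul hY0).aestronglyMeasurable (C := C) fun ω => ?_
    rw [abs_mul]
    calc |Z ω| * |Y0 ω| ≤ 1 * C := mul_le_mul (hZbd ω) ((hC ω).1) (abs_nonneg _) one_pos.le
      _ = C := one_mul C
  have hsub : μ[(fun ω => Y0 ω - Z ω * Y0 ω)|(MeasurableSpace.comap (fun ω => (X ω, V ω)) inferInstance)]
      =ᵐ[μ] fun ω => (μ[Y0|(MeasurableSpace.comap (fun ω => (X ω, V ω)) inferInstance)]) ω - (μ[(fun ω => Z ω * Y0 ω)|(MeasurableSpace.comap (fun ω => (X ω, V ω)) inferInstance)]) ω :=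
    condExp_sub hiY0 hiZY0 _
  have hA2Y0 : CondIndepFun (MeasurableSpace.comap (fun ω => (X ω, V ω)) inferInstance) hmXV Z Y0 μ := hA2.comp measurable_id measurable_fst
  have hfac0 := condIndep_condexp_mul hmXV hZ hY0 hZbd (fun ω => (hC ω).1) hA2Y0
  have hcondZ : μ[(fun ω => 1 - Z ω)|(MeasurableSpace.comap (fun ω => (X ω, V ω)) inferInstance)] =ᵐ[μ] fun ω => 1 - (μ[Z|(MeasurableSpace.comap (fun ω => (X ω, V ω)) inferInstance)]) ω := by
    have h1 : μ[(fun _ => (1:ℝ)) - Z|(MeasurableSpace.comap (fun ω => (X ω, V ω)) inferInstance)] =ᵐ[μ] μ[(fun _ => (1:ℝ))|(MeasurableSpace.comap (fun ω => (X ω, V ω)) inferInstance)] - μ[Z|(MeasurableSpace.comap (fun ω => (X ω, V ω)) inferInstance)] :=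
      condExp_sub (integrable_const 1) hiZ _
    rw [condExp_const hmXV] at h1
    exact h1
  have key0 : ∀ᵐ ω ∂μ, (μ[Y0|(MeasurableSpace.comap (fun ω => (X ω, V ω)) inferInstance)]) ω = mo (0, X ω, V ω) := by
    filter_upwards [harm0, hsub, hfac0, hcondZ, hpi, hA3] with ω h1 h2 h3 h4 hp h5
    have hne : 1 - (μ[Z|(MeasurableSpace.comap (fun ω => (X ω, V ω)) inferInstance)]) ω ≠ 0 := by
      rw [← hp]; have := h5.2; intro hcontra; rw [sub_eq_zero] at hcontra; linarith
    have e1 : (μ[Y0|(MeasurableSpace.comap (fun ω => (X ω, V ω)) inferInstance)]) ω - (μ[Z|(MeasurableSpace.comap (fun ω => (X ω, V ω)) inferInstance)]) ω * (μ[Y0|(MeasurableSpace.comap (fun ω => (X ω, V ω)) inferInstance)]) ω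
        = mo (0, X ω, V ω) * (1 - (μ[Z|(MeasurableSpace.comap (fun ω => (X ω, V ω)) inferInstance)]) ω) := by
      rw [← h3, ← h2, ← h4]; exact h1
    have e2 : (1 - (μ[Z|(MeasurableSpace.comap (fun ω => (X ω, V ω)) inferInstance)]) ω) * (μ[Y0|(MeasurableSpace.comap (fun ω => (X ω, V ω)) inferInstance)]) ω
        = (1 - (μ[Z|(MeasurableSpace.comap (fun ω => (X ω, V ω)) inferInstance)]) ω) * mo (0, X ω, V ω) := by linear_combination e1
    exact mul_left_cancel₀ hne e2
  have hEY0 : ∫ ω, Y0 ω ∂μ = ∫ ω, mo (0, X ω, V ω) ∂μ := by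
    calc ∫ ω, Y0 ω ∂μ = ∫ ω, (μ[Y0|(MeasurableSpace.comap (fun ω => (X ω, V ω)) inferInstance)]) ω ∂μ := (integral_condExp hmXV).symm
      _ = ∫ ω, mo (0, X ω, V ω) ∂μ := integral_congr_ae key0
  have hstepA : ∫ ω, (Y1 ω - Y0 ω) ∂μ
      = ∫ ω, (mo (1, X ω, V ω) - mo (0, X ω, V ω)) ∂μ := by
    rw [integral_sub hiY1 hiY0, integral_sub himo1 himo0, hEY1, hEY0]
  -- ===== Step B =====
  have hRbd : ∀ ω, |R ω| ≤ 1 := fun ω => by rcases hR01 ω with h | h <;> rw [h] <;> norm_num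
  have hRnn : ∀ ω, 0 ≤ R ω := fun ω => by rcases hR01 ω with h | h <;> rw [h] <;> norm_num
  have hiR : Integrable R μ := bdd_integrable hR.aestronglyMeasurable hRbd
  have hirhoX : Integrable (fun ω => rho (X ω)) μ := integrable_condExp.congr hrho.symm
  -- B1: rectangles
  have hrect : ∀ (A : Set 𝒳) (B : Set 𝒱), MeasurableSet A → MeasurableSet B →
      ∫ ω in (fun ω => (X ω, V ω)) ⁻¹' (A ×ˢ B), R ω ∂μ
        = ∫ ω in (fun ω => (X ω, V ω)) ⁻¹' (A ×ˢ B), rho (X ω) ∂μ := by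
    intro A B hA hB
    set a := fun ω => Set.indicator A (fun _ => (1:ℝ)) (X ω) with ha_def
    set b := fun ω => Set.indicator B (fun _ => (1:ℝ)) (V ω) with hb_def
    have ham : Measurable a := (measurable_const.indicator hA).comp hX
    have hbm : Measurable b := (measurable_const.indicator hB).comp hV
    have habd : ∀ ω, |a ω| ≤ 1 := fun ω => by
      by_cases h : X ω ∈ A <;> simp [ha_def, Set.indicator_apply, h]
    have hbbd : ∀ ω, |b ω| ≤ 1 := fun ω => by
      by_cases h : V ω ∈ B <;> simp [hb_def, Set.indicator_apply, h]
    have hs : MeasurableSet ((fun ω => (X ω, V ω)) ⁻¹' (A ×ˢ B)) := hXV (hA.prod hB)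
    have hind : ∀ f : Ω → ℝ, Set.indicator ((fun ω => (X ω, V ω)) ⁻¹' (A ×ˢ B)) f
        = fun ω => a ω * b ω * f ω := by
      intro f; funext ω
      by_cases hx : X ω ∈ A <;> by_cases hv : V ω ∈ B <;>
        simp [Set.indicator_apply, Set.mem_prod, hx, hv, ha_def, hb_def]
    rw [← integral_indicator hs, ← integral_indicator hs, hind, hind]
    have hiRb : Integrable (fun ω => R ω * b ω) μ := by
      refine bdd_integrable (hR.mul hbm).aestronglyMeasurable (C := 1) fun ω => ?_
      rw [abs_mul]
      calc |R ω| * |b ω| ≤ 1 * 1 := mul_le_mul (hRbd ω) (hbbd ω) (abs_nonneg _) one_pos.le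
        _ = 1 := one_mul 1
    have hRb_ind : CondIndepFun (MeasurableSpace.comap X inferInstance) hmX R b μ :=
      hA1.comp measurable_id
        ((measurable_const.indicator hB).comp (measurable_snd.comp measurable_snd) :
          Measurable fun p : ℝ × ℝ × 𝒱 => Set.indicator B (fun _ => (1:ℝ)) p.2.2)
    have hfacRb := condIndep_condexp_mul hmX hR hbm hRbd hbbd hRb_ind
    have hsma : StronglyMeasurable[(MeasurableSpace.comap X inferInstance)] a :=
      ((measurable_const.indicator hA).comp hmeasX).stronglyMeasurable
    have hia_bR : Integrable (fun ω => a ω * (R ω * b ω)) μ := by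
      refine bdd_integrable (ham.mul (hR.mul hbm)).aestronglyMeasurable (C := 1) fun ω => ?_
      rw [abs_mul, abs_mul]
      have hRb1 : |R ω| * |b ω| ≤ 1 * 1 := mul_le_mul (hRbd ω) (hbbd ω) (abs_nonneg _) one_pos.le
      calc |a ω| * (|R ω| * |b ω|) ≤ 1 * (1 * 1) :=
            mul_le_mul (habd ω) (by simpa using hRb1) (by positivity) one_pos.le
        _ = 1 := by norm_num
    have e2 : μ[(fun ω => a ω * (R ω * b ω))|(MeasurableSpace.comap X inferInstance)]
        =ᵐ[μ] fun ω => a ω * (μ[(fun ω => R ω * b ω)|(MeasurableSpace.comap X inferInstance)]) ω :=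
      condExp_mul_of_stronglyMeasurable_left hsma hia_bR hiRb
    have hsm2 : StronglyMeasurable[(MeasurableSpace.comap X inferInstance)] (fun ω => a ω * rho (X ω)) :=
      (((measurable_const.indicator hA).mul hrhoM).comp hmeasX).stronglyMeasurable
    have hib : Integrable b μ := bdd_integrable hbm.aestronglyMeasurable hbbd
    have hi_arb : Integrable (fun ω => (a ω * rho (X ω)) * b ω) μ := by
      refine Integrable.mono' hirhoX.abs
        ((ham.mul (hrhoM.comp hX)).mul hbm).aestronglyMeasurable (ae_of_all _ fun ω => ?_)
      rw [Real.norm_eq_abs, abs_mul, abs_mul]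
      calc |a ω| * |rho (X ω)| * |b ω| ≤ 1 * |rho (X ω)| * |b ω| :=
            mul_le_mul_of_nonneg_right
              (mul_le_mul_of_nonneg_right (habd ω) (abs_nonneg _)) (abs_nonneg _)
        _ ≤ 1 * |rho (X ω)| * 1 :=
            mul_le_mul_of_nonneg_left (hbbd ω) (by positivity)
        _ = |rho (X ω)| := by ring
    have e4 : μ[(fun ω => (a ω * rho (X ω)) * b ω)|(MeasurableSpace.comap X inferInstance)]
        =ᵐ[μ] fun ω => (a ω * rho (X ω)) * (μ[b|(MeasurableSpace.comap X inferInstance)]) ω :=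
      condExp_mul_of_stronglyMeasurable_left hsm2 hi_arb hib
    calc ∫ ω, a ω * b ω * R ω ∂μ
        = ∫ ω, a ω * (R ω * b ω) ∂μ := by congr 1; funext ω; ring
      _ = ∫ ω, (μ[(fun ω => a ω * (R ω * b ω))|(MeasurableSpace.comap X inferInstance)]) ω ∂μ := (integral_condExp hmX).symm
      _ = ∫ ω, (a ω * rho (X ω)) * (μ[b|(MeasurableSpace.comap X inferInstance)]) ω ∂μ := by
          refine integral_congr_ae ?_
          filter_upwards [e2, hfacRb, hrho] with ω h2 h3 hr
          rw [h2, h3, ← hr]; ring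
      _ = ∫ ω, (μ[(fun ω => (a ω * rho (X ω)) * b ω)|(MeasurableSpace.comap X inferInstance)]) ω ∂μ :=
          (integral_congr_ae e4).symm
      _ = ∫ ω, a ω * rho (X ω) * b ω ∂μ := integral_condExp hmX
      _ = ∫ ω, a ω * b ω * rho (X ω) ∂μ := by congr 1; funext ω; ring
  -- B2: conditional expectation of R given (X, V)
  have htot : ∫ ω, R ω ∂μ = ∫ ω, rho (X ω) ∂μ := by
    have h := hrect Set.univ Set.univ MeasurableSet.univ MeasurableSet.univ
    simpa [Set.univ_prod_univ] using h
  have hP : ∀ E : Set (𝒳 × 𝒱), MeasurableSet E →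
      ∫ ω in (fun ω => (X ω, V ω)) ⁻¹' E, R ω ∂μ
        = ∫ ω in (fun ω => (X ω, V ω)) ⁻¹' E, rho (X ω) ∂μ := by
    refine MeasurableSpace.induction_on_inter
      (C := fun E _ => ∫ ω in (fun ω => (X ω, V ω)) ⁻¹' E, R ω ∂μ
        = ∫ ω in (fun ω => (X ω, V ω)) ⁻¹' E, rho (X ω) ∂μ)
      generateFrom_prod.symm isPiSystem_prod ?_ ?_ ?_ ?_
    · simp
    · rintro t ⟨A, hA, B, hB, rfl⟩
      exact hrect A B hA hB
    · intro t ht hPt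
      rw [Set.preimage_compl, setIntegral_compl (hXV ht) hiR,
        setIntegral_compl (hXV ht) hirhoX, hPt, htot]
    · intro f hdisj hmeas hPf
      rw [Set.preimage_iUnion,
        integral_iUnion (fun i => hXV (hmeas i))
          (fun i j hij => (hdisj hij).preimage _) hiR.integrableOn,
        integral_iUnion (fun i => hXV (hmeas i))
          (fun i j hij => (hdisj hij).preimage _) hirhoX.integrableOn]
      exact tsum_congr hPf
  have hsm_rhoXV : StronglyMeasurable[(MeasurableSpace.comap (fun ω => (X ω, V ω)) inferInstance)] (fun ω => rho (X ω)) :=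
    ((hrhoM.comp measurable_fst).comp hmeasXV).stronglyMeasurable
  have hRXV : μ[R|(MeasurableSpace.comap (fun ω => (X ω, V ω)) inferInstance)] =ᵐ[μ] fun ω => rho (X ω) := by
    symm
    refine ae_eq_condExp_of_forall_setIntegral_eq hmXV hiR
      (fun s _ _ => hirhoX.integrableOn) ?_ hsm_rhoXV.aestronglyMeasurable
    intro s hs _
    rw [MeasurableSpace.measurableSet_comap] at hs
    obtain ⟨E, hE, rfl⟩ := hs
    exact (hP E hE).symm
  -- B3: integrability of R / rho(X)
  have hWmeas : Measurable (fun ω => R ω / rho (X ω)) := hR.div (hrhoM.comp hX)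
  have hWn_eq : ∀ n : ℕ, (fun ω => min (R ω / rho (X ω)) (n:ℝ))
      = fun ω => R ω * min (rho (X ω))⁻¹ (n:ℝ) := by
    intro n; funext ω
    rcases hR01 ω with h | h <;> rw [h]
    · simp [zero_div, min_eq_left (Nat.cast_nonneg (α := ℝ) n)]
    · simp [one_div, one_mul]
  have hcn_sm : ∀ n : ℕ, StronglyMeasurable[(MeasurableSpace.comap X inferInstance)] (fun ω => min (rho (X ω))⁻¹ (n:ℝ)) := fun n =>
    ((hrhoM.inv.min measurable_const).comp hmeasX).stronglyMeasurable
  have hiRcn : ∀ n : ℕ, Integrable (fun ω => min (rho (X ω))⁻¹ (n:ℝ) * R ω) μ := by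
    intro n
    refine Integrable.mono' (integrable_const (n:ℝ))
      (((hrhoM.inv.min measurable_const).comp hX).mul hR).aestronglyMeasurable ?_
    filter_upwards [hA4] with ω hρ
    rw [Real.norm_eq_abs, abs_mul]
    have h1 : 0 ≤ min (rho (X ω))⁻¹ (n:ℝ) := le_min (inv_nonneg.mpr hρ.le) (Nat.cast_nonneg n)
    have h2 : |min (rho (X ω))⁻¹ (n:ℝ)| ≤ (n:ℝ) := by
      rw [abs_of_nonneg h1]; exact min_le_right _ _
    calc |min (rho (X ω))⁻¹ (n:ℝ)| * |R ω| ≤ (n:ℝ) * 1 :=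
          mul_le_mul h2 (hRbd ω) (abs_nonneg _) (Nat.cast_nonneg n)
      _ = (n:ℝ) := mul_one _
  have hcnρ_le : ∀ n : ℕ, ∀ᵐ ω ∂μ, min (rho (X ω))⁻¹ (n:ℝ) * rho (X ω) ≤ 1 := by
    intro n
    filter_upwards [hA4] with ω hρ
    calc min (rho (X ω))⁻¹ (n:ℝ) * rho (X ω) ≤ (rho (X ω))⁻¹ * rho (X ω) :=
          mul_le_mul_of_nonneg_right (min_le_left _ _) hρ.le
      _ = 1 := inv_mul_cancel₀ (ne_of_gt hρ)
  have hInt_n : ∀ n : ℕ, ∫ ω, min (rho (X ω))⁻¹ (n:ℝ) * R ω ∂μ ≤ 1 := by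
    intro n
    have e1 : μ[(fun ω => min (rho (X ω))⁻¹ (n:ℝ) * R ω)|(MeasurableSpace.comap X inferInstance)]
        =ᵐ[μ] fun ω => min (rho (X ω))⁻¹ (n:ℝ) * (μ[R|(MeasurableSpace.comap X inferInstance)]) ω :=
      condExp_mul_of_stronglyMeasurable_left (hcn_sm n) (hiRcn n) hiR
    have hicnρ : Integrable (fun ω => min (rho (X ω))⁻¹ (n:ℝ) * rho (X ω)) μ := by
      refine Integrable.mono' (integrable_const (1:ℝ))
        (((hrhoM.inv.min measurable_const).mul hrhoM).comp hX).aestronglyMeasurable ?_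
      filter_upwards [hA4] with ω hρ
      rw [Real.norm_eq_abs, abs_of_nonneg (mul_nonneg
        (le_min (inv_nonneg.mpr hρ.le) (Nat.cast_nonneg n)) hρ.le)]
      calc min (rho (X ω))⁻¹ (n:ℝ) * rho (X ω) ≤ (rho (X ω))⁻¹ * rho (X ω) :=
            mul_le_mul_of_nonneg_right (min_le_left _ _) hρ.le
        _ = 1 := inv_mul_cancel₀ (ne_of_gt hρ)
    calc ∫ ω, min (rho (X ω))⁻¹ (n:ℝ) * R ω ∂μ
        = ∫ ω, (μ[(fun ω => min (rho (X ω))⁻¹ (n:ℝ) * R ω)|(MeasurableSpace.comap X inferInstance)]) ω ∂μ :=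
          (integral_condExp hmX).symm
      _ = ∫ ω, min (rho (X ω))⁻¹ (n:ℝ) * rho (X ω) ∂μ := by
          refine integral_congr_ae ?_
          filter_upwards [e1, hrho] with ω h1 h2
          rw [h1, ← h2]
      _ ≤ ∫ ω, (1:ℝ) ∂μ := integral_mono_ae hicnρ (integrable_const 1) (hcnρ_le n)
      _ = 1 := by simp
  have hW_int : Integrable (fun ω => R ω / rho (X ω)) μ := by
    refine ⟨hWmeas.aestronglyMeasurable, ?_⟩
    have hWnn : 0 ≤ᵐ[μ] fun ω => R ω / rho (X ω) := by
      filter_upwards [hA4] with ω hρ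
      exact div_nonneg (hRnn ω) hρ.le
    rw [hasFiniteIntegral_iff_ofReal hWnn]
    refine lt_of_le_of_lt ?_ (ENNReal.one_lt_top)
    have hmono : Monotone fun (n : ℕ) (ω : Ω) =>
        ENNReal.ofReal (min (R ω / rho (X ω)) (n:ℝ)) := by
      intro n m hnm ω
      exact ENNReal.ofReal_le_ofReal (min_le_min le_rfl (Nat.cast_le.mpr hnm))
    have hsup : ∀ ω, (⨆ n : ℕ, ENNReal.ofReal (min (R ω / rho (X ω)) (n:ℝ)))
        = ENNReal.ofReal (R ω / rho (X ω)) := by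
      intro ω
      refine le_antisymm (iSup_le fun n => ENNReal.ofReal_le_ofReal (min_le_left _ _)) ?_
      refine le_iSup_of_le ⌈R ω / rho (X ω)⌉₊ (ENNReal.ofReal_le_ofReal ?_)
      rw [min_eq_left (Nat.le_ceil _)]
    calc ∫⁻ ω, ENNReal.ofReal (R ω / rho (X ω)) ∂μ
        = ∫⁻ ω, ⨆ n : ℕ, ENNReal.ofReal (min (R ω / rho (X ω)) (n:ℝ)) ∂μ :=
          lintegral_congr fun ω => (hsup ω).symm
      _ = ⨆ n : ℕ, ∫⁻ ω, ENNReal.ofReal (min (R ω / rho (X ω)) (n:ℝ)) ∂μ :=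
          lintegral_iSup (fun n => (hWmeas.min measurable_const).ennreal_ofReal) hmono
      _ ≤ 1 := by
          refine iSup_le fun n => ?_
          have hint : Integrable (fun ω => min (R ω / rho (X ω)) (n:ℝ)) μ := by
            rw [hWn_eq n]
            exact (hiRcn n).congr (ae_of_all _ fun ω => mul_comm _ _)
          have hnn : 0 ≤ᵐ[μ] fun ω => min (R ω / rho (X ω)) (n:ℝ) := by
            filter_upwards [hA4] with ω hρ
            exact le_min (div_nonneg (hRnn ω) hρ.le) (Nat.cast_nonneg n)
          rw [← ofReal_integral_eq_lintegral_ofReal hint hnn]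
          have hle1 : ∫ ω, min (R ω / rho (X ω)) (n:ℝ) ∂μ ≤ 1 := by
            have e : ∫ ω, min (R ω / rho (X ω)) (n:ℝ) ∂μ
                = ∫ ω, min (rho (X ω))⁻¹ (n:ℝ) * R ω ∂μ := by
              rw [hWn_eq n]
              congr 1; funext ω; ring
            rw [e]; exact hInt_n n
          calc ENNReal.ofReal (∫ ω, min (R ω / rho (X ω)) (n:ℝ) ∂μ)
              ≤ ENNReal.ofReal 1 := ENNReal.ofReal_le_ofReal hle1
            _ = 1 := ENNReal.ofReal_one
  -- B4: final step B
  have hφm : Measurable (fun ω => mo (1, X ω, V ω) - mo (0, X ω, V ω)) :=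
    hmo1meas.sub hmo0meas
  have hφbd : ∀ ω, |mo (1, X ω, V ω) - mo (0, X ω, V ω)| ≤ 2 * D := by
    intro ω
    have h1 := abs_le.mp (hD (1, X ω, V ω))
    have h2 := abs_le.mp (hD (0, X ω, V ω))
    rw [abs_le]; constructor <;> linarith
  have hT_int : Integrable
      (fun ω => (R ω / rho (X ω)) * (mo (1, X ω, V ω) - mo (0, X ω, V ω))) μ := by
    refine Integrable.mono' (hW_int.const_mul (2 * D))
      (hWmeas.mul hφm).aestronglyMeasurable ?_
    filter_upwards [hA4] with ω hρ
    rw [Real.norm_eq_abs, abs_mul]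
    have hW0 : 0 ≤ R ω / rho (X ω) := div_nonneg (hRnn ω) hρ.le
    calc |R ω / rho (X ω)| * |mo (1, X ω, V ω) - mo (0, X ω, V ω)|
        ≤ |R ω / rho (X ω)| * (2 * D) :=
          mul_le_mul_of_nonneg_left (hφbd ω) (abs_nonneg _)
      _ = 2 * D * (R ω / rho (X ω)) := by rw [abs_of_nonneg hW0]; ring
  have hsmF : StronglyMeasurable[(MeasurableSpace.comap (fun ω => (X ω, V ω)) inferInstance)]
      (fun ω => (mo (1, X ω, V ω) - mo (0, X ω, V ω)) / rho (X ω)) := by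
    have hm : Measurable (fun p : 𝒳 × 𝒱 => (mo (1, p.1, p.2) - mo (0, p.1, p.2)) / rho p.1) :=
      ((hmoM.comp (measurable_const.prodMk measurable_id)).sub
        (hmoM.comp (measurable_const.prodMk measurable_id))).div (hrhoM.comp measurable_fst)
    exact (hm.comp hmeasXV).stronglyMeasurable
  have hFR_int : Integrable
      (fun ω => ((mo (1, X ω, V ω) - mo (0, X ω, V ω)) / rho (X ω)) * R ω) μ :=
    hT_int.congr (ae_of_all _ fun ω => by ring)
  have hpullF : μ[(fun ω => ((mo (1, X ω, V ω) - mo (0, X ω, V ω)) / rho (X ω)) * R ω)|(MeasurableSpace.comap (fun ω => (X ω, V ω)) inferInstance)]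
      =ᵐ[μ] fun ω => ((mo (1, X ω, V ω) - mo (0, X ω, V ω)) / rho (X ω)) * (μ[R|(MeasurableSpace.comap (fun ω => (X ω, V ω)) inferInstance)]) ω :=
    condExp_mul_of_stronglyMeasurable_left hsmF hFR_int hiR
  have hstepB : ∫ ω, (R ω / rho (X ω)) * (mo (1, X ω, V ω) - mo (0, X ω, V ω)) ∂μ
      = ∫ ω, (mo (1, X ω, V ω) - mo (0, X ω, V ω)) ∂μ := by
    calc ∫ ω, (R ω / rho (X ω)) * (mo (1, X ω, V ω) - mo (0, X ω, V ω)) ∂μ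
        = ∫ ω, ((mo (1, X ω, V ω) - mo (0, X ω, V ω)) / rho (X ω)) * R ω ∂μ := by
          congr 1; funext ω; ring
      _ = ∫ ω, (μ[(fun ω => ((mo (1, X ω, V ω) - mo (0, X ω, V ω)) / rho (X ω)) * R ω)|(MeasurableSpace.comap (fun ω => (X ω, V ω)) inferInstance)]) ω ∂μ :=
          (integral_condExp hmXV).symm
      _ = ∫ ω, (mo (1, X ω, V ω) - mo (0, X ω, V ω)) ∂μ := by
          refine integral_congr_ae ?_
          filter_upwards [hpullF, hRXV, hA4] with ω h1 h2 hρ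
          rw [h1, h2]
          exact div_mul_cancel₀ _ (ne_of_gt hρ)
  rw [hstepA]
  exact hstepB.symm
end

section
/- (Theorem 1(c), identification via imputation model and outcome mean) Under Assumptions (A1)–(A4), the average treatment effect satisfies τ = E[δ(1,X) − δ(0,X)]. -/
open MeasureTheory ProbabilityTheory
open scoped NNReal ENNReal

lemma integrable_of_bdd {Ω : Type*} [MeasurableSpace Ω] {μ : Measure Ω} [IsFiniteMeasure μ]
    {f : Ω → ℝ} {C : ℝ}
    (hf : Measurable f) (h : ∀ ω, |f ω| ≤ C) : Integrable f μ :=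
  (integrable_const C).mono' hf.aestronglyMeasurable (Filter.Eventually.of_forall h)

lemma key_set {Ω : Type*} {W : MeasurableSpace Ω} [mΩ : MeasurableSpace Ω]
    [StandardBorelSpace Ω] [Nonempty Ω]
    {μ : Measure Ω} [IsProbabilityMeasure μ] {hW : W ≤ mΩ}
    {Z g : Ω → ℝ} (hZm : Measurable Z) (hgm : Measurable g)
    (hZ01 : ∀ ω, Z ω = 0 ∨ Z ω = 1) {C : ℝ} (hgbd : ∀ ω, |g ω| ≤ C)
    (hind : CondIndepFun W hW Z g μ) {s : Set Ω} (hs : MeasurableSet[W] s) :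
    ∫ ω in s, Z ω * g ω ∂μ = ∫ ω in s, (μ[Z|W]) ω * g ω ∂μ := by
  have hsm : MeasurableSet s := hW s hs
  have hZnn : ∀ ω, 0 ≤ Z ω := fun ω => by rcases hZ01 ω with h | h <;> simp [h]
  have hZbd : ∀ ω, |Z ω| ≤ 1 := fun ω => by rcases hZ01 ω with h | h <;> simp [h]
  have hZint : Integrable Z μ := integrable_of_bdd hZm hZbd
  set A : Set Ω := Z ⁻¹' {1} with hA_def
  have hAm : MeasurableSet A := hZm (measurableSet_singleton _)
  have hZind : Z = A.indicator (fun _ => (1 : ℝ)) := by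
    funext ω
    rcases hZ01 ω with h | h <;> simp [Set.indicator, hA_def, h]
  set ζ : Ω → ℝ := μ[Z|W] with hζ_def
  have hζsm : StronglyMeasurable[W] ζ := stronglyMeasurable_condExp
  have hζm : Measurable ζ := (hζsm.mono hW).measurable
  have hζbd : ∀ᵐ ω ∂μ, |ζ ω| ≤ ((1 : ℝ≥0) : ℝ) := ae_bdd_condExp_of_ae_bdd
    (Filter.Eventually.of_forall (fun ω => by simpa using hZbd ω))
  have hζbd' : ∀ᵐ ω ∂μ, ‖ζ ω‖ ≤ 1 := by
    filter_upwards [hζbd] with ω h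
    simpa [Real.norm_eq_abs] using h
  have hζnn : 0 ≤ᵐ[μ] ζ :=
    condExp_nonneg (Filter.Eventually.of_forall hZnn)
  have hfac := (condIndepFun_iff_condExp_inter_preimage_eq_mul (μ := μ) (hm' := hW)
    hZm hgm).mp hind
  -- step A: set-integral equality for preimages of Borel sets
  have stepA : ∀ t : Set ℝ, MeasurableSet t →
      ∫ ω in g ⁻¹' t ∩ s, Z ω ∂μ = ∫ ω in g ⁻¹' t ∩ s, ζ ω ∂μ := by
    intro t ht
    set B : Set Ω := g ⁻¹' t with hB_def
    have hBm : MeasurableSet B := hgm ht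
    set ιB : Ω → ℝ := B.indicator (fun _ => (1 : ℝ)) with hιB_def
    have hιBm : Measurable ιB := measurable_const.indicator hBm
    have hιBbd : ∀ ω, |ιB ω| ≤ 1 := fun ω => by
      by_cases h : ω ∈ B <;> simp [hιB_def, Set.indicator, h]
    have hιBint : Integrable ιB μ := integrable_of_bdd hιBm hιBbd
    have h1 := hfac {1} t (measurableSet_singleton _) ht
    have e1 : ∫ ω in B ∩ s, Z ω ∂μ = ∫ ω in s, ((A ∩ B).indicator (fun _ => (1:ℝ))) ω ∂μ := by
      rw [Set.inter_comm, ← setIntegral_indicator hBm]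
      refine setIntegral_congr_fun hsm (fun ω _ => ?_)
      rcases hZ01 ω with h | h
      · have ha : ω ∉ A := by simp [hA_def, h]
        by_cases hb : ω ∈ B <;>
          simp [Set.indicator_apply, hb, ha, h, Set.mem_inter_iff]
      · have ha : ω ∈ A := by simp [hA_def, h]
        by_cases hb : ω ∈ B <;>
          simp [Set.indicator_apply, hb, ha, h, Set.mem_inter_iff]
    have e2 : ∫ ω in s, ((A ∩ B).indicator (fun _ => (1:ℝ))) ω ∂μ
        = ∫ ω in s, (μ⟦A ∩ B|W⟧) ω ∂μ := by
      rw [setIntegral_condExp hW (integrable_of_bdd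
        (measurable_const.indicator (hAm.inter hBm)) (C := 1) (fun ω => by
          by_cases h : ω ∈ A ∩ B <;> simp [Set.indicator, h])) hs]
    have e3 : ∫ ω in s, (μ⟦A ∩ B|W⟧) ω ∂μ
        = ∫ ω in s, (μ⟦A|W⟧) ω * (μ⟦B|W⟧) ω ∂μ := by
      refine setIntegral_congr_ae hsm ?_
      filter_upwards [h1] with ω h _; exact h
    have hAeq : (μ⟦A|W⟧) = ζ := by rw [hζ_def]; congr 1; rw [hZind]
    have pull : μ[fun ω => ζ ω * ιB ω|W] =ᵐ[μ] fun ω => ζ ω * (μ[ιB|W]) ω := by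
      have := condExp_stronglyMeasurable_mul_of_bound hW hζsm hιBint 1 hζbd'
      have h2 : (fun ω => ζ ω * ιB ω) = ζ * ιB := rfl
      rw [h2]
      refine this.trans ?_
      exact Filter.Eventually.of_forall (fun ω => rfl)
    have hζιint : Integrable (fun ω => ζ ω * ιB ω) μ :=
      hιBint.bdd_mul hζm.aestronglyMeasurable hζbd'
    have e4 : ∫ ω in s, ζ ω * (μ[ιB|W]) ω ∂μ = ∫ ω in s, ζ ω * ιB ω ∂μ := by
      rw [← setIntegral_condExp hW hζιint hs]
      refine (setIntegral_congr_ae hsm ?_).symm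
      filter_upwards [pull] with ω h _; exact h
    have e5 : ∫ ω in s, ζ ω * ιB ω ∂μ = ∫ ω in B ∩ s, ζ ω ∂μ := by
      rw [Set.inter_comm, ← setIntegral_indicator hBm]
      refine setIntegral_congr_fun hsm (fun ω _ => ?_)
      by_cases hb : ω ∈ B <;> simp [hιB_def, Set.indicator, hb]
    rw [e1, e2, e3, hAeq]
    exact e4.trans e5
  -- step B: from indicators to g, via pushforward measures
  have hgint : Integrable g μ := integrable_of_bdd hgm hgbd
  have hZgint : Integrable (fun ω => Z ω * g ω) μ :=
    integrable_of_bdd (hZm.mul hgm) (C := C) (fun ω => by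
      rcases hZ01 ω with h | h <;> simp [h, abs_mul]
      · exact (abs_nonneg _).trans (hgbd ω)
      · exact hgbd ω)
  have hζgint : Integrable (fun ω => ζ ω * g ω) μ :=
    hgint.bdd_mul hζm.aestronglyMeasurable hζbd'
  set ν₁ : Measure ℝ :=
    ((μ.restrict s).withDensity (fun ω => ENNReal.ofReal (Z ω))).map g with hν₁
  set ν₂ : Measure ℝ :=
    ((μ.restrict s).withDensity (fun ω => ENNReal.ofReal (ζ ω))).map g with hν₂
  have hcmp : ∀ (f : Ω → ℝ), Measurable f → (∀ᵐ ω ∂μ, 0 ≤ f ω) → Integrable f μ →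
      ∀ t : Set ℝ, MeasurableSet t →
      (((μ.restrict s).withDensity (fun ω => ENNReal.ofReal (f ω))).map g) t
        = ENNReal.ofReal (∫ ω in g ⁻¹' t ∩ s, f ω ∂μ) := by
    intro f hfm hfnn hfint t ht
    rw [Measure.map_apply hgm ht, withDensity_apply _ (hgm ht),
      Measure.restrict_restrict (hgm ht)]
    rw [← ofReal_integral_eq_lintegral_ofReal
      (hfint.restrict) (ae_restrict_of_ae hfnn)]
  have hν : ν₁ = ν₂ := by
    refine Measure.ext (fun t ht => ?_)
    rw [hν₁, hν₂, hcmp Z hZm (Filter.Eventually.of_forall hZnn) hZint t ht,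
      hcmp ζ hζm hζnn (integrable_condExp) t ht, stepA t ht]
  -- convert integrals over withDensity measures
  have hInt : ∀ (f : Ω → ℝ), Measurable f →
      ∫ y, y ∂(((μ.restrict s).withDensity (fun ω => ENNReal.ofReal (f ω))).map g)
        = ∫ ω in s, (f ω).toNNReal • g ω ∂μ := by
    intro f hfm
    have hd : Measurable (fun ω => (f ω).toNNReal) := hfm.real_toNNReal
    rw [integral_map hgm.aemeasurable (f := fun y => y) measurable_id.aestronglyMeasurable]
    have : (fun ω => ENNReal.ofReal (f ω)) = (fun ω => ((f ω).toNNReal : ℝ≥0∞)) := rfl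
    rw [this, integral_withDensity_eq_integral_smul hd]
  have hi₁ : ∫ y, y ∂ν₁ = ∫ ω in s, Z ω * g ω ∂μ := by
    rw [hν₁, hInt Z hZm]
    refine setIntegral_congr_fun hsm (fun ω _ => ?_)
    simp [NNReal.smul_def, Real.coe_toNNReal _ (hZnn ω)]
  have hi₂ : ∫ y, y ∂ν₂ = ∫ ω in s, ζ ω * g ω ∂μ := by
    rw [hν₂, hInt ζ hζm]
    refine setIntegral_congr_ae hsm ?_
    filter_upwards [hζnn] with ω h _
    simp [NNReal.smul_def, Real.coe_toNNReal _ h]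
  rw [← hi₁, ← hi₂, hν]

lemma condexp_mul_of_condIndep {Ω : Type*} {W : MeasurableSpace Ω} [mΩ : MeasurableSpace Ω]
    [StandardBorelSpace Ω] [Nonempty Ω]
    {μ : Measure Ω} [IsProbabilityMeasure μ] {hW : W ≤ mΩ}
    {Z g : Ω → ℝ} (hZm : Measurable Z) (hgm : Measurable g)
    (hZ01 : ∀ ω, Z ω = 0 ∨ Z ω = 1) {C : ℝ} (hgbd : ∀ ω, |g ω| ≤ C)
    (hind : CondIndepFun W hW Z g μ) :
    μ[fun ω => Z ω * g ω|W] =ᵐ[μ] fun ω => (μ[Z|W]) ω * (μ[g|W]) ω := by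
  have hZbd : ∀ ω, |Z ω| ≤ 1 := fun ω => by rcases hZ01 ω with h | h <;> simp [h]
  have hgint : Integrable g μ := integrable_of_bdd hgm hgbd
  have hZgint : Integrable (fun ω => Z ω * g ω) μ :=
    integrable_of_bdd (hZm.mul hgm) (C := C) (fun ω => by
      rcases hZ01 ω with h | h <;> simp [h, abs_mul]
      · exact (abs_nonneg _).trans (hgbd ω)
      · exact hgbd ω)
  set ζ : Ω → ℝ := μ[Z|W] with hζ_def
  have hζsm : StronglyMeasurable[W] ζ := stronglyMeasurable_condExp
  have hζm : Measurable ζ := (hζsm.mono hW).measurable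
  have hζbd' : ∀ᵐ ω ∂μ, ‖ζ ω‖ ≤ 1 := by
    have := ae_bdd_condExp_of_ae_bdd (μ := μ) (m := W) (R := 1)
      (Filter.Eventually.of_forall (fun ω => by simpa using hZbd ω))
    filter_upwards [this] with ω h
    simpa [Real.norm_eq_abs] using h
  have hζgint : Integrable (fun ω => ζ ω * g ω) μ :=
    hgint.bdd_mul hζm.aestronglyMeasurable hζbd'
  have pull : μ[fun ω => ζ ω * g ω|W] =ᵐ[μ] fun ω => ζ ω * (μ[g|W]) ω :=
    condExp_stronglyMeasurable_mul_of_bound hW hζsm hgint 1 hζbd'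
  refine (ae_eq_condExp_of_forall_setIntegral_eq hW hZgint
    (fun s _ _ => ((integrable_condExp (f := g)).bdd_mul
      hζm.aestronglyMeasurable hζbd').integrableOn)
    (fun s hs _ => ?_)
    ((hζsm.mul stronglyMeasurable_condExp).aestronglyMeasurable)).symm
  have hsm : MeasurableSet s := hW s hs
  calc ∫ ω in s, ζ ω * (μ[g|W]) ω ∂μ
      = ∫ ω in s, (μ[fun ω => ζ ω * g ω|W]) ω ∂μ := by
        refine (setIntegral_congr_ae hsm ?_).symm
        filter_upwards [pull] with ω h _; exact h
    _ = ∫ ω in s, ζ ω * g ω ∂μ := setIntegral_condExp hW hζgint hs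
    _ = ∫ ω in s, Z ω * g ω ∂μ :=
        (key_set hZm hgm hZ01 hgbd hind hs).symm

lemma outcome_eq {Ω : Type*} {W G : MeasurableSpace Ω} [mΩ : MeasurableSpace Ω]
    [StandardBorelSpace Ω] [Nonempty Ω]
    {μ : Measure Ω} [IsProbabilityMeasure μ] {hW : W ≤ mΩ} (hG : G ≤ mΩ) (hWG : W ≤ G)
    {ξ Yz Yobs mZ moz q : Ω → ℝ}
    (hξm : Measurable ξ) (hξ01 : ∀ ω, ξ ω = 0 ∨ ξ ω = 1) (hξG : StronglyMeasurable[G] ξ)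
    (hYzm : Measurable Yz) {C : ℝ} (hYzbd : ∀ ω, |Yz ω| ≤ C)
    (hYobsint : Integrable Yobs μ)
    (hprod : ∀ ω, ξ ω * Yobs ω = ξ ω * Yz ω)
    (hmZ : mZ =ᵐ[μ] μ[Yobs|G])
    (hmprod : ∀ ω, ξ ω * mZ ω = ξ ω * moz ω)
    (hmozW : StronglyMeasurable[W] moz) {D : ℝ} (hmozbd : ∀ ω, |moz ω| ≤ D)
    (hind : CondIndepFun W hW ξ Yz μ)
    (hq : q =ᵐ[μ] μ[ξ|W]) (hqpos : ∀ᵐ ω ∂μ, 0 < q ω) :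
    moz =ᵐ[μ] μ[Yz|W] := by
  have hξbd : ∀ ω, |ξ ω| ≤ 1 := fun ω => by rcases hξ01 ω with h | h <;> simp [h]
  have hξbd' : ∀ᵐ ω ∂μ, ‖ξ ω‖ ≤ 1 :=
    Filter.Eventually.of_forall (fun ω => by simpa [Real.norm_eq_abs] using hξbd ω)
  have hξint : Integrable ξ μ := integrable_of_bdd hξm hξbd
  have hmozbd' : ∀ᵐ ω ∂μ, ‖moz ω‖ ≤ D :=
    Filter.Eventually.of_forall (fun ω => by simpa [Real.norm_eq_abs] using hmozbd ω)
  -- step (a): condexp given G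
  have ha : μ[fun ω => ξ ω * Yobs ω|G] =ᵐ[μ] fun ω => ξ ω * moz ω := by
    have h1 : μ[fun ω => ξ ω * Yobs ω|G] =ᵐ[μ] fun ω => ξ ω * (μ[Yobs|G]) ω :=
      condExp_stronglyMeasurable_mul_of_bound hG hξG hYobsint 1 hξbd'
    refine h1.trans ?_
    filter_upwards [hmZ] with ω h
    rw [← h, hmprod]
  -- step (b): tower down to W
  have hb : μ[fun ω => ξ ω * Yobs ω|W] =ᵐ[μ] fun ω => moz ω * (μ[ξ|W]) ω := by
    have h2 : μ[μ[fun ω => ξ ω * Yobs ω|G]|W] =ᵐ[μ] μ[fun ω => ξ ω * Yobs ω|W] :=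
      condExp_condExp_of_le hWG hG
    refine h2.symm.trans ?_
    have h3 : μ[μ[fun ω => ξ ω * Yobs ω|G]|W] =ᵐ[μ] μ[fun ω => ξ ω * moz ω|W] :=
      condExp_congr_ae ha
    refine h3.trans ?_
    have h4 : μ[fun ω => moz ω * ξ ω|W] =ᵐ[μ] fun ω => moz ω * (μ[ξ|W]) ω :=
      condExp_stronglyMeasurable_mul_of_bound hW hmozW hξint D hmozbd'
    have h5 : (fun ω => ξ ω * moz ω) = fun ω => moz ω * ξ ω := by
      funext ω; ring
    rw [h5]; exact h4
  -- step (c): conditional independence product rule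
  have hc : μ[fun ω => ξ ω * Yobs ω|W] =ᵐ[μ] fun ω => (μ[ξ|W]) ω * (μ[Yz|W]) ω := by
    have h6 : (fun ω => ξ ω * Yobs ω) = fun ω => ξ ω * Yz ω := funext hprod
    rw [h6]
    exact condexp_mul_of_condIndep hξm hYzm hξ01 hYzbd hind
  -- combine and cancel
  filter_upwards [hb, hc, hq, hqpos] with ω h1 h2 h3 h4
  have h5 : moz ω * (μ[ξ|W]) ω = (μ[ξ|W]) ω * (μ[Yz|W]) ω := h1.symm.trans h2
  have h6 : (μ[ξ|W]) ω ≠ 0 := by rw [← h3]; exact ne_of_gt h4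
  have := h5
  rw [mul_comm (moz ω) _] at this
  exact mul_left_cancel₀ h6 this

theorem main_aux {Ω 𝒳 𝒱 : Type*} {W G B : MeasurableSpace Ω}
    [mΩ : MeasurableSpace Ω] [StandardBorelSpace Ω] [Nonempty Ω]
    [MeasurableSpace 𝒳] [MeasurableSpace 𝒱]
    (μ : Measure Ω) [IsProbabilityMeasure μ]
    (X : Ω → 𝒳) (V : Ω → 𝒱) (Z Y0 Y1 : Ω → ℝ)
    (hX : Measurable X) (hV : Measurable V) (hZ : Measurable Z)
    (hY0 : Measurable Y0) (hY1 : Measurable Y1)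
    (hW_def : W = MeasurableSpace.comap (fun ω => (X ω, V ω)) inferInstance)
    (hG_def : G = MeasurableSpace.comap (fun ω => (Z ω, X ω, V ω)) inferInstance)
    (hB_def : B = MeasurableSpace.comap X inferInstance)
    (hW : W ≤ mΩ) (hG : G ≤ mΩ) (hB : B ≤ mΩ)
    (hZ01 : ∀ ω, Z ω = 0 ∨ Z ω = 1)
    {C : ℝ} (hC : ∀ ω, |Y0 ω| ≤ C ∧ |Y1 ω| ≤ C)
    (Y : Ω → ℝ) (hYdef : ∀ ω, Y ω = Z ω * Y1 ω + (1 - Z ω) * Y0 ω)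
    (pi : 𝒳 × 𝒱 → ℝ)
    (hpi : (fun ω => pi (X ω, V ω)) =ᵐ[μ] μ[Z | W])
    (hA2 : CondIndepFun W hW Z (fun ω => (Y0 ω, Y1 ω)) μ)
    (hA3 : ∀ᵐ ω ∂μ, 0 < pi (X ω, V ω) ∧ pi (X ω, V ω) < 1)
    (mo : ℝ × 𝒳 × 𝒱 → ℝ) (hmoM : Measurable mo) {D : ℝ} (hD : ∀ p, |mo p| ≤ D)
    (hmo : (fun ω => mo (Z ω, X ω, V ω)) =ᵐ[μ] μ[Y | G])
    (del : ℝ → 𝒳 → ℝ)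
    (hdel1 : (fun ω => del 1 (X ω)) =ᵐ[μ] μ[(fun ω => mo (1, X ω, V ω)) | B])
    (hdel0 : (fun ω => del 0 (X ω)) =ᵐ[μ] μ[(fun ω => mo (0, X ω, V ω)) | B]) :
    ∫ ω, (Y1 ω - Y0 ω) ∂μ = ∫ ω, (del 1 (X ω) - del 0 (X ω)) ∂μ := by
  -- B ≤ W and W ≤ G
  have hBW : B ≤ W := by
    rw [hB_def, hW_def]
    have : X = Prod.fst ∘ (fun ω => (X ω, V ω)) := rfl
    rw [this, ← MeasurableSpace.comap_comp]
    exact MeasurableSpace.comap_mono (measurable_iff_comap_le.mp measurable_fst)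
  have hWG : W ≤ G := by
    rw [hW_def, hG_def]
    have : (fun ω => (X ω, V ω)) = Prod.snd ∘ (fun ω => (Z ω, X ω, V ω)) := rfl
    rw [this, ← MeasurableSpace.comap_comp]
    exact MeasurableSpace.comap_mono (measurable_iff_comap_le.mp measurable_snd)
  -- basic measurability
  have hXVW : Measurable[W] (fun ω => (X ω, V ω)) := by
    rw [hW_def]; exact Measurable.of_comap_le le_rfl
  have hZXVG : Measurable[G] (fun ω => (Z ω, X ω, V ω)) := by
    rw [hG_def]; exact Measurable.of_comap_le le_rfl
  have hYm : Measurable Y := by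
    have : Y = fun ω => Z ω * Y1 ω + (1 - Z ω) * Y0 ω := funext hYdef
    rw [this]
    exact (hZ.mul hY1).add ((measurable_const.sub hZ).mul hY0)
  have hYbd' : ∀ ω, |Y ω| ≤ C := fun ω => by
    rw [hYdef ω]
    rcases hZ01 ω with h | h
    · simpa [h] using (hC ω).1
    · simpa [h] using (hC ω).2
  have hYint : Integrable Y μ := integrable_of_bdd hYm hYbd'
  -- outcome-model functions
  have hmo1W : StronglyMeasurable[W] (fun ω => mo (1, X ω, V ω)) :=
    (hmoM.comp (Measurable.prodMk (@measurable_const ℝ Ω _ W 1) hXVW)).stronglyMeasurable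
  have hmo0W : StronglyMeasurable[W] (fun ω => mo (0, X ω, V ω)) :=
    (hmoM.comp (Measurable.prodMk (@measurable_const ℝ Ω _ W 0) hXVW)).stronglyMeasurable
  -- treated arm
  have hZG : StronglyMeasurable[G] Z :=
    (measurable_fst.comp hZXVG).stronglyMeasurable
  have hind1 : CondIndepFun W hW Z Y1 μ := by
    have := hA2.comp measurable_id measurable_snd
    exact this
  have key1 : (fun ω => mo (1, X ω, V ω)) =ᵐ[μ] μ[Y1|W] := by
    refine outcome_eq (G := G) hG hWG hZ hZ01 hZG hY1 (fun ω => (hC ω).2)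
      hYint (fun ω => ?_) hmo (fun ω => ?_) hmo1W (fun ω => hD _)
      hind1 hpi ?_
    · rcases hZ01 ω with h | h
      · simp [h]
      · simp [hYdef ω, h]
    · rcases hZ01 ω with h | h
      · simp [h]
      · simp [h]
    · filter_upwards [hA3] with ω h; exact h.1
  -- control arm
  have hξ0m : Measurable (fun ω => 1 - Z ω) := measurable_const.sub hZ
  have hξ001 : ∀ ω, (1 - Z ω) = 0 ∨ (1 - Z ω) = 1 := fun ω => by
    rcases hZ01 ω with h | h <;> simp [h]
  have hξ0G : StronglyMeasurable[G] (fun ω => 1 - Z ω) :=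
    (Measurable.sub (@measurable_const ℝ Ω _ G 1) (measurable_fst.comp hZXVG)).stronglyMeasurable
  have hind0 : CondIndepFun W hW (fun ω => 1 - Z ω) Y0 μ := by
    have := hA2.comp (φ := fun x : ℝ => 1 - x) (measurable_const.sub measurable_id)
      measurable_fst
    exact this
  have hq0 : (fun ω => 1 - pi (X ω, V ω)) =ᵐ[μ] μ[fun ω => 1 - Z ω|W] := by
    have hZint : Integrable Z μ :=
      integrable_of_bdd hZ (C := 1) (fun ω => by rcases hZ01 ω with h | h <;> simp [h])
    have h1 : μ[(fun _ => (1:ℝ)) - Z|W] =ᵐ[μ] μ[fun _ => (1:ℝ)|W] - μ[Z|W] :=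
      condExp_sub (integrable_const 1) hZint W
    have h2 : μ[fun _ => (1:ℝ)|W] = fun _ => (1:ℝ) := condExp_const hW 1
    have h3 : μ[fun ω => 1 - Z ω|W] = μ[(fun _ => (1:ℝ)) - Z|W] := rfl
    rw [h3]
    filter_upwards [h1, hpi] with ω e1 e2
    rw [h2] at e1
    simp only [Pi.sub_apply] at e1
    rw [e1, e2]
  have key0 : (fun ω => mo (0, X ω, V ω)) =ᵐ[μ] μ[Y0|W] := by
    refine outcome_eq (G := G) hG hWG hξ0m hξ001 hξ0G hY0 (fun ω => (hC ω).1)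
      hYint (fun ω => ?_) hmo (fun ω => ?_) hmo0W (fun ω => hD _)
      hind0 hq0 ?_
    · rcases hZ01 ω with h | h
      · simp [hYdef ω, h]
      · simp [h]
    · rcases hZ01 ω with h | h
      · simp [h]
      · simp [h]
    · filter_upwards [hA3] with ω h; simpa using h.2
  -- integrate
  have hY1int : Integrable Y1 μ := integrable_of_bdd hY1 (fun ω => (hC ω).2)
  have hY0int : Integrable Y0 μ := integrable_of_bdd hY0 (fun ω => (hC ω).1)
  have int1 : ∫ ω, Y1 ω ∂μ = ∫ ω, del 1 (X ω) ∂μ := by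
    calc ∫ ω, Y1 ω ∂μ = ∫ ω, (μ[Y1|W]) ω ∂μ := (integral_condExp hW).symm
      _ = ∫ ω, mo (1, X ω, V ω) ∂μ := (integral_congr_ae key1).symm
      _ = ∫ ω, (μ[fun ω => mo (1, X ω, V ω)|B]) ω ∂μ := (integral_condExp hB).symm
      _ = ∫ ω, del 1 (X ω) ∂μ := (integral_congr_ae hdel1).symm
  have int0 : ∫ ω, Y0 ω ∂μ = ∫ ω, del 0 (X ω) ∂μ := by
    calc ∫ ω, Y0 ω ∂μ = ∫ ω, (μ[Y0|W]) ω ∂μ := (integral_condExp hW).symm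
      _ = ∫ ω, mo (0, X ω, V ω) ∂μ := (integral_congr_ae key0).symm
      _ = ∫ ω, (μ[fun ω => mo (0, X ω, V ω)|B]) ω ∂μ := (integral_condExp hB).symm
      _ = ∫ ω, del 0 (X ω) ∂μ := (integral_congr_ae hdel0).symm
  have hdel1int : Integrable (fun ω => del 1 (X ω)) μ :=
    (integrable_condExp (f := fun ω => mo (1, X ω, V ω)) (m := B)).congr hdel1.symm
  have hdel0int : Integrable (fun ω => del 0 (X ω)) μ :=
    (integrable_condExp (f := fun ω => mo (0, X ω, V ω)) (m := B)).congr hdel0.symm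
  rw [integral_sub hY1int hY0int, integral_sub hdel1int hdel0int, int1, int0]

theorem identification_imputation_outcome_mean
    {Ω 𝒳 𝒱 : Type*}
    [MeasurableSpace Ω] [StandardBorelSpace Ω] [Nonempty Ω]
    [MeasurableSpace 𝒳] [StandardBorelSpace 𝒳]
    [MeasurableSpace 𝒱] [StandardBorelSpace 𝒱]
    (μ : Measure Ω) [IsProbabilityMeasure μ]
    (X : Ω → 𝒳) (V : Ω → 𝒱) (Z R Y0 Y1 : Ω → ℝ)
    (hX : Measurable X) (hV : Measurable V) (hZ : Measurable Z)
    (hR : Measurable R) (hY0 : Measurable Y0) (hY1 : Measurable Y1)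
    (hZ01 : ∀ ω, Z ω = 0 ∨ Z ω = 1) (hR01 : ∀ ω, R ω = 0 ∨ R ω = 1)
    (hYbd : ∃ C, ∀ ω, |Y0 ω| ≤ C ∧ |Y1 ω| ≤ C)
    (Y : Ω → ℝ) (hYdef : ∀ ω, Y ω = Z ω * Y1 ω + (1 - Z ω) * Y0 ω)
    (pi : 𝒳 × 𝒱 → ℝ) (rho : 𝒳 → ℝ)
    (hpiM : Measurable pi) (hrhoM : Measurable rho)
    (hpi : (fun ω => pi (X ω, V ω)) =ᵐ[μ]
      μ[Z | MeasurableSpace.comap (fun ω => (X ω, V ω)) inferInstance])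
    (hrho : (fun ω => rho (X ω)) =ᵐ[μ]
      μ[R | MeasurableSpace.comap X inferInstance])
    (hA1 : CondIndepFun (MeasurableSpace.comap X inferInstance)
      (measurable_iff_comap_le.mp hX) R (fun ω => (Y ω, Z ω, V ω)) μ)
    (hA2 : CondIndepFun (MeasurableSpace.comap (fun ω => (X ω, V ω)) inferInstance)
      (measurable_iff_comap_le.mp (hX.prodMk hV)) Z (fun ω => (Y0 ω, Y1 ω)) μ)
    (hA3 : ∀ᵐ ω ∂μ, 0 < pi (X ω, V ω) ∧ pi (X ω, V ω) < 1)
    (hA4 : ∀ᵐ ω ∂μ, 0 < rho (X ω))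
    (mo : ℝ × 𝒳 × 𝒱 → ℝ) (hmoM : Measurable mo) (hmoBd : ∃ C, ∀ p, |mo p| ≤ C)
    (hmo : (fun ω => mo (Z ω, X ω, V ω)) =ᵐ[μ]
      μ[Y | MeasurableSpace.comap (fun ω => (Z ω, X ω, V ω)) inferInstance])
    (del : ℝ → 𝒳 → ℝ) (hdelM : ∀ z, Measurable (del z))
    (hdel : ∀ z ∈ ({0, 1} : Set ℝ),
      (fun ω => del z (X ω)) =ᵐ[μ]
        μ[(fun ω => mo (z, X ω, V ω)) | MeasurableSpace.comap X inferInstance])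
 :
    ∫ ω, (Y1 ω - Y0 ω) ∂μ = ∫ ω, (del 1 (X ω) - del 0 (X ω)) ∂μ := by
  obtain ⟨C, hC⟩ := hYbd
  obtain ⟨D, hD⟩ := hmoBd
  exact main_aux μ X V Z Y0 Y1 hX hV hZ hY0 hY1 rfl rfl rfl
    (measurable_iff_comap_le.mp (hX.prodMk hV))
    (measurable_iff_comap_le.mp (hZ.prodMk (hX.prodMk hV)))
    (measurable_iff_comap_le.mp hX)
    hZ01 hC Y hYdef pi hpi hA2 hA3 mo hmoM hD hmo del
    (hdel 1 (by simp)) (hdel 0 (by simp))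
end

section
/- (Unbiasedness of the efficient influence function of Theorem 2) Under Assumptions (A1)–(A4), for each z ∈ {0,1}, E[φ_z] = E[Y_z]; consequently the efficient influence function ψ_eff = φ_1 − φ_0 − τ has mean zero. -/
open MeasureTheory ProbabilityTheory MeasurableSpace
open scoped ENNReal NNReal

lemma eif_bdd_integrable {Ω : Type*} {m0 : MeasurableSpace Ω} {μ : Measure Ω}
    [IsFiniteMeasure μ] {f : Ω → ℝ} (hf : AEStronglyMeasurable f μ) (c : ℝ)
    (hbd : ∀ᵐ ω ∂μ, |f ω| ≤ c) : Integrable f μ := by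
  refine Integrable.mono' (integrable_const c) hf ?_
  filter_upwards [hbd] with ω h using by simpa [Real.norm_eq_abs] using h

lemma eif_integral_mul_condexp {Ω : Type*} {m0 : MeasurableSpace Ω} {μ : Measure Ω}
    {m : MeasurableSpace Ω} (hm : m ≤ m0) [IsFiniteMeasure μ]
    {g f : Ω → ℝ} (hg : StronglyMeasurable[m] g) (c : ℝ) (hgbd : ∀ᵐ ω ∂μ, |g ω| ≤ c)
    (hf : Integrable f μ) :
    ∫ ω, g ω * f ω ∂μ = ∫ ω, g ω * (μ[f|m]) ω ∂μ := by
  have hgsm : AEStronglyMeasurable[m0] g μ := (hg.mono hm).aestronglyMeasurable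
  have hfg : Integrable (g * f) μ := by
    refine Integrable.bdd_mul (c := c) hf hgsm ?_
    filter_upwards [hgbd] with ω h using by simpa [Real.norm_eq_abs] using h
  have h1 : ∫ ω, g ω * f ω ∂μ = ∫ ω, (μ[(fun ω => g ω * f ω)|m]) ω ∂μ :=
    (integral_condExp hm).symm
  rw [h1]
  refine integral_congr_ae ?_
  have := condExp_mul_of_stronglyMeasurable_left (μ := μ) hg hfg hf
  filter_upwards [this] with ω h using h

lemma eif_density_eq {Ω 𝒮 𝒲 : Type*} [MeasurableSpace Ω] [StandardBorelSpace Ω] [Nonempty Ω]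
    [MeasurableSpace 𝒮] [MeasurableSpace 𝒲] (μ : Measure Ω) [IsProbabilityMeasure μ]
    (S : Ω → 𝒮) (W : Ω → 𝒲) (D : Ω → ℝ) (q : 𝒮 → ℝ)
    (hS : Measurable S) (hW : Measurable W) (hD : Measurable D) (hq : Measurable q)
    (hD01 : ∀ ω, D ω = 0 ∨ D ω = 1)
    (hqv : (fun ω => q (S ω)) =ᵐ[μ] μ[D | MeasurableSpace.comap S inferInstance])
    (hind : CondIndepFun (MeasurableSpace.comap S inferInstance)
      (measurable_iff_comap_le.mp hS) D W μ) :
    Measure.map (fun ω => (S ω, W ω)) (μ.withDensity (fun ω => ENNReal.ofReal (D ω))) =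
    Measure.map (fun ω => (S ω, W ω)) (μ.withDensity (fun ω => ENNReal.ofReal (q (S ω)))) := by
  have hm : MeasurableSpace.comap S inferInstance ≤ ‹MeasurableSpace Ω› :=
    measurable_iff_comap_le.mp hS
  have hD0 : ∀ ω, 0 ≤ D ω := fun ω => by rcases hD01 ω with h | h <;> simp [h]
  have hD1 : ∀ ω, D ω ≤ 1 := fun ω => by rcases hD01 ω with h | h <;> simp [h]
  have hDint : Integrable D μ :=
    eif_bdd_integrable hD.aestronglyMeasurable 1
      (ae_of_all _ fun ω => by rw [abs_of_nonneg (hD0 ω)]; exact hD1 ω)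
  have hq01 : ∀ᵐ ω ∂μ, 0 ≤ q (S ω) ∧ q (S ω) ≤ 1 := by
    have h0 : 0 ≤ᵐ[μ] μ[D | MeasurableSpace.comap S inferInstance] :=
      condExp_nonneg (ae_of_all _ hD0)
    have h1 : μ[D | MeasurableSpace.comap S inferInstance] ≤ᵐ[μ] fun _ => (1 : ℝ) := by
      refine (condExp_mono hDint (integrable_const 1) (ae_of_all _ hD1)).trans ?_
      exact ae_of_all _ (condExp_const hm (1 : ℝ)).le
    filter_upwards [hqv, h0, h1] with ω he h0' h1'
    rw [he]; exact ⟨h0', h1'⟩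
  have hqint : Integrable (fun ω => q (S ω)) μ :=
    eif_bdd_integrable (hq.comp hS).aestronglyMeasurable 1
      (by filter_upwards [hq01] with ω h using abs_le.mpr ⟨by linarith [h.1], h.2⟩)
  -- finiteness of with-density measures
  have hfinD : IsFiniteMeasure (μ.withDensity fun ω => ENNReal.ofReal (D ω)) := by
    refine isFiniteMeasure_withDensity (ne_of_lt ?_)
    calc ∫⁻ ω, ENNReal.ofReal (D ω) ∂μ ≤ ∫⁻ _, 1 ∂μ := by
          refine lintegral_mono fun ω => ?_
          simpa using ENNReal.ofReal_le_ofReal (hD1 ω)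
      _ < ⊤ := by simp
  have hfinq : IsFiniteMeasure (μ.withDensity fun ω => ENNReal.ofReal (q (S ω))) := by
    refine isFiniteMeasure_withDensity (ne_of_lt ?_)
    calc ∫⁻ ω, ENNReal.ofReal (q (S ω)) ∂μ ≤ ∫⁻ _, 1 ∂μ := by
          refine lintegral_mono_ae ?_
          filter_upwards [hq01] with ω h
          simpa using ENNReal.ofReal_le_ofReal h.2
      _ < ⊤ := by simp
  haveI := hfinD; haveI := hfinq
  have hpair : Measurable fun ω => (S ω, W ω) := hS.prodMk hW
  refine ext_of_generate_finite _ generateFrom_prod.symm isPiSystem_prod ?_ ?_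
  · rintro u ⟨A, hA, B, hB, rfl⟩
    simp only [Set.mem_setOf_eq] at hA hB
    rw [Measure.map_apply hpair (hA.prod hB), Measure.map_apply hpair (hA.prod hB),
      Set.mk_preimage_prod, withDensity_apply _ ((hS hA).inter (hW hB)),
      withDensity_apply _ ((hS hA).inter (hW hB))]
    -- reduce to real set integrals
    have hReal : ∫ ω in S ⁻¹' A ∩ W ⁻¹' B, D ω ∂μ
        = ∫ ω in S ⁻¹' A ∩ W ⁻¹' B, q (S ω) ∂μ := by
      have hsA : MeasurableSet[MeasurableSpace.comap S inferInstance] (S ⁻¹' A) := ⟨A, hA, rfl⟩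
      have hsAm : MeasurableSet (S ⁻¹' A) := hS hA
      set iA : Ω → ℝ := (S ⁻¹' A).indicator (fun _ => 1) with hiA
      set iB : Ω → ℝ := (W ⁻¹' B).indicator (fun _ => 1) with hiB
      have hiB01 : ∀ ω, |iB ω| ≤ 1 := by
        intro ω; rw [hiB]; by_cases h : ω ∈ W ⁻¹' B <;> simp [Set.indicator_apply, h]
      have hiA01 : ∀ ω, |iA ω| ≤ 1 := by
        intro ω; rw [hiA]; by_cases h : ω ∈ S ⁻¹' A <;> simp [Set.indicator_apply, h]
      have hiBsm : StronglyMeasurable iB :=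
        (stronglyMeasurable_const.indicator (hW hB))
      have hiBint : Integrable iB μ :=
        eif_bdd_integrable hiBsm.aestronglyMeasurable 1 (ae_of_all _ hiB01)
      have hiAsm : StronglyMeasurable[MeasurableSpace.comap S inferInstance] iA :=
        (stronglyMeasurable_const.indicator hsA)
      -- LHS
      have hDiB : Integrable (fun ω => D ω * iB ω) μ := by
        refine eif_bdd_integrable (hD.aestronglyMeasurable.mul
          hiBsm.aestronglyMeasurable) 1 (ae_of_all _ fun ω => ?_)
        rw [abs_mul]
        calc |D ω| * |iB ω| ≤ 1 * 1 := by
              refine mul_le_mul ?_ (hiB01 ω) (abs_nonneg _) zero_le_one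
              rw [abs_of_nonneg (hD0 ω)]; exact hD1 ω
          _ = 1 := by ring
      have lhs1 : ∫ ω in S ⁻¹' A ∩ W ⁻¹' B, D ω ∂μ = ∫ ω, iA ω * (D ω * iB ω) ∂μ := by
        rw [← integral_indicator (hsAm.inter (hW hB))]
        refine integral_congr_ae (ae_of_all _ fun ω => ?_)
        rw [hiA, hiB]
        by_cases h1 : ω ∈ S ⁻¹' A <;> by_cases h2 : ω ∈ W ⁻¹' B <;>
          simp [Set.indicator_apply, h1, h2]
      have rhs1 : ∫ ω in S ⁻¹' A ∩ W ⁻¹' B, q (S ω) ∂μ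
          = ∫ ω, (iA ω * q (S ω)) * iB ω ∂μ := by
        rw [← integral_indicator (hsAm.inter (hW hB))]
        refine integral_congr_ae (ae_of_all _ fun ω => ?_)
        rw [hiA, hiB]
        by_cases h1 : ω ∈ S ⁻¹' A <;> by_cases h2 : ω ∈ W ⁻¹' B <;>
          simp [Set.indicator_apply, h1, h2]
      rw [lhs1, rhs1]
      -- condition both sides on comap S
      rw [eif_integral_mul_condexp hm hiAsm 1 (ae_of_all _ hiA01) hDiB]
      have hgsm : StronglyMeasurable[MeasurableSpace.comap S inferInstance]
          (fun ω => iA ω * q (S ω)) := by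
        refine hiAsm.mul ?_
        exact (hq.comp (Measurable.of_comap_le le_rfl)).stronglyMeasurable
      have hgbd : ∀ᵐ ω ∂μ, |iA ω * q (S ω)| ≤ 1 := by
        filter_upwards [hq01] with ω h
        rw [abs_mul]
        calc |iA ω| * |q (S ω)| ≤ 1 * 1 :=
              mul_le_mul (hiA01 ω) (abs_le.mpr ⟨by linarith [h.1], h.2⟩)
                (abs_nonneg _) zero_le_one
          _ = 1 := by ring
      rw [eif_integral_mul_condexp hm hgsm 1 hgbd hiBint]
      -- now identify the conditional expectations
      have hkey : (μ[(fun ω => D ω * iB ω) | MeasurableSpace.comap S inferInstance])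
          =ᵐ[μ] fun ω => q (S ω) *
            (μ[iB | MeasurableSpace.comap S inferInstance]) ω := by
        have hfun : (fun ω => D ω * iB ω)
            = (D ⁻¹' {1} ∩ W ⁻¹' B).indicator (fun _ => (1:ℝ)) := by
          funext ω
          rcases hD01 ω with h | h <;> by_cases h2 : ω ∈ W ⁻¹' B <;>
            simp [hiB, Set.indicator_apply, h, h2]
        have hDfun : (fun ω => D ω) = (D ⁻¹' {1}).indicator (fun _ => (1:ℝ)) := by
          funext ω
          rcases hD01 ω with h | h <;> simp [Set.indicator_apply, h]
        have hmul := (condIndepFun_iff_condExp_inter_preimage_eq_mul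
          (μ := μ) (hm' := measurable_iff_comap_le.mp hS) hD hW).mp hind
          {1} B (measurableSet_singleton 1) hB
        calc (μ[(fun ω => D ω * iB ω) | MeasurableSpace.comap S inferInstance])
            = μ⟦D ⁻¹' {1} ∩ W ⁻¹' B | MeasurableSpace.comap S inferInstance⟧ := by
              rw [hfun]
          _ =ᵐ[μ] fun ω => (μ⟦D ⁻¹' {1} | MeasurableSpace.comap S inferInstance⟧) ω *
              (μ⟦W ⁻¹' B | MeasurableSpace.comap S inferInstance⟧) ω := hmul
          _ =ᵐ[μ] fun ω => q (S ω) * (μ[iB | MeasurableSpace.comap S inferInstance]) ω := by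
              have : (μ⟦D ⁻¹' {1} | MeasurableSpace.comap S inferInstance⟧)
                  = μ[D | MeasurableSpace.comap S inferInstance] := by
                rw [show (Set.indicator (D ⁻¹' {1}) fun ω => (1:ℝ)) = D from hDfun.symm]
              rw [this]
              filter_upwards [hqv] with ω he
              rw [← he]
      refine integral_congr_ae ?_
      filter_upwards [hkey] with ω h
      rw [h]; ring
    have e1 : ∫⁻ ω in S ⁻¹' A ∩ W ⁻¹' B, ENNReal.ofReal (D ω) ∂μ
        = ENNReal.ofReal (∫ ω in S ⁻¹' A ∩ W ⁻¹' B, D ω ∂μ) :=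
      (ofReal_integral_eq_lintegral_ofReal hDint.restrict
        (ae_restrict_of_ae (ae_of_all _ hD0))).symm
    have e2 : ∫⁻ ω in S ⁻¹' A ∩ W ⁻¹' B, ENNReal.ofReal (q (S ω)) ∂μ
        = ENNReal.ofReal (∫ ω in S ⁻¹' A ∩ W ⁻¹' B, q (S ω) ∂μ) :=
      (ofReal_integral_eq_lintegral_ofReal hqint.restrict
        (ae_restrict_of_ae (hq01.mono fun ω h => h.1))).symm
    rw [e1, e2, hReal]
  · rw [Measure.map_apply hpair MeasurableSet.univ, Measure.map_apply hpair MeasurableSet.univ]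
    simp only [Set.preimage_univ, withDensity_apply _ MeasurableSet.univ,
      Measure.restrict_univ]
    rw [← ofReal_integral_eq_lintegral_ofReal hDint (ae_of_all _ hD0),
      ← ofReal_integral_eq_lintegral_ofReal hqint (hq01.mono fun ω h => h.1)]
    congr 1
    rw [integral_congr_ae hqv, integral_condExp hm]


section Cor
variable {Ω 𝒮 𝒲 : Type*} [MeasurableSpace Ω] [MeasurableSpace 𝒮] [MeasurableSpace 𝒲]
    {μ : Measure Ω} {S : Ω → 𝒮} {W : Ω → 𝒲} {D : Ω → ℝ} {q : 𝒮 → ℝ}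

lemma eif_lintegral_density
    (hS : Measurable S) (hW : Measurable W) (hD : Measurable D) (hq : Measurable q)
    (heq : Measure.map (fun ω => (S ω, W ω)) (μ.withDensity (fun ω => ENNReal.ofReal (D ω))) =
      Measure.map (fun ω => (S ω, W ω)) (μ.withDensity (fun ω => ENNReal.ofReal (q (S ω)))))
    (F : 𝒮 × 𝒲 → ℝ≥0∞) (hF : Measurable F) :
    ∫⁻ ω, ENNReal.ofReal (D ω) * F (S ω, W ω) ∂μ
      = ∫⁻ ω, ENNReal.ofReal (q (S ω)) * F (S ω, W ω) ∂μ := by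
  have hpair : Measurable fun ω => (S ω, W ω) := hS.prodMk hW
  have hFc : Measurable fun ω => F (S ω, W ω) := hF.comp hpair
  have h1 : ∫⁻ ω, ENNReal.ofReal (D ω) * F (S ω, W ω) ∂μ
      = ∫⁻ p, F p ∂(Measure.map (fun ω => (S ω, W ω))
          (μ.withDensity (fun ω => ENNReal.ofReal (D ω)))) := by
    rw [lintegral_map hF hpair,
      lintegral_withDensity_eq_lintegral_mul _ (show Measurable fun ω => ENNReal.ofReal (D ω) from ENNReal.measurable_ofReal.comp hD) hFc]
    simp [Pi.mul_apply]
  have h2 : ∫⁻ ω, ENNReal.ofReal (q (S ω)) * F (S ω, W ω) ∂μ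
      = ∫⁻ p, F p ∂(Measure.map (fun ω => (S ω, W ω))
          (μ.withDensity (fun ω => ENNReal.ofReal (q (S ω))))) := by
    rw [lintegral_map hF hpair,
      lintegral_withDensity_eq_lintegral_mul _
        (show Measurable fun ω => ENNReal.ofReal (q (S ω)) from
          ENNReal.measurable_ofReal.comp (hq.comp hS)) hFc]
    simp [Pi.mul_apply]
  rw [h1, h2, heq]

lemma eif_integral_density
    (hS : Measurable S) (hW : Measurable W) (hD : Measurable D) (hq : Measurable q)
    (heq : Measure.map (fun ω => (S ω, W ω)) (μ.withDensity (fun ω => ENNReal.ofReal (D ω))) =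
      Measure.map (fun ω => (S ω, W ω)) (μ.withDensity (fun ω => ENNReal.ofReal (q (S ω)))))
    (hD0 : ∀ ω, 0 ≤ D ω) (hq0 : ∀ᵐ ω ∂μ, 0 ≤ q (S ω))
    (F : 𝒮 × 𝒲 → ℝ) (hF : Measurable F) :
    ∫ ω, D ω * F (S ω, W ω) ∂μ = ∫ ω, q (S ω) * F (S ω, W ω) ∂μ := by
  have hpair : Measurable fun ω => (S ω, W ω) := hS.prodMk hW
  have e1 : ∫ ω, D ω * F (S ω, W ω) ∂μ
      = ∫ ω, (fun ω => (D ω).toNNReal) ω • F (S ω, W ω) ∂μ := by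
    refine integral_congr_ae (ae_of_all _ fun ω => ?_)
    simp [NNReal.smul_def, Real.coe_toNNReal _ (hD0 ω)]
  have e2 : ∫ ω, q (S ω) * F (S ω, W ω) ∂μ
      = ∫ ω, (fun ω => (q (S ω)).toNNReal) ω • F (S ω, W ω) ∂μ := by
    refine integral_congr_ae ?_
    filter_upwards [hq0] with ω h
    simp [NNReal.smul_def, Real.coe_toNNReal _ h]
  have m1 : AEMeasurable (fun ω => (D ω).toNNReal) μ :=
    (measurable_real_toNNReal.comp hD).aemeasurable
  have m2 : AEMeasurable (fun ω => (q (S ω)).toNNReal) μ :=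
    (measurable_real_toNNReal.comp (hq.comp hS)).aemeasurable
  have c1 : (fun ω => ((D ω).toNNReal : ℝ≥0∞)) = fun ω => ENNReal.ofReal (D ω) := rfl
  have c2 : (fun ω => ((q (S ω)).toNNReal : ℝ≥0∞)) = fun ω => ENNReal.ofReal (q (S ω)) := rfl
  rw [e1, e2, ← integral_withDensity_eq_integral_smul₀ m1,
    ← integral_withDensity_eq_integral_smul₀ m2, c1, c2]
  rw [← integral_map hpair.aemeasurable hF.aestronglyMeasurable,
    ← integral_map hpair.aemeasurable hF.aestronglyMeasurable, heq]

lemma eif_integrable_density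
    (hS : Measurable S) (hW : Measurable W) (hD : Measurable D) (hq : Measurable q)
    (heq : Measure.map (fun ω => (S ω, W ω)) (μ.withDensity (fun ω => ENNReal.ofReal (D ω))) =
      Measure.map (fun ω => (S ω, W ω)) (μ.withDensity (fun ω => ENNReal.ofReal (q (S ω)))))
    (hD0 : ∀ ω, 0 ≤ D ω) (hq0 : ∀ᵐ ω ∂μ, 0 ≤ q (S ω))
    (F : 𝒮 × 𝒲 → ℝ) (hF : Measurable F) :
    Integrable (fun ω => D ω * F (S ω, W ω)) μ
      ↔ Integrable (fun ω => q (S ω) * F (S ω, W ω)) μ := by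
  have hpair : Measurable fun ω => (S ω, W ω) := hS.prodMk hW
  have L : ∫⁻ ω, ↑‖D ω * F (S ω, W ω)‖₊ ∂μ = ∫⁻ ω, ↑‖q (S ω) * F (S ω, W ω)‖₊ ∂μ := by
    have l1 : ∫⁻ ω, ↑‖D ω * F (S ω, W ω)‖₊ ∂μ
        = ∫⁻ ω, ENNReal.ofReal (D ω) * ↑‖F (S ω, W ω)‖₊ ∂μ := by
      refine lintegral_congr fun ω => ?_
      rw [nnnorm_mul, ENNReal.coe_mul, show (‖D ω‖₊ : ℝ≥0∞) = ‖D ω‖ₑ from rfl, Real.enorm_eq_ofReal (hD0 ω)]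
    have l2 : ∫⁻ ω, ↑‖q (S ω) * F (S ω, W ω)‖₊ ∂μ
        = ∫⁻ ω, ENNReal.ofReal (q (S ω)) * ↑‖F (S ω, W ω)‖₊ ∂μ := by
      refine lintegral_congr_ae ?_
      filter_upwards [hq0] with ω h
      rw [nnnorm_mul, ENNReal.coe_mul, show (‖q (S ω)‖₊ : ℝ≥0∞) = ‖q (S ω)‖ₑ from rfl, Real.enorm_eq_ofReal h]
    rw [l1, l2]
    exact eif_lintegral_density hS hW hD hq heq _ hF.enorm
  constructor <;> intro h <;> refine ⟨?_, ?_⟩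
  · exact ((hq.comp hS).mul (hF.comp hpair)).aestronglyMeasurable
  · exact (show ∫⁻ ω, ↑‖q (S ω) * F (S ω, W ω)‖₊ ∂μ < ⊤ by rw [← L]; exact h.2)
  · exact (hD.mul (hF.comp hpair)).aestronglyMeasurable
  · exact (show ∫⁻ ω, ↑‖D ω * F (S ω, W ω)‖₊ ∂μ < ⊤ by rw [L]; exact h.2)

lemma eif_setIntegral_density
    (hS : Measurable S) (hW : Measurable W) (hD : Measurable D) (hq : Measurable q)
    (heq : Measure.map (fun ω => (S ω, W ω)) (μ.withDensity (fun ω => ENNReal.ofReal (D ω))) =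
      Measure.map (fun ω => (S ω, W ω)) (μ.withDensity (fun ω => ENNReal.ofReal (q (S ω)))))
    (hD0 : ∀ ω, 0 ≤ D ω) (hq0 : ∀ᵐ ω ∂μ, 0 ≤ q (S ω))
    (F : 𝒮 × 𝒲 → ℝ) (hF : Measurable F) (s' : Set 𝒮) (hs' : MeasurableSet s') :
    ∫ ω in S ⁻¹' s', D ω * F (S ω, W ω) ∂μ
      = ∫ ω in S ⁻¹' s', q (S ω) * F (S ω, W ω) ∂μ := by
  have key := eif_integral_density hS hW hD hq heq hD0 hq0
    (fun p => (s'.indicator (fun _ => (1:ℝ)) p.1) * F p)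
    ((measurable_one.indicator hs').comp measurable_fst |>.mul hF)
  have e1 : ∫ ω in S ⁻¹' s', D ω * F (S ω, W ω) ∂μ
      = ∫ ω, D ω * ((s'.indicator (fun _ => (1:ℝ)) (S ω)) * F (S ω, W ω)) ∂μ := by
    rw [← integral_indicator (hS hs')]
    refine integral_congr_ae (ae_of_all _ fun ω => ?_)
    by_cases h : S ω ∈ s' <;> simp [Set.indicator_apply, h]
  have e2 : ∫ ω in S ⁻¹' s', q (S ω) * F (S ω, W ω) ∂μ
      = ∫ ω, q (S ω) * ((s'.indicator (fun _ => (1:ℝ)) (S ω)) * F (S ω, W ω)) ∂μ := by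
    rw [← integral_indicator (hS hs')]
    refine integral_congr_ae (ae_of_all _ fun ω => ?_)
    by_cases h : S ω ∈ s' <;> simp [Set.indicator_apply, h]
  rw [e1, e2]
  exact key

end Cor


lemma eif_aux_main {Ω 𝒳 𝒱 : Type*}
    [MeasurableSpace Ω] [StandardBorelSpace Ω] [Nonempty Ω]
    [MeasurableSpace 𝒳] [MeasurableSpace 𝒱]
    (μ : Measure Ω) [IsProbabilityMeasure μ]
    (X : Ω → 𝒳) (V : Ω → 𝒱) (Z' R Y Yz : Ω → ℝ)
    (hX : Measurable X) (hV : Measurable V) (hZ' : Measurable Z') (hR : Measurable R)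
    (hY : Measurable Y) (hYz : Measurable Yz)
    (hZ01 : ∀ ω, Z' ω = 0 ∨ Z' ω = 1) (hR01 : ∀ ω, R ω = 0 ∨ R ω = 1)
    (C : ℝ) (hYbd : ∀ ω, |Y ω| ≤ C) (hYzbd : ∀ ω, |Yz ω| ≤ C)
    (hZY : ∀ ω, Z' ω * Y ω = Z' ω * Yz ω)
    (w : 𝒳 × 𝒱 → ℝ) (rho : 𝒳 → ℝ) (mz : 𝒳 × 𝒱 → ℝ) (dz : 𝒳 → ℝ)
    (hwM : Measurable w) (hrhoM : Measurable rho) (hmzM : Measurable mz) (hdzM : Measurable dz)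
    (Cm : ℝ) (hmzBd : ∀ p, |mz p| ≤ Cm)
    (hw : (fun ω => w (X ω, V ω)) =ᵐ[μ]
      μ[Z' | MeasurableSpace.comap (fun ω => (X ω, V ω)) inferInstance])
    (hrho : (fun ω => rho (X ω)) =ᵐ[μ] μ[R | MeasurableSpace.comap X inferInstance])
    (hdz : (fun ω => dz (X ω)) =ᵐ[μ]
      μ[(fun ω => mz (X ω, V ω)) | MeasurableSpace.comap X inferInstance])
    (hA1 : CondIndepFun (MeasurableSpace.comap X inferInstance)
      (measurable_iff_comap_le.mp hX) R (fun ω => (Y ω, Z' ω, V ω)) μ)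
    (hA2 : CondIndepFun (MeasurableSpace.comap (fun ω => (X ω, V ω)) inferInstance)
      (measurable_iff_comap_le.mp (hX.prodMk hV)) Z' Yz μ)
    (hwpos : ∀ᵐ ω ∂μ, 0 < w (X ω, V ω))
    (hrhopos : ∀ᵐ ω ∂μ, 0 < rho (X ω))
    (hpull : ∀ s' : Set (𝒳 × 𝒱), MeasurableSet s' →
      ∫ ω in (fun ω => (X ω, V ω)) ⁻¹' s', Z' ω * Y ω ∂μ
        = ∫ ω in (fun ω => (X ω, V ω)) ⁻¹' s', Z' ω * mz (X ω, V ω) ∂μ) :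
    Integrable (fun ω => R ω / rho (X ω) *
        (Z' ω * (Y ω - mz (X ω, V ω)) / w (X ω, V ω) + mz (X ω, V ω) - dz (X ω))
        + dz (X ω)) μ ∧
    ∫ ω, (R ω / rho (X ω) *
        (Z' ω * (Y ω - mz (X ω, V ω)) / w (X ω, V ω) + mz (X ω, V ω) - dz (X ω))
        + dz (X ω)) ∂μ = ∫ ω, Yz ω ∂μ := by
  have hXV : Measurable fun ω => (X ω, V ω) := hX.prodMk hV
  have hmX : MeasurableSpace.comap X inferInstance ≤ ‹MeasurableSpace Ω› :=
    measurable_iff_comap_le.mp hX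
  have hmXV : MeasurableSpace.comap (fun ω => (X ω, V ω)) inferInstance
      ≤ ‹MeasurableSpace Ω› := measurable_iff_comap_le.mp hXV
  have hZ'0 : ∀ ω, 0 ≤ Z' ω := fun ω => by rcases hZ01 ω with h | h <;> simp [h]
  have hZ'1 : ∀ ω, Z' ω ≤ 1 := fun ω => by rcases hZ01 ω with h | h <;> simp [h]
  have hR0 : ∀ ω, 0 ≤ R ω := fun ω => by rcases hR01 ω with h | h <;> simp [h]
  have hw0 : ∀ᵐ ω ∂μ, 0 ≤ w (X ω, V ω) := hwpos.mono fun ω h => h.le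
  have hrho0 : ∀ᵐ ω ∂μ, 0 ≤ rho (X ω) := hrhopos.mono fun ω h => h.le
  have hZ'int : Integrable Z' μ :=
    eif_bdd_integrable hZ'.aestronglyMeasurable 1
      (ae_of_all _ fun ω => by rw [abs_of_nonneg (hZ'0 ω)]; exact hZ'1 ω)
  have hw1 : ∀ᵐ ω ∂μ, w (X ω, V ω) ≤ 1 := by
    have h1 : μ[Z' | MeasurableSpace.comap (fun ω => (X ω, V ω)) inferInstance]
        ≤ᵐ[μ] fun _ => (1 : ℝ) :=
      (condExp_mono hZ'int (integrable_const 1) (ae_of_all _ hZ'1)).trans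
        (ae_of_all _ (condExp_const hmXV (1 : ℝ)).le)
    filter_upwards [hw, h1] with ω he h1'
    rw [he]; exact h1'
  have hω0 := Classical.arbitrary Ω
  have hCm0 : 0 ≤ Cm := le_trans (abs_nonneg _) (hmzBd (X hω0, V hω0))
  have hC0 : 0 ≤ C := le_trans (abs_nonneg _) (hYbd hω0)
  have hdzbd : ∀ᵐ ω ∂μ, |dz (X ω)| ≤ Cm := by
    have := ae_bdd_condExp_of_ae_bdd (m := MeasurableSpace.comap X inferInstance)
      (μ := μ) (R := Cm.toNNReal) (f := fun ω => mz (X ω, V ω))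
      (ae_of_all _ fun ω => by
        rw [Real.coe_toNNReal _ hCm0]; exact hmzBd _)
    filter_upwards [hdz, this] with ω he h
    rw [he]; rwa [Real.coe_toNNReal _ hCm0] at h
  -- the two transfer measure identities
  have heq1 := eif_density_eq μ X (fun ω => (Y ω, Z' ω, V ω)) R rho hX
    (hY.prodMk (hZ'.prodMk hV)) hR hrhoM hR01 hrho hA1
  have heq2 := eif_density_eq μ (fun ω => (X ω, V ω)) Yz Z' w hXV hYz hZ' hwM hZ01 hw hA2
  -- Step (i) : integrability of the first term
  have hg1eq : ∀ ω, Z' ω * (Y ω - mz (X ω, V ω)) / w (X ω, V ω)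
      = Z' ω * ((Yz ω - mz (X ω, V ω)) / w (X ω, V ω)) := by
    intro ω
    rcases hZ01 ω with h | h
    · simp [h]
    · have hy : Y ω = Yz ω := by
        have := hZY ω; rw [h] at this; simpa using this
      rw [mul_div_assoc, hy]
  have hF1 : Measurable fun p : (𝒳 × 𝒱) × ℝ => (p.2 - mz p.1) / w p.1 :=
    (measurable_snd.sub (hmzM.comp measurable_fst)).div (hwM.comp measurable_fst)
  have hbase : Integrable (fun ω => Yz ω - mz (X ω, V ω)) μ :=
    eif_bdd_integrable (hYz.sub (hmzM.comp hXV)).aestronglyMeasurable (C + Cm)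
      (ae_of_all _ fun ω => by
        have h1 := abs_le.mp (hYzbd ω); have h2 := abs_le.mp (hmzBd (X ω, V ω))
        exact abs_le.mpr ⟨by linarith, by linarith⟩)
  have hwYzint : Integrable
      (fun ω => w (X ω, V ω) * ((Yz ω - mz (X ω, V ω)) / w (X ω, V ω))) μ := by
    refine hbase.congr ?_
    filter_upwards [hwpos] with ω h
    rw [mul_comm, div_mul_cancel₀ _ h.ne']
  have hg1int : Integrable
      (fun ω => Z' ω * (Y ω - mz (X ω, V ω)) / w (X ω, V ω)) μ := by
    have := (eif_integrable_density hXV hYz hZ' hwM heq2 hZ'0 hw0 _ hF1).mpr hwYzint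
    exact this.congr (ae_of_all _ fun ω => (hg1eq ω).symm)
  -- basic integrabilities
  have hξint : Integrable (fun ω => Z' ω * (Y ω - mz (X ω, V ω))) μ :=
    eif_bdd_integrable ((hZ'.mul (hY.sub (hmzM.comp hXV))).aestronglyMeasurable) (C + Cm)
      (ae_of_all _ fun ω => by
        have h1 := abs_le.mp (hYbd ω); have h2 := abs_le.mp (hmzBd (X ω, V ω))
        rw [abs_mul]
        calc |Z' ω| * |Y ω - mz (X ω, V ω)| ≤ 1 * (C + Cm) := by
              refine mul_le_mul ?_ (abs_le.mpr ⟨by linarith, by linarith⟩)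
                (abs_nonneg _) zero_le_one
              rw [abs_of_nonneg (hZ'0 ω)]; exact hZ'1 ω
          _ = C + Cm := one_mul _)
  have hZ'Yint : Integrable (fun ω => Z' ω * Y ω) μ :=
    eif_bdd_integrable (hZ'.mul hY).aestronglyMeasurable C
      (ae_of_all _ fun ω => by
        rw [abs_mul]
        calc |Z' ω| * |Y ω| ≤ 1 * C := by
              refine mul_le_mul ?_ (hYbd ω) (abs_nonneg _) zero_le_one
              rw [abs_of_nonneg (hZ'0 ω)]; exact hZ'1 ω
          _ = C := one_mul _)
  have hZ'mzint : Integrable (fun ω => Z' ω * mz (X ω, V ω)) μ :=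
    eif_bdd_integrable (hZ'.mul (hmzM.comp hXV)).aestronglyMeasurable Cm
      (ae_of_all _ fun ω => by
        rw [abs_mul]
        calc |Z' ω| * |mz (X ω, V ω)| ≤ 1 * Cm := by
              refine mul_le_mul ?_ (hmzBd _) (abs_nonneg _) zero_le_one
              rw [abs_of_nonneg (hZ'0 ω)]; exact hZ'1 ω
          _ = Cm := one_mul _)
  have hmzint : Integrable (fun ω => mz (X ω, V ω)) μ :=
    eif_bdd_integrable (hmzM.comp hXV).aestronglyMeasurable Cm
      (ae_of_all _ fun ω => hmzBd _)
  have hdzint : Integrable (fun ω => dz (X ω)) μ :=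
    eif_bdd_integrable (hdzM.comp hX).aestronglyMeasurable Cm hdzbd
  have hYzint : Integrable Yz μ :=
    eif_bdd_integrable hYz.aestronglyMeasurable C (ae_of_all _ hYzbd)
  -- Step (ii) : the conditional expectation of Z'(Y - mz) given (X,V) vanishes
  have hηzero : (fun _ => (0:ℝ)) =ᵐ[μ]
      μ[(fun ω => Z' ω * (Y ω - mz (X ω, V ω))) |
        MeasurableSpace.comap (fun ω => (X ω, V ω)) inferInstance] := by
    refine ae_eq_condExp_of_forall_setIntegral_eq hmXV hξint
      (fun s _ _ => (integrable_zero _ _ _).integrableOn) (fun s hs _ => ?_)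
      (stronglyMeasurable_const.aestronglyMeasurable)
    obtain ⟨s', hs', rfl⟩ := hs
    have hsplit : ∫ ω in (fun ω => (X ω, V ω)) ⁻¹' s', Z' ω * (Y ω - mz (X ω, V ω)) ∂μ
        = ∫ ω in (fun ω => (X ω, V ω)) ⁻¹' s', Z' ω * Y ω ∂μ
          - ∫ ω in (fun ω => (X ω, V ω)) ⁻¹' s', Z' ω * mz (X ω, V ω) ∂μ := by
      rw [← integral_sub hZ'Yint.integrableOn hZ'mzint.integrableOn]
      refine setIntegral_congr_ae (hXV hs') (ae_of_all _ fun ω _ => ?_)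
      ring
    rw [hsplit, hpull s' hs', sub_self, integral_zero]
  have hg1zero : ∫ ω, Z' ω * (Y ω - mz (X ω, V ω)) / w (X ω, V ω) ∂μ = 0 := by
    have hinv : StronglyMeasurable[MeasurableSpace.comap
        (fun ω => (X ω, V ω)) inferInstance] (fun ω => (w (X ω, V ω))⁻¹) :=
      ((hwM.inv).comp (Measurable.of_comap_le le_rfl)).stronglyMeasurable
    have hptw : ∀ ω, Z' ω * (Y ω - mz (X ω, V ω)) / w (X ω, V ω)
        = (w (X ω, V ω))⁻¹ * (Z' ω * (Y ω - mz (X ω, V ω))) := fun ω => by ring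
    have hprod : Integrable ((fun ω => (w (X ω, V ω))⁻¹)
        * fun ω => Z' ω * (Y ω - mz (X ω, V ω))) μ :=
      hg1int.congr (ae_of_all _ fun ω => hptw ω)
    have hmul := condExp_mul_of_stronglyMeasurable_left (μ := μ) hinv hprod hξint
    calc ∫ ω, Z' ω * (Y ω - mz (X ω, V ω)) / w (X ω, V ω) ∂μ
        = ∫ ω, ((fun ω => (w (X ω, V ω))⁻¹)
            * fun ω => Z' ω * (Y ω - mz (X ω, V ω))) ω ∂μ :=
          integral_congr_ae (ae_of_all _ fun ω => hptw ω)
      _ = ∫ ω, (μ[(fun ω => (w (X ω, V ω))⁻¹)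
            * fun ω => Z' ω * (Y ω - mz (X ω, V ω)) |
            MeasurableSpace.comap (fun ω => (X ω, V ω)) inferInstance]) ω ∂μ :=
          (integral_condExp hmXV).symm
      _ = 0 := by
          refine integral_eq_zero_of_ae ?_
          filter_upwards [hmul, hηzero] with ω h1 h2
          simp only [Pi.zero_apply]
          rw [h1, Pi.mul_apply, ← h2, mul_zero]
  -- Step (iii) : ∫ dz = ∫ mz
  have hdzval : ∫ ω, dz (X ω) ∂μ = ∫ ω, mz (X ω, V ω) ∂μ := by
    rw [integral_congr_ae hdz, integral_condExp hmX]
  -- Step (vii) : ∫ mz = ∫ Yz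
  have hstep7 : ∫ ω, mz (X ω, V ω) ∂μ = ∫ ω, Yz ω ∂μ := by
    have hwmz : (fun ω => w (X ω, V ω) * mz (X ω, V ω)) =ᵐ[μ]
        μ[(fun ω => Z' ω * Y ω) |
          MeasurableSpace.comap (fun ω => (X ω, V ω)) inferInstance] := by
      refine ae_eq_condExp_of_forall_setIntegral_eq hmXV hZ'Yint
        (fun s _ _ => ?_) (fun s hs _ => ?_)
        (((hwM.comp (Measurable.of_comap_le le_rfl)).mul
          (hmzM.comp (Measurable.of_comap_le le_rfl))).stronglyMeasurable.aestronglyMeasurable)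
      · refine (eif_bdd_integrable ((hwM.comp hXV).mul
          (hmzM.comp hXV)).aestronglyMeasurable Cm ?_).integrableOn
        filter_upwards [hw0, hw1] with ω h0 h1
        show |w (X ω, V ω) * mz (X ω, V ω)| ≤ Cm
        rw [abs_mul]
        calc |w (X ω, V ω)| * |mz (X ω, V ω)| ≤ 1 * Cm :=
              mul_le_mul (abs_le.mpr ⟨by linarith, h1⟩) (hmzBd _) (abs_nonneg _) zero_le_one
          _ = Cm := one_mul _
      · obtain ⟨s', hs', rfl⟩ := hs
        have e := (eif_setIntegral_density hXV hYz hZ' hwM heq2 hZ'0 hw0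
          (fun p => mz p.1) (hmzM.comp measurable_fst) s' hs').symm
        calc ∫ ω in (fun ω => (X ω, V ω)) ⁻¹' s', w (X ω, V ω) * mz (X ω, V ω) ∂μ
            = ∫ ω in (fun ω => (X ω, V ω)) ⁻¹' s', Z' ω * mz (X ω, V ω) ∂μ := e
          _ = ∫ ω in (fun ω => (X ω, V ω)) ⁻¹' s', Z' ω * Y ω ∂μ := (hpull s' hs').symm
    have hκbd : ∀ᵐ ω ∂μ,
        |(μ[Yz | MeasurableSpace.comap (fun ω => (X ω, V ω)) inferInstance]) ω| ≤ C := by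
      have := ae_bdd_condExp_of_ae_bdd
        (m := MeasurableSpace.comap (fun ω => (X ω, V ω)) inferInstance)
        (μ := μ) (R := C.toNNReal) (f := Yz)
        (ae_of_all _ fun ω => by rw [Real.coe_toNNReal _ hC0]; exact hYzbd ω)
      filter_upwards [this] with ω h
      rwa [Real.coe_toNNReal _ hC0] at h
    have hwκ : (fun ω => w (X ω, V ω) *
        (μ[Yz | MeasurableSpace.comap (fun ω => (X ω, V ω)) inferInstance]) ω) =ᵐ[μ]
        μ[(fun ω => Z' ω * Y ω) |
          MeasurableSpace.comap (fun ω => (X ω, V ω)) inferInstance] := by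
      refine ae_eq_condExp_of_forall_setIntegral_eq hmXV hZ'Yint
        (fun s _ _ => ?_) (fun s hs _ => ?_)
        (((hwM.comp (Measurable.of_comap_le le_rfl)).stronglyMeasurable.mul
          stronglyMeasurable_condExp).aestronglyMeasurable)
      · refine (eif_bdd_integrable ((hwM.comp hXV).aestronglyMeasurable.mul
          (stronglyMeasurable_condExp.mono hmXV).aestronglyMeasurable) C ?_).integrableOn
        filter_upwards [hw0, hw1, hκbd] with ω h0 h1 h2
        calc |w (X ω, V ω) * (μ[Yz |
              MeasurableSpace.comap (fun ω => (X ω, V ω)) inferInstance]) ω|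
            = |w (X ω, V ω)| * |(μ[Yz |
              MeasurableSpace.comap (fun ω => (X ω, V ω)) inferInstance]) ω| := abs_mul _ _
          _ ≤ 1 * C :=
              mul_le_mul (abs_le.mpr ⟨by linarith, h1⟩) h2 (abs_nonneg _) zero_le_one
          _ = C := one_mul _
      · obtain ⟨s', hs', rfl⟩ := hs
        have hsm : MeasurableSet[MeasurableSpace.comap
            (fun ω => (X ω, V ω)) inferInstance] ((fun ω => (X ω, V ω)) ⁻¹' s') :=
          ⟨s', hs', rfl⟩
        set g : Ω → ℝ := fun ω =>
          ((fun ω => (X ω, V ω)) ⁻¹' s').indicator (fun _ => (1:ℝ)) ω * w (X ω, V ω) with hgdef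
        have hgsm : StronglyMeasurable[MeasurableSpace.comap
            (fun ω => (X ω, V ω)) inferInstance] g :=
          (stronglyMeasurable_const.indicator hsm).mul
            ((hwM.comp (Measurable.of_comap_le le_rfl)).stronglyMeasurable)
        have hgbd : ∀ᵐ ω ∂μ, |g ω| ≤ 1 := by
          filter_upwards [hw0, hw1] with ω h0 h1
          rw [hgdef]
          by_cases h : ω ∈ (fun ω => (X ω, V ω)) ⁻¹' s' <;>
            simp [Set.indicator_apply, h, abs_le.mpr ⟨by linarith, h1⟩]
        have hpullout := eif_integral_mul_condexp hmXV hgsm 1 hgbd hYzint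
        have i1 : ∫ ω in (fun ω => (X ω, V ω)) ⁻¹' s', w (X ω, V ω) *
            (μ[Yz | MeasurableSpace.comap (fun ω => (X ω, V ω)) inferInstance]) ω ∂μ
            = ∫ ω, g ω *
              (μ[Yz | MeasurableSpace.comap (fun ω => (X ω, V ω)) inferInstance]) ω ∂μ := by
          rw [← integral_indicator (hXV hs')]
          refine integral_congr_ae (ae_of_all _ fun ω => ?_)
          rw [hgdef]
          by_cases h : ω ∈ (fun ω => (X ω, V ω)) ⁻¹' s' <;>
            simp [Set.indicator_apply, h]
        have i3 : ∫ ω, g ω * Yz ω ∂μ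
            = ∫ ω in (fun ω => (X ω, V ω)) ⁻¹' s', w (X ω, V ω) * Yz ω ∂μ := by
          rw [← integral_indicator (hXV hs')]
          refine integral_congr_ae (ae_of_all _ fun ω => ?_)
          rw [hgdef]
          by_cases h : ω ∈ (fun ω => (X ω, V ω)) ⁻¹' s' <;>
            simp [Set.indicator_apply, h]
        have i4 := (eif_setIntegral_density hXV hYz hZ' hwM heq2 hZ'0 hw0
          (fun p => p.2) measurable_snd s' hs').symm
        have i5 : ∫ ω in (fun ω => (X ω, V ω)) ⁻¹' s', Z' ω * Yz ω ∂μ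
            = ∫ ω in (fun ω => (X ω, V ω)) ⁻¹' s', Z' ω * Y ω ∂μ :=
          setIntegral_congr_ae (hXV hs') (ae_of_all _ fun ω _ => (hZY ω).symm)
        rw [i1, ← hpullout, i3]
        calc ∫ ω in (fun ω => (X ω, V ω)) ⁻¹' s', w (X ω, V ω) * Yz ω ∂μ
            = ∫ ω in (fun ω => (X ω, V ω)) ⁻¹' s', Z' ω * Yz ω ∂μ := i4
          _ = ∫ ω in (fun ω => (X ω, V ω)) ⁻¹' s', Z' ω * Y ω ∂μ := i5
    have hcancel : (fun ω => mz (X ω, V ω)) =ᵐ[μ]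
        μ[Yz | MeasurableSpace.comap (fun ω => (X ω, V ω)) inferInstance] := by
      filter_upwards [hwmz, hwκ, hwpos] with ω h1 h2 h3
      have := h1.trans h2.symm
      exact mul_left_cancel₀ h3.ne' this
    rw [integral_congr_ae hcancel, integral_condExp hmXV]
  -- Step (v) : remove the R / rho factor
  set G : 𝒳 × (ℝ × ℝ × 𝒱) → ℝ := fun p =>
    (rho p.1)⁻¹ * (p.2.2.1 * (p.2.1 - mz (p.1, p.2.2.2)) / w (p.1, p.2.2.2)
      + mz (p.1, p.2.2.2) - dz p.1) with hGdef
  have hG : Measurable G := by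
    apply Measurable.mul
    · exact (hrhoM.comp measurable_fst).inv
    · apply Measurable.sub
      · apply Measurable.add
        · exact ((measurable_snd.snd.fst).mul
            (measurable_snd.fst.sub
              (hmzM.comp (measurable_fst.prodMk measurable_snd.snd.snd)))).div
            (hwM.comp (measurable_fst.prodMk measurable_snd.snd.snd))
        · exact hmzM.comp (measurable_fst.prodMk measurable_snd.snd.snd)
      · exact hdzM.comp measurable_fst
  have htot1eq : ∀ ω, R ω / rho (X ω) *
      (Z' ω * (Y ω - mz (X ω, V ω)) / w (X ω, V ω) + mz (X ω, V ω) - dz (X ω))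
      = R ω * G (X ω, (Y ω, Z' ω, V ω)) := by
    intro ω
    rw [hGdef]
    simp only []
    rw [div_eq_mul_inv]
    ring
  have hcoreint : Integrable (fun ω =>
      Z' ω * (Y ω - mz (X ω, V ω)) / w (X ω, V ω) + mz (X ω, V ω) - dz (X ω)) μ := by
    have := (hg1int.add hmzint).sub hdzint
    exact this.congr (ae_of_all _ fun ω => rfl)
  have hcoreval : ∫ ω, (Z' ω * (Y ω - mz (X ω, V ω)) / w (X ω, V ω)
      + mz (X ω, V ω) - dz (X ω)) ∂μ = 0 := by
    have hAB : Integrable (fun ω =>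
        Z' ω * (Y ω - mz (X ω, V ω)) / w (X ω, V ω) + mz (X ω, V ω)) μ :=
      hg1int.add hmzint
    have h1 : ∫ ω, (Z' ω * (Y ω - mz (X ω, V ω)) / w (X ω, V ω)
          + mz (X ω, V ω) - dz (X ω)) ∂μ
        = (∫ ω, (Z' ω * (Y ω - mz (X ω, V ω)) / w (X ω, V ω) + mz (X ω, V ω)) ∂μ)
          - ∫ ω, dz (X ω) ∂μ := integral_sub hAB hdzint
    have h2 : ∫ ω, (Z' ω * (Y ω - mz (X ω, V ω)) / w (X ω, V ω) + mz (X ω, V ω)) ∂μ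
        = (∫ ω, Z' ω * (Y ω - mz (X ω, V ω)) / w (X ω, V ω) ∂μ)
          + ∫ ω, mz (X ω, V ω) ∂μ := integral_add hg1int hmzint
    rw [h1, h2, hg1zero, hdzval, zero_add, sub_self]
  have hrhoGint : Integrable (fun ω => rho (X ω) * G (X ω, (Y ω, Z' ω, V ω))) μ := by
    refine hcoreint.congr ?_
    filter_upwards [hrhopos] with ω h
    rw [hGdef]
    simp only []
    rw [← mul_assoc, mul_inv_cancel₀ h.ne', one_mul]
  have htot1int : Integrable (fun ω => R ω / rho (X ω) *
      (Z' ω * (Y ω - mz (X ω, V ω)) / w (X ω, V ω)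
        + mz (X ω, V ω) - dz (X ω))) μ := by
    have := (eif_integrable_density hX (hY.prodMk (hZ'.prodMk hV)) hR hrhoM heq1
      hR0 hrho0 G hG).mpr hrhoGint
    exact this.congr (ae_of_all _ fun ω => (htot1eq ω).symm)
  have htot1val : ∫ ω, R ω / rho (X ω) *
      (Z' ω * (Y ω - mz (X ω, V ω)) / w (X ω, V ω)
        + mz (X ω, V ω) - dz (X ω)) ∂μ = 0 := by
    calc ∫ ω, R ω / rho (X ω) *
        (Z' ω * (Y ω - mz (X ω, V ω)) / w (X ω, V ω)
          + mz (X ω, V ω) - dz (X ω)) ∂μ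
        = ∫ ω, R ω * G (X ω, (Y ω, Z' ω, V ω)) ∂μ :=
          integral_congr_ae (ae_of_all _ fun ω => htot1eq ω)
      _ = ∫ ω, rho (X ω) * G (X ω, (Y ω, Z' ω, V ω)) ∂μ :=
          eif_integral_density hX (hY.prodMk (hZ'.prodMk hV)) hR hrhoM heq1
            hR0 hrho0 G hG
      _ = ∫ ω, (Z' ω * (Y ω - mz (X ω, V ω)) / w (X ω, V ω)
            + mz (X ω, V ω) - dz (X ω)) ∂μ := by
          refine integral_congr_ae ?_
          filter_upwards [hrhopos] with ω h
          rw [hGdef]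
          simp only []
          rw [← mul_assoc, mul_inv_cancel₀ h.ne', one_mul]
      _ = 0 := hcoreval
  refine ⟨htot1int.add hdzint, ?_⟩
  have hfin : ∫ ω, (R ω / rho (X ω) *
      (Z' ω * (Y ω - mz (X ω, V ω)) / w (X ω, V ω) + mz (X ω, V ω) - dz (X ω))
      + dz (X ω)) ∂μ
      = (∫ ω, R ω / rho (X ω) *
        (Z' ω * (Y ω - mz (X ω, V ω)) / w (X ω, V ω) + mz (X ω, V ω) - dz (X ω)) ∂μ)
        + ∫ ω, dz (X ω) ∂μ := integral_add htot1int hdzint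
  rw [hfin, htot1val, zero_add, hdzval, hstep7]


theorem eif_unbiased
    {Ω 𝒳 𝒱 : Type*}
    [MeasurableSpace Ω] [StandardBorelSpace Ω] [Nonempty Ω]
    [MeasurableSpace 𝒳] [StandardBorelSpace 𝒳]
    [MeasurableSpace 𝒱] [StandardBorelSpace 𝒱]
    (μ : Measure Ω) [IsProbabilityMeasure μ]
    (X : Ω → 𝒳) (V : Ω → 𝒱) (Z R Y0 Y1 : Ω → ℝ)
    (hX : Measurable X) (hV : Measurable V) (hZ : Measurable Z)
    (hR : Measurable R) (hY0 : Measurable Y0) (hY1 : Measurable Y1)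
    (hZ01 : ∀ ω, Z ω = 0 ∨ Z ω = 1) (hR01 : ∀ ω, R ω = 0 ∨ R ω = 1)
    (hYbd : ∃ C, ∀ ω, |Y0 ω| ≤ C ∧ |Y1 ω| ≤ C)
    (Y : Ω → ℝ) (hYdef : ∀ ω, Y ω = Z ω * Y1 ω + (1 - Z ω) * Y0 ω)
    (pi : 𝒳 × 𝒱 → ℝ) (rho : 𝒳 → ℝ)
    (hpiM : Measurable pi) (hrhoM : Measurable rho)
    (hpi : (fun ω => pi (X ω, V ω)) =ᵐ[μ]
      μ[Z | MeasurableSpace.comap (fun ω => (X ω, V ω)) inferInstance])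
    (hrho : (fun ω => rho (X ω)) =ᵐ[μ]
      μ[R | MeasurableSpace.comap X inferInstance])
    (hA1 : CondIndepFun (MeasurableSpace.comap X inferInstance)
      (measurable_iff_comap_le.mp hX) R (fun ω => (Y ω, Z ω, V ω)) μ)
    (hA2 : CondIndepFun (MeasurableSpace.comap (fun ω => (X ω, V ω)) inferInstance)
      (measurable_iff_comap_le.mp (hX.prodMk hV)) Z (fun ω => (Y0 ω, Y1 ω)) μ)
    (hA3 : ∀ᵐ ω ∂μ, 0 < pi (X ω, V ω) ∧ pi (X ω, V ω) < 1)
    (hA4 : ∀ᵐ ω ∂μ, 0 < rho (X ω))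
    (mo : ℝ × 𝒳 × 𝒱 → ℝ) (hmoM : Measurable mo) (hmoBd : ∃ C, ∀ p, |mo p| ≤ C)
    (hmo : (fun ω => mo (Z ω, X ω, V ω)) =ᵐ[μ]
      μ[Y | MeasurableSpace.comap (fun ω => (Z ω, X ω, V ω)) inferInstance])
    (del : ℝ → 𝒳 → ℝ) (hdelM : ∀ z, Measurable (del z))
    (hdel : ∀ z ∈ ({0, 1} : Set ℝ),
      (fun ω => del z (X ω)) =ᵐ[μ]
        μ[(fun ω => mo (z, X ω, V ω)) | MeasurableSpace.comap X inferInstance])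
    (phi : ℝ → Ω → ℝ)
    (hphi : ∀ z ω, phi z ω =
      R ω / rho (X ω) *
          ((if Z ω = z then (1 : ℝ) else 0) * (Y ω - mo (z, X ω, V ω)) /
              (pi (X ω, V ω) ^ z * (1 - pi (X ω, V ω)) ^ (1 - z))
            + mo (z, X ω, V ω) - del z (X ω))
        + del z (X ω))
 :
    (∀ z ∈ ({0, 1} : Set ℝ),
      ∫ ω, phi z ω ∂μ = ∫ ω, (if z = 1 then Y1 ω else Y0 ω) ∂μ) ∧
    ∫ ω, (phi 1 ω - phi 0 ω - ∫ ω', (Y1 ω' - Y0 ω') ∂μ) ∂μ = 0 := by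
  obtain ⟨C, hC⟩ := hYbd
  obtain ⟨Cm, hCm⟩ := hmoBd
  have hXV : Measurable fun ω => (X ω, V ω) := hX.prodMk hV
  have hZXV : Measurable fun ω => (Z ω, X ω, V ω) := hZ.prodMk (hX.prodMk hV)
  have hmZXV : MeasurableSpace.comap (fun ω => (Z ω, X ω, V ω)) inferInstance
      ≤ ‹MeasurableSpace Ω› := measurable_iff_comap_le.mp hZXV
  have hYm : Measurable Y := by
    have : Y = fun ω => Z ω * Y1 ω + (1 - Z ω) * Y0 ω := funext hYdef
    rw [this]; exact (hZ.mul hY1).add ((measurable_const.sub hZ).mul hY0)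
  have hYb : ∀ ω, |Y ω| ≤ C := by
    intro ω
    rcases hZ01 ω with h | h <;> rw [hYdef ω, h] <;> simp [(hC ω).1, (hC ω).2]
  have hYint : Integrable Y μ :=
    eif_bdd_integrable hYm.aestronglyMeasurable C (ae_of_all _ hYb)
  -- the per-z machinery
  have main : ∀ z : ℝ, z = 0 ∨ z = 1 → ∀ Yz : Ω → ℝ, Measurable Yz →
      (∀ ω, |Yz ω| ≤ C) →
      (∀ ω, (if Z ω = z then (1:ℝ) else 0) * Y ω
        = (if Z ω = z then (1:ℝ) else 0) * Yz ω) →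
      CondIndepFun (MeasurableSpace.comap (fun ω => (X ω, V ω)) inferInstance)
        (measurable_iff_comap_le.mp (hX.prodMk hV))
        (fun ω => if Z ω = z then (1:ℝ) else 0) Yz μ →
      Integrable (phi z) μ ∧ ∫ ω, phi z ω ∂μ = ∫ ω, Yz ω ∂μ := by
    intro z hz Yz hYzM hYzbd hZY hA2'
    have hzmem : z ∈ ({0, 1} : Set ℝ) := by rcases hz with h | h <;> simp [h]
    set Z' : Ω → ℝ := fun ω => if Z ω = z then 1 else 0 with hZ'def
    have hf1 : Measurable fun t : ℝ => if t = z then (1:ℝ) else 0 := by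
      have : MeasurableSet {t : ℝ | t = z} := measurableSet_eq
      exact Measurable.ite this measurable_const measurable_const
    have hZ'M : Measurable Z' := hf1.comp hZ
    have hZ'01 : ∀ ω, Z' ω = 0 ∨ Z' ω = 1 := by
      intro ω; rw [hZ'def]
      by_cases h : Z ω = z <;> simp [h]
    set w : 𝒳 × 𝒱 → ℝ := fun p => pi p ^ z * (1 - pi p) ^ (1 - z) with hwdef
    have hwM : Measurable w := by
      rw [hwdef]
      rcases hz with h | h <;> subst h <;>
        simp only [Real.rpow_one, Real.rpow_zero, sub_zero, sub_self, mul_one, one_mul]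
      · exact measurable_const.sub hpiM
      · exact hpiM
    set mz : 𝒳 × 𝒱 → ℝ := fun p => mo (z, p.1, p.2) with hmzdef
    have hmzM : Measurable mz :=
      hmoM.comp (measurable_const.prodMk (measurable_fst.prodMk measurable_snd))
    have hmzBd : ∀ p, |mz p| ≤ Cm := fun p => hCm _
    -- the conditional expectation identity for w
    have hw : (fun ω => w (X ω, V ω)) =ᵐ[μ]
        μ[Z' | MeasurableSpace.comap (fun ω => (X ω, V ω)) inferInstance] := by
      rcases hz with h | h
      · -- z = 0 : w = 1 - pi, Z' = 1 - Z
        subst h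
        have hwe : (fun ω => w (X ω, V ω)) = fun ω => 1 - pi (X ω, V ω) := by
          funext ω; rw [hwdef]; norm_num
        have hZ'e : Z' = fun ω => 1 - Z ω := by
          funext ω; rw [hZ'def]
          rcases hZ01 ω with h | h <;> simp [h]
        rw [hwe, hZ'e]
        have hZint : Integrable Z μ := by
          refine eif_bdd_integrable hZ.aestronglyMeasurable 1 (ae_of_all _ fun ω => ?_)
          rcases hZ01 ω with h | h <;> simp [h]
        have hsub := condExp_sub (m := MeasurableSpace.comap
            (fun ω => (X ω, V ω)) inferInstance) (integrable_const (1:ℝ)) hZint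
        have hconst := condExp_const (μ := μ) (measurable_iff_comap_le.mp hXV) (1:ℝ)
        filter_upwards [hpi, hsub] with ω h1 h2
        have : ((fun _ => (1:ℝ)) - Z) = fun ω => 1 - Z ω := rfl
        rw [← this, h2, Pi.sub_apply, hconst, ← h1]
      · -- z = 1 : w = pi, Z' = Z
        subst h
        have hwe : (fun ω => w (X ω, V ω)) = fun ω => pi (X ω, V ω) := by
          funext ω; rw [hwdef]; norm_num
        have hZ'e : Z' = Z := by
          funext ω; rw [hZ'def]
          rcases hZ01 ω with h | h <;> simp [h]
        rw [hwe, hZ'e]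
        exact hpi
    have hwpos : ∀ᵐ ω ∂μ, 0 < w (X ω, V ω) := by
      filter_upwards [hA3] with ω h
      rw [hwdef]
      rcases hz with hzz | hzz <;> subst hzz <;> norm_num <;> linarith [h.1, h.2]
    -- conditional independence for the modified treatment indicator
    have hA1' : CondIndepFun (MeasurableSpace.comap X inferInstance)
        (measurable_iff_comap_le.mp hX) R (fun ω => (Y ω, Z' ω, V ω)) μ := by
      have hψ : Measurable fun p : ℝ × ℝ × 𝒱 =>
          (p.1, (if p.2.1 = z then (1:ℝ) else 0), p.2.2) :=
        measurable_fst.prodMk ((hf1.comp measurable_snd.fst).prodMk measurable_snd.snd)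
      exact hA1.comp measurable_id hψ
    -- the pull-out identity through the outcome regression
    have hpull : ∀ s' : Set (𝒳 × 𝒱), MeasurableSet s' →
        ∫ ω in (fun ω => (X ω, V ω)) ⁻¹' s', Z' ω * Y ω ∂μ
          = ∫ ω in (fun ω => (X ω, V ω)) ⁻¹' s', Z' ω * mz (X ω, V ω) ∂μ := by
      intro s' hs'
      have hsm : MeasurableSet[MeasurableSpace.comap
          (fun ω => (Z ω, X ω, V ω)) inferInstance] ((fun ω => (X ω, V ω)) ⁻¹' s') :=
        ⟨(fun p : ℝ × 𝒳 × 𝒱 => (p.2.1, p.2.2)) ⁻¹' s',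
          (measurable_snd.fst.prodMk measurable_snd.snd) hs', rfl⟩
      set g : Ω → ℝ := fun ω =>
        ((fun ω => (X ω, V ω)) ⁻¹' s').indicator (fun _ => (1:ℝ)) ω * Z' ω with hgdef
      have hZ'sm : StronglyMeasurable[MeasurableSpace.comap
          (fun ω => (Z ω, X ω, V ω)) inferInstance] Z' := by
        have : Measurable[MeasurableSpace.comap
            (fun ω => (Z ω, X ω, V ω)) inferInstance] fun ω =>
              if (Z ω, X ω, V ω).1 = z then (1:ℝ) else 0 :=
          (hf1.comp measurable_fst).comp (Measurable.of_comap_le le_rfl)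
        exact this.stronglyMeasurable
      have hgsm : StronglyMeasurable[MeasurableSpace.comap
          (fun ω => (Z ω, X ω, V ω)) inferInstance] g :=
        (stronglyMeasurable_const.indicator hsm).mul hZ'sm
      have hgbd : ∀ ω, |g ω| ≤ 1 := by
        intro ω
        rw [hgdef]
        by_cases h1 : ω ∈ (fun ω => (X ω, V ω)) ⁻¹' s' <;>
          rcases hZ'01 ω with h2 | h2 <;>
          simp [Set.indicator_apply, h1, h2]
      have hig : ∀ f : Ω → ℝ, ∫ ω in (fun ω => (X ω, V ω)) ⁻¹' s', Z' ω * f ω ∂μ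
          = ∫ ω, g ω * f ω ∂μ := by
        intro f
        rw [← integral_indicator (hXV hs')]
        refine integral_congr_ae (ae_of_all _ fun ω => ?_)
        rw [hgdef]
        by_cases h : ω ∈ (fun ω => (X ω, V ω)) ⁻¹' s' <;>
          simp [Set.indicator_apply, h]
      rw [hig Y, hig (fun ω => mz (X ω, V ω))]
      rw [eif_integral_mul_condexp hmZXV hgsm 1 (ae_of_all _ hgbd) hYint]
      refine integral_congr_ae ?_
      filter_upwards [hmo] with ω h
      rw [← h]
      rcases hZ'01 ω with h2 | h2
      · rw [hgdef]
        by_cases h1 : ω ∈ (fun ω => (X ω, V ω)) ⁻¹' s' <;>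
          simp [Set.indicator_apply, h1, h2]
      · have hzz : Z ω = z := by
          by_contra hne
          rw [hZ'def] at h2; simp [hne] at h2
        rw [hmzdef]
        simp only []
        rw [hzz]
    have key := eif_aux_main μ X V Z' R Y Yz hX hV hZ'M hR hYm hYzM hZ'01 hR01
      C hYb hYzbd hZY w rho mz (del z) hwM hrhoM hmzM (hdelM z) Cm hmzBd
      hw hrho (hdel z hzmem) hA1' hA2' hwpos hA4 hpull
    constructor
    · exact key.1.congr (ae_of_all _ fun ω => (hphi z ω).symm)
    · calc ∫ ω, phi z ω ∂μ
          = ∫ ω, (R ω / rho (X ω) *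
              (Z' ω * (Y ω - mz (X ω, V ω)) / w (X ω, V ω)
                + mz (X ω, V ω) - del z (X ω))
              + del z (X ω)) ∂μ := integral_congr_ae (ae_of_all _ fun ω => hphi z ω)
        _ = ∫ ω, Yz ω ∂μ := key.2
  -- instantiate at z = 1 and z = 0
  have hf1 : Measurable fun t : ℝ => if t = 1 then (1:ℝ) else 0 :=
    Measurable.ite (measurableSet_eq) measurable_const measurable_const
  have hf0 : Measurable fun t : ℝ => if t = 0 then (1:ℝ) else 0 :=
    Measurable.ite (measurableSet_eq) measurable_const measurable_const
  have hZY1 : ∀ ω, (if Z ω = (1:ℝ) then (1:ℝ) else 0) * Y ω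
      = (if Z ω = (1:ℝ) then (1:ℝ) else 0) * Y1 ω := by
    intro ω; rcases hZ01 ω with h | h <;> rw [hYdef ω] <;> simp [h]
  have hZY0 : ∀ ω, (if Z ω = (0:ℝ) then (1:ℝ) else 0) * Y ω
      = (if Z ω = (0:ℝ) then (1:ℝ) else 0) * Y0 ω := by
    intro ω; rcases hZ01 ω with h | h <;> rw [hYdef ω] <;> simp [h]
  have hA2'1 : CondIndepFun (MeasurableSpace.comap (fun ω => (X ω, V ω)) inferInstance)
      (measurable_iff_comap_le.mp (hX.prodMk hV))
      (fun ω => if Z ω = (1:ℝ) then (1:ℝ) else 0) Y1 μ :=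
    hA2.comp hf1 measurable_snd
  have hA2'0 : CondIndepFun (MeasurableSpace.comap (fun ω => (X ω, V ω)) inferInstance)
      (measurable_iff_comap_le.mp (hX.prodMk hV))
      (fun ω => if Z ω = (0:ℝ) then (1:ℝ) else 0) Y0 μ :=
    hA2.comp hf0 measurable_fst
  have k1 := main 1 (Or.inr rfl) Y1 hY1 (fun ω => (hC ω).2) hZY1 hA2'1
  have k0 := main 0 (Or.inl rfl) Y0 hY0 (fun ω => (hC ω).1) hZY0 hA2'0
  constructor
  · intro z hz
    have hz' : z = 0 ∨ z = 1 := by simpa using hz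
    rcases hz' with h | h <;> subst h
    · calc ∫ ω, phi 0 ω ∂μ = ∫ ω, Y0 ω ∂μ := k0.2
        _ = ∫ ω, (if (0:ℝ) = 1 then Y1 ω else Y0 ω) ∂μ := by
            refine integral_congr_ae (ae_of_all _ fun ω => ?_)
            norm_num
    · calc ∫ ω, phi 1 ω ∂μ = ∫ ω, Y1 ω ∂μ := k1.2
        _ = ∫ ω, (if (1:ℝ) = 1 then Y1 ω else Y0 ω) ∂μ := by
            refine integral_congr_ae (ae_of_all _ fun ω => ?_)
            norm_num
  · have hY1int : Integrable Y1 μ :=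
      eif_bdd_integrable hY1.aestronglyMeasurable C (ae_of_all _ fun ω => (hC ω).2)
    have hY0int : Integrable Y0 μ :=
      eif_bdd_integrable hY0.aestronglyMeasurable C (ae_of_all _ fun ω => (hC ω).1)
    have h12 : Integrable (fun ω => phi 1 ω - phi 0 ω) μ := k1.1.sub k0.1
    have e1 : ∫ ω, (phi 1 ω - phi 0 ω - ∫ ω', (Y1 ω' - Y0 ω') ∂μ) ∂μ
        = (∫ ω, (phi 1 ω - phi 0 ω) ∂μ)
          - ∫ _ω, (∫ ω', (Y1 ω' - Y0 ω') ∂μ) ∂μ :=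
      integral_sub h12 (integrable_const _)
    have e2 : ∫ ω, (phi 1 ω - phi 0 ω) ∂μ
        = (∫ ω, phi 1 ω ∂μ) - ∫ ω, phi 0 ω ∂μ := integral_sub k1.1 k0.1
    have e3 : ∫ _ω, (∫ ω', (Y1 ω' - Y0 ω') ∂μ) ∂μ = ∫ ω', (Y1 ω' - Y0 ω') ∂μ := by
      rw [integral_const]
      simp [measure_univ]
    have e4 : ∫ ω', (Y1 ω' - Y0 ω') ∂μ = (∫ ω, Y1 ω ∂μ) - ∫ ω, Y0 ω ∂μ :=
      integral_sub hY1int hY0int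
    rw [e1, e2, e3, e4, k1.2, k0.2]
    ring
end

section
/- (Robustness of the triply robust functional under submodel M1: correct selection probability and propensity score) Under Assumptions (A1)–(A4), for any bounded measurable functions μ* : {0,1} × 𝒳 × 𝒱 → ℝ and h* : 𝒳 → ℝ, setting m*(x,v) = μ*(1,x,v) − μ*(0,x,v), one has E[ (R/ρ(X))·{ (Z/π(X,V))·(Y − μ*(1,X,V)) − ((1−Z)/(1−π(X,V)))·(Y − μ*(0,X,V)) + m*(X,V) − h*(X) } + h*(X) ] = τ. -/
open MeasureTheory ProbabilityTheory
open scoped ENNReal NNReal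

lemma key_transfer {Ω S T : Type*} {m' : MeasurableSpace Ω}
    [mΩ : MeasurableSpace Ω] [StandardBorelSpace Ω] [Nonempty Ω]
    [MeasurableSpace S] [MeasurableSpace T]
    (μ : Measure Ω) [IsProbabilityMeasure μ]
    (φ : Ω → S) (W : Ω → T) (Z : Ω → ℝ)
    (hm' : m' ≤ mΩ) (hφm' : Measurable[m'] φ)
    (hφ : Measurable φ) (hW : Measurable W) (hZ : Measurable Z)
    (hZ01 : ∀ ω, Z ω = 0 ∨ Z ω = 1)
    (p : S → ℝ) (hpM : Measurable p)
    (hp0 : ∀ᵐ ω ∂μ, 0 ≤ p (φ ω))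
    (hp : (fun ω => p (φ ω)) =ᵐ[μ] μ[Z | m'])
    (hCI : CondIndepFun m' hm' Z W μ)
    (f : S × T → ℝ) (hfM : Measurable f) :
    (Integrable (fun ω => Z ω * f (φ ω, W ω)) μ ↔
      Integrable (fun ω => p (φ ω) * f (φ ω, W ω)) μ)
    ∧ ∫ ω, Z ω * f (φ ω, W ω) ∂μ = ∫ ω, p (φ ω) * f (φ ω, W ω) ∂μ := by
  have hZ0 : ∀ ω, 0 ≤ Z ω := fun ω => by rcases hZ01 ω with h | h <;> simp [h]
  have hZ1 : ∀ ω, |Z ω| ≤ 1 := fun ω => by rcases hZ01 ω with h | h <;> simp [h]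
  have hZint : Integrable Z μ :=
    (integrable_const (1 : ℝ)).mono' hZ.aestronglyMeasurable
      (Filter.Eventually.of_forall fun ω => by simpa using hZ1 ω)
  have hpint : Integrable (fun ω => p (φ ω)) μ := integrable_condExp.congr hp.symm
  have hsm : StronglyMeasurable[m'] (fun ω => p (φ ω)) :=
    (hpM.comp hφm').stronglyMeasurable
  -- core set-integral identity
  have core : ∀ s t, MeasurableSet s → MeasurableSet t →
      ∫ ω in φ ⁻¹' s ∩ W ⁻¹' t, Z ω ∂μ = ∫ ω in φ ⁻¹' s ∩ W ⁻¹' t, p (φ ω) ∂μ := by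
    intro s t hs ht
    have hAm' : MeasurableSet[m'] (φ ⁻¹' s) := hφm' hs
    have hA : MeasurableSet[mΩ] (φ ⁻¹' s) := hm' _ hAm'
    have hB : MeasurableSet[mΩ] (W ⁻¹' t) := hW ht
    set q : Ω → ℝ := fun ω => p (φ ω) with hqdef
    set ind : Ω → ℝ := (W ⁻¹' t).indicator (fun _ => (1:ℝ)) with hinddef
    have hindZ : ∀ ω, Z ω = (Z ⁻¹' {1}).indicator (fun _ => (1:ℝ)) ω := fun ω => by
      rcases hZ01 ω with h | h <;> simp [Set.indicator_apply, Set.mem_preimage, h]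
    have hindZB : ∀ ω, (W ⁻¹' t).indicator Z ω
        = ((Z ⁻¹' {1}) ∩ (W ⁻¹' t)).indicator (fun _ => (1:ℝ)) ω := fun ω => by
      by_cases hω : ω ∈ W ⁻¹' t <;>
        rcases hZ01 ω with h | h <;>
        simp [Set.indicator_apply, Set.mem_preimage, h, hω]
    have hZBint : Integrable ((W ⁻¹' t).indicator Z) μ := hZint.indicator hB
    have hCI' := (condIndepFun_iff_condExp_inter_preimage_eq_mul
      (hm' := hm') hZ hW).mp hCI {1} t (measurableSet_singleton 1) ht
    have e1 : μ[(W ⁻¹' t).indicator Z | m']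
        =ᵐ[μ] μ[((Z ⁻¹' {1}) ∩ (W ⁻¹' t)).indicator (fun _ => (1:ℝ)) | m'] :=
      condExp_congr_ae (Filter.Eventually.of_forall hindZB)
    have e2 : μ[(Z ⁻¹' {1}).indicator (fun _ => (1:ℝ)) | m'] =ᵐ[μ] q :=
      (condExp_congr_ae (Filter.Eventually.of_forall fun ω => (hindZ ω).symm)).trans hp.symm
    have e3 : μ[(W ⁻¹' t).indicator Z | m']
        =ᵐ[μ] fun ω => q ω * (μ⟦W ⁻¹' t | m'⟧) ω := by
      refine e1.trans (hCI'.trans ?_)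
      filter_upwards [e2] with ω h2
      rw [h2]
    have hBint1 : Integrable ind μ := (integrable_const (1:ℝ)).indicator hB
    have hindbd : ∀ ω, ‖ind ω‖ ≤ 1 := fun ω => by
      by_cases hω : ω ∈ W ⁻¹' t <;> simp [hinddef, Set.indicator_apply, hω]
    have hqsm : AEStronglyMeasurable q μ := (hpM.comp hφ).aestronglyMeasurable
    have hmulint : Integrable (q * ind) μ := by
      have h1 : Integrable (ind * q) μ :=
        hpint.bdd_mul ((stronglyMeasurable_const.indicator hB).aestronglyMeasurable) (Filter.Eventually.of_forall hindbd)
      exact h1.congr (Filter.Eventually.of_forall fun ω => by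
        simp [Pi.mul_apply, mul_comm])
    have e4 : μ[q * ind | m'] =ᵐ[μ] q * μ[ind | m'] :=
      condExp_mul_of_stronglyMeasurable_left hsm hmulint hBint1
    calc ∫ ω in φ ⁻¹' s ∩ W ⁻¹' t, Z ω ∂μ
        = ∫ ω in φ ⁻¹' s, (W ⁻¹' t).indicator Z ω ∂μ := (setIntegral_indicator hB).symm
      _ = ∫ ω in φ ⁻¹' s, (μ[(W ⁻¹' t).indicator Z | m']) ω ∂μ :=
          (setIntegral_condExp hm' hZBint hAm').symm
      _ = ∫ ω in φ ⁻¹' s, (μ[q * ind | m']) ω ∂μ := by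
          refine setIntegral_congr_ae hA ?_
          filter_upwards [e3, e4] with ω h3 h4 _
          rw [h3, h4, Pi.mul_apply]
      _ = ∫ ω in φ ⁻¹' s, (q * ind) ω ∂μ := setIntegral_condExp hm' hmulint hAm'
      _ = ∫ ω in φ ⁻¹' s, (W ⁻¹' t).indicator q ω ∂μ := by
          refine setIntegral_congr_ae hA (Filter.Eventually.of_forall fun ω _ => ?_)
          by_cases hω : ω ∈ W ⁻¹' t <;>
            simp [hinddef, Set.indicator_apply, hω]
      _ = ∫ ω in φ ⁻¹' s ∩ W ⁻¹' t, p (φ ω) ∂μ := setIntegral_indicator hB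
  -- the two measures
  set d₁ : Ω → ℝ≥0 := fun ω => (Z ω).toNNReal with hd₁def
  set d₂ : Ω → ℝ≥0 := fun ω => (p (φ ω)).toNNReal with hd₂def
  have hd₁ : Measurable[mΩ] d₁ := hZ.real_toNNReal
  have hd₂ : Measurable[mΩ] d₂ := (hpM.comp hφ).real_toNNReal
  have hpair : Measurable[mΩ] (fun ω => (φ ω, W ω)) := hφ.prodMk hW
  set ν₁ : Measure (S × T) :=
    (μ.withDensity (fun ω => (d₁ ω : ℝ≥0∞))).map (fun ω => (φ ω, W ω)) with hν₁def
  set ν₂ : Measure (S × T) :=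
    (μ.withDensity (fun ω => (d₂ ω : ℝ≥0∞))).map (fun ω => (φ ω, W ω)) with hν₂def
  have hlint1 : ∫⁻ a, (d₁ a : ℝ≥0∞) ∂μ = ENNReal.ofReal (∫ a, Z a ∂μ) :=
    Eq.trans (lintegral_congr fun a => rfl)
      (ofReal_integral_eq_lintegral_ofReal hZint (Filter.Eventually.of_forall hZ0)).symm
  have hlint2 : ∫⁻ a, (d₂ a : ℝ≥0∞) ∂μ = ENNReal.ofReal (∫ a, p (φ a) ∂μ) :=
    Eq.trans (lintegral_congr fun a => rfl)
      (ofReal_integral_eq_lintegral_ofReal hpint hp0).symm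
  have hv1 : ∀ s t, MeasurableSet s → MeasurableSet t →
      ν₁ (s ×ˢ t) = ENNReal.ofReal (∫ ω in φ ⁻¹' s ∩ W ⁻¹' t, Z ω ∂μ) := by
    intro s t hs ht
    have hE : MeasurableSet[mΩ] (φ ⁻¹' s ∩ W ⁻¹' t) := (hm' _ (hφm' hs)).inter (hW ht)
    rw [hν₁def, Measure.map_apply hpair (hs.prod ht), Set.mk_preimage_prod,
      withDensity_apply _ hE]
    exact Eq.trans (lintegral_congr fun a => rfl)
      (ofReal_integral_eq_lintegral_ofReal hZint.integrableOn
        (ae_restrict_of_ae (Filter.Eventually.of_forall hZ0))).symm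
  have hv2 : ∀ s t, MeasurableSet s → MeasurableSet t →
      ν₂ (s ×ˢ t) = ENNReal.ofReal (∫ ω in φ ⁻¹' s ∩ W ⁻¹' t, p (φ ω) ∂μ) := by
    intro s t hs ht
    have hE : MeasurableSet[mΩ] (φ ⁻¹' s ∩ W ⁻¹' t) := (hm' _ (hφm' hs)).inter (hW ht)
    rw [hν₂def, Measure.map_apply hpair (hs.prod ht), Set.mk_preimage_prod,
      withDensity_apply _ hE]
    exact Eq.trans (lintegral_congr fun a => rfl)
      (ofReal_integral_eq_lintegral_ofReal hpint.integrableOn (ae_restrict_of_ae hp0)).symm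
  haveI hfin1 : IsFiniteMeasure (μ.withDensity (fun ω => (d₁ ω : ℝ≥0∞))) := by
    constructor
    rw [withDensity_apply _ MeasurableSet.univ, Measure.restrict_univ, hlint1]
    exact ENNReal.ofReal_lt_top
  haveI hfin2 : IsFiniteMeasure (μ.withDensity (fun ω => (d₂ ω : ℝ≥0∞))) := by
    constructor
    rw [withDensity_apply _ MeasurableSet.univ, Measure.restrict_univ, hlint2]
    exact ENNReal.ofReal_lt_top
  haveI : IsFiniteMeasure ν₁ := by
    constructor
    rw [hν₁def, Measure.map_apply hpair MeasurableSet.univ]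
    exact measure_lt_top _ _
  haveI : IsFiniteMeasure ν₂ := by
    constructor
    rw [hν₂def, Measure.map_apply hpair MeasurableSet.univ]
    exact measure_lt_top _ _
  have hνeq : ν₁ = ν₂ := by
    refine ext_of_generate_finite _ generateFrom_prod.symm isPiSystem_prod ?_ ?_
    · rintro u ⟨s, hs, t, ht, rfl⟩
      rw [hv1 s t hs ht, hv2 s t hs ht, core s t hs ht]
    · rw [← Set.univ_prod_univ, hv1 _ _ MeasurableSet.univ MeasurableSet.univ,
        hv2 _ _ MeasurableSet.univ MeasurableSet.univ,
        core _ _ MeasurableSet.univ MeasurableSet.univ]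
  have hsmul1 : ∀ ω, d₁ ω • f (φ ω, W ω) = Z ω * f (φ ω, W ω) := fun ω => by
    rw [NNReal.smul_def, hd₁def]
    simp [Real.coe_toNNReal _ (hZ0 ω)]
  have I1 : ∫ x, f x ∂ν₁ = ∫ ω, Z ω * f (φ ω, W ω) ∂μ := by
    rw [hν₁def, integral_map hpair.aemeasurable hfM.aestronglyMeasurable,
      integral_withDensity_eq_integral_smul hd₁]
    exact integral_congr_ae (Filter.Eventually.of_forall hsmul1)
  have I2 : ∫ x, f x ∂ν₂ = ∫ ω, p (φ ω) * f (φ ω, W ω) ∂μ := by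
    rw [hν₂def, integral_map hpair.aemeasurable hfM.aestronglyMeasurable,
      integral_withDensity_eq_integral_smul hd₂]
    refine integral_congr_ae ?_
    filter_upwards [hp0] with ω h0
    rw [NNReal.smul_def, hd₂def]
    simp [Real.coe_toNNReal _ h0]
  have J1 : Integrable (fun ω => Z ω * f (φ ω, W ω)) μ ↔ Integrable f ν₁ := by
    rw [hν₁def, integrable_map_measure hfM.aestronglyMeasurable hpair.aemeasurable,
      show (f ∘ fun ω => (φ ω, W ω)) = fun ω => f (φ ω, W ω) from rfl,
      integrable_withDensity_iff_integrable_smul hd₁]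
    exact integrable_congr (Filter.Eventually.of_forall fun ω => (hsmul1 ω).symm)
  have J2 : Integrable (fun ω => p (φ ω) * f (φ ω, W ω)) μ ↔ Integrable f ν₂ := by
    rw [hν₂def, integrable_map_measure hfM.aestronglyMeasurable hpair.aemeasurable,
      show (f ∘ fun ω => (φ ω, W ω)) = fun ω => f (φ ω, W ω) from rfl,
      integrable_withDensity_iff_integrable_smul hd₂]
    refine integrable_congr ?_
    filter_upwards [hp0] with ω h0
    rw [NNReal.smul_def, hd₂def]
    simp [Real.coe_toNNReal _ h0]
  constructor
  · rw [J1, J2, hνeq]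
  · rw [← I1, ← I2, hνeq]
theorem triply_robust_M1
    {Ω 𝒳 𝒱 : Type*}
    [MeasurableSpace Ω] [StandardBorelSpace Ω] [Nonempty Ω]
    [MeasurableSpace 𝒳] [StandardBorelSpace 𝒳]
    [MeasurableSpace 𝒱] [StandardBorelSpace 𝒱]
    (μ : Measure Ω) [IsProbabilityMeasure μ]
    (X : Ω → 𝒳) (V : Ω → 𝒱) (Z R Y0 Y1 : Ω → ℝ)
    (hX : Measurable X) (hV : Measurable V) (hZ : Measurable Z)
    (hR : Measurable R) (hY0 : Measurable Y0) (hY1 : Measurable Y1)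
    (hZ01 : ∀ ω, Z ω = 0 ∨ Z ω = 1) (hR01 : ∀ ω, R ω = 0 ∨ R ω = 1)
    (hYbd : ∃ C, ∀ ω, |Y0 ω| ≤ C ∧ |Y1 ω| ≤ C)
    (Y : Ω → ℝ) (hYdef : ∀ ω, Y ω = Z ω * Y1 ω + (1 - Z ω) * Y0 ω)
    (pi : 𝒳 × 𝒱 → ℝ) (rho : 𝒳 → ℝ)
    (hpiM : Measurable pi) (hrhoM : Measurable rho)
    (hpi : (fun ω => pi (X ω, V ω)) =ᵐ[μ]
      μ[Z | MeasurableSpace.comap (fun ω => (X ω, V ω)) inferInstance])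
    (hrho : (fun ω => rho (X ω)) =ᵐ[μ]
      μ[R | MeasurableSpace.comap X inferInstance])
    (hA1 : CondIndepFun (MeasurableSpace.comap X inferInstance)
      (measurable_iff_comap_le.mp hX) R (fun ω => (Y ω, Z ω, V ω)) μ)
    (hA2 : CondIndepFun (MeasurableSpace.comap (fun ω => (X ω, V ω)) inferInstance)
      (measurable_iff_comap_le.mp (hX.prodMk hV)) Z (fun ω => (Y0 ω, Y1 ω)) μ)
    (hA3 : ∀ᵐ ω ∂μ, 0 < pi (X ω, V ω) ∧ pi (X ω, V ω) < 1)
    (hA4 : ∀ᵐ ω ∂μ, 0 < rho (X ω))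
    (mustar : ℝ × 𝒳 × 𝒱 → ℝ) (hmustarM : Measurable mustar)
    (hmustarBd : ∃ C, ∀ p, |mustar p| ≤ C)
    (hstar : 𝒳 → ℝ) (hhstarM : Measurable hstar) (hhstarBd : ∃ C, ∀ x, |hstar x| ≤ C) :
    ∫ ω, (R ω / rho (X ω)) *
          ((Z ω / pi (X ω, V ω)) * (Y ω - mustar (1, X ω, V ω))
            - ((1 - Z ω) / (1 - pi (X ω, V ω))) * (Y ω - mustar (0, X ω, V ω))
            + (mustar (1, X ω, V ω) - mustar (0, X ω, V ω)) - hstar (X ω))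
        + hstar (X ω) ∂μ
      = ∫ ω, (Y1 ω - Y0 ω) ∂μ := by
  have hY : Measurable Y := by
    have : Y = fun ω => Z ω * Y1 ω + (1 - Z ω) * Y0 ω := funext hYdef
    rw [this]
    exact (hZ.mul hY1).add ((measurable_const.sub hZ).mul hY0)
  -- bounded implies integrable
  have bint : ∀ (g : Ω → ℝ), Measurable g → (∃ C, ∀ ω, |g ω| ≤ C) → Integrable g μ := by
    rintro g hg ⟨C, hC⟩
    exact (integrable_const C).mono' hg.aestronglyMeasurable
      (Filter.Eventually.of_forall fun ω => by simpa using hC ω)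
  obtain ⟨Cy, hCy⟩ := hYbd
  obtain ⟨Cm, hCm⟩ := hmustarBd
  obtain ⟨Ch, hCh⟩ := hhstarBd
  have hμ1M : Measurable (fun ω => mustar (1, X ω, V ω)) :=
    hmustarM.comp (measurable_const.prodMk (hX.prodMk hV))
  have hμ0M : Measurable (fun ω => mustar (0, X ω, V ω)) :=
    hmustarM.comp (measurable_const.prodMk (hX.prodMk hV))
  have hHM : Measurable (fun ω => hstar (X ω)) := hhstarM.comp hX
  have hHint : Integrable (fun ω => hstar (X ω)) μ := bint _ hHM ⟨Ch, fun ω => hCh _⟩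
  have hμ1int : Integrable (fun ω => mustar (1, X ω, V ω)) μ := bint _ hμ1M ⟨Cm, fun ω => hCm _⟩
  have hμ0int : Integrable (fun ω => mustar (0, X ω, V ω)) μ := bint _ hμ0M ⟨Cm, fun ω => hCm _⟩
  have hY1int : Integrable Y1 μ := bint _ hY1 ⟨Cy, fun ω => (hCy ω).2⟩
  have hY0int : Integrable Y0 μ := bint _ hY0 ⟨Cy, fun ω => (hCy ω).1⟩
  -- functions
  set W1 : Ω → ℝ × ℝ × 𝒱 := fun ω => (Y ω, Z ω, V ω) with hW1def
  set f₁ : 𝒳 × (ℝ × ℝ × 𝒱) → ℝ := fun q =>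
    (rho q.1)⁻¹ * ((q.2.2.1 / pi (q.1, q.2.2.2)) * (q.2.1 - mustar (1, q.1, q.2.2.2))
      - ((1 - q.2.2.1) / (1 - pi (q.1, q.2.2.2))) * (q.2.1 - mustar (0, q.1, q.2.2.2))
      + (mustar (1, q.1, q.2.2.2) - mustar (0, q.1, q.2.2.2)) - hstar q.1) with hf₁def
  set φ₂ : Ω → 𝒳 × 𝒱 := fun ω => (X ω, V ω) with hφ₂def
  set W₂ : Ω → ℝ × ℝ := fun ω => (Y0 ω, Y1 ω) with hW₂def
  set f₂ : (𝒳 × 𝒱) × (ℝ × ℝ) → ℝ := fun q =>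
    (pi q.1)⁻¹ * (q.2.2 - mustar (1, q.1.1, q.1.2)) with hf₂def
  set f₃ : (𝒳 × 𝒱) × (ℝ × ℝ) → ℝ := fun q =>
    (1 - pi q.1)⁻¹ * (q.2.1 - mustar (0, q.1.1, q.1.2)) with hf₃def
  have hW1M : Measurable W1 := hY.prodMk (hZ.prodMk hV)
  have hφ₂M : Measurable φ₂ := hX.prodMk hV
  have hW₂M : Measurable W₂ := hY0.prodMk hY1
  have hf₁M : Measurable f₁ := by
    rw [hf₁def]
    fun_prop
  have hf₂M : Measurable f₂ := by
    rw [hf₂def]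
    fun_prop
  have hf₃M : Measurable f₃ := by
    rw [hf₃def]
    fun_prop
  -- key transfer, application 1 (selection)
  have key1 := key_transfer (m' := MeasurableSpace.comap X inferInstance) μ X W1 R
    (measurable_iff_comap_le.mp hX) (measurable_iff_comap_le.mpr le_rfl)
    hX hW1M hR hR01 rho hrhoM (hA4.mono fun ω h => h.le) hrho hA1 f₁ hf₁M
  -- key transfer, application 2 (treated)
  have key2 := key_transfer (m' := MeasurableSpace.comap φ₂ inferInstance) μ φ₂ W₂ Z
    (measurable_iff_comap_le.mp hφ₂M) (measurable_iff_comap_le.mpr le_rfl)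
    hφ₂M hW₂M hZ hZ01 pi hpiM (hA3.mono fun ω h => h.1.le) hpi hA2 f₂ hf₂M
  -- key transfer, application 3 (control)
  have hZ'01 : ∀ ω, 1 - Z ω = 0 ∨ 1 - Z ω = 1 := fun ω => by
    rcases hZ01 ω with h | h <;> simp [h]
  have hZint : Integrable Z μ := bint _ hZ ⟨1, fun ω => by rcases hZ01 ω with h | h <;> simp [h]⟩
  have hpi' : (fun ω => 1 - pi (φ₂ ω)) =ᵐ[μ]
      μ[(fun ω => 1 - Z ω) | MeasurableSpace.comap φ₂ inferInstance] := by
    have hsub : μ[(fun ω => (1:ℝ)) - Z | MeasurableSpace.comap φ₂ inferInstance]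
        =ᵐ[μ] μ[(fun ω => (1:ℝ)) | MeasurableSpace.comap φ₂ inferInstance]
          - μ[Z | MeasurableSpace.comap φ₂ inferInstance] :=
      condExp_sub (integrable_const 1) hZint _
    have hone : μ[(fun ω => (1:ℝ)) | MeasurableSpace.comap φ₂ inferInstance]
        = fun _ => (1:ℝ) := condExp_const (measurable_iff_comap_le.mp hφ₂M) 1
    have heq : μ[(fun ω => 1 - Z ω) | MeasurableSpace.comap φ₂ inferInstance]
        =ᵐ[μ] μ[(fun ω => (1:ℝ)) - Z | MeasurableSpace.comap φ₂ inferInstance] :=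
      condExp_congr_ae (Filter.Eventually.of_forall fun ω => rfl)
    filter_upwards [hsub, heq, hpi] with ω h1 h2 h3
    rw [h2, h1, Pi.sub_apply, hone, ← h3]
  have hCI' : CondIndepFun (MeasurableSpace.comap φ₂ inferInstance)
      (measurable_iff_comap_le.mp hφ₂M) (fun ω => 1 - Z ω) W₂ μ := by
    have := hA2.comp (φ := fun z : ℝ => 1 - z) (ψ := id)
      (measurable_const.sub measurable_id) measurable_id
    exact this
  have key3 := key_transfer (m' := MeasurableSpace.comap φ₂ inferInstance) μ φ₂ W₂
    (fun ω => 1 - Z ω)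
    (measurable_iff_comap_le.mp hφ₂M) (measurable_iff_comap_le.mpr le_rfl)
    hφ₂M hW₂M (measurable_const.sub hZ) hZ'01 (fun w => 1 - pi w)
    (measurable_const.sub hpiM) (hA3.mono fun ω h => by
      show (0:ℝ) ≤ 1 - pi (φ₂ ω)
      simp only [hφ₂def]
      linarith [h.2]) hpi' hCI' f₃ hf₃M
  -- a.e. identities
  have eπ : (fun ω => pi (φ₂ ω) * f₂ (φ₂ ω, W₂ ω)) =ᵐ[μ]
      (fun ω => Y1 ω - mustar (1, X ω, V ω)) := by
    filter_upwards [hA3] with ω h3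
    simp only [hf₂def, hφ₂def, hW₂def]
    rw [mul_inv_cancel_left₀ (ne_of_gt h3.1)]
  have eπ' : (fun ω => (1 - pi (φ₂ ω)) * f₃ (φ₂ ω, W₂ ω)) =ᵐ[μ]
      (fun ω => Y0 ω - mustar (0, X ω, V ω)) := by
    filter_upwards [hA3] with ω h3
    simp only [hf₃def, hφ₂def, hW₂def]
    rw [mul_inv_cancel_left₀ (by linarith [h3.2] : (1:ℝ) - pi (X ω, V ω) ≠ 0)]
  have hb1 : Integrable (fun ω => Y1 ω - mustar (1, X ω, V ω)) μ := hY1int.sub hμ1int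
  have hb0 : Integrable (fun ω => Y0 ω - mustar (0, X ω, V ω)) μ := hY0int.sub hμ0int
  have hInt2 : Integrable (fun ω => Z ω * f₂ (φ₂ ω, W₂ ω)) μ :=
    key2.1.mpr (hb1.congr eπ.symm)
  have hInt3 : Integrable (fun ω => (1 - Z ω) * f₃ (φ₂ ω, W₂ ω)) μ :=
    key3.1.mpr (hb0.congr eπ'.symm)
  have hIntP3 : Integrable
      (fun ω => mustar (1, X ω, V ω) - mustar (0, X ω, V ω) - hstar (X ω)) μ :=
    (hμ1int.sub hμ0int).sub hHint
  have hIntG : Integrable (fun ω => Z ω * f₂ (φ₂ ω, W₂ ω)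
      - (1 - Z ω) * f₃ (φ₂ ω, W₂ ω)
      + (mustar (1, X ω, V ω) - mustar (0, X ω, V ω) - hstar (X ω))) μ :=
    (hInt2.sub hInt3).add hIntP3
  have hGρ : (fun ω => rho (X ω) * f₁ (X ω, W1 ω)) =ᵐ[μ]
      (fun ω => Z ω * f₂ (φ₂ ω, W₂ ω) - (1 - Z ω) * f₃ (φ₂ ω, W₂ ω)
        + (mustar (1, X ω, V ω) - mustar (0, X ω, V ω) - hstar (X ω))) := by
    filter_upwards [hA4] with ω h4
    simp only [hf₁def, hf₂def, hf₃def, hφ₂def, hW₂def, hW1def]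
    rw [mul_inv_cancel_left₀ (ne_of_gt h4)]
    rcases hZ01 ω with h | h <;> simp only [hYdef ω, h] <;> ring
  have hInt23 : Integrable (fun ω => Z ω * f₂ (φ₂ ω, W₂ ω)
      - (1 - Z ω) * f₃ (φ₂ ω, W₂ ω)) μ := hInt2.sub hInt3
  have hIntμμ : Integrable (fun ω => mustar (1, X ω, V ω) - mustar (0, X ω, V ω)) μ :=
    hμ1int.sub hμ0int
  have hIntRf₁ : Integrable (fun ω => R ω * f₁ (X ω, W1 ω)) μ :=
    key1.1.mpr (hIntG.congr hGρ.symm)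
  -- main chain
  have step0 : ∀ ω, (R ω / rho (X ω)) *
          ((Z ω / pi (X ω, V ω)) * (Y ω - mustar (1, X ω, V ω))
            - ((1 - Z ω) / (1 - pi (X ω, V ω))) * (Y ω - mustar (0, X ω, V ω))
            + (mustar (1, X ω, V ω) - mustar (0, X ω, V ω)) - hstar (X ω))
        + hstar (X ω)
      = R ω * f₁ (X ω, W1 ω) + hstar (X ω) := by
    intro ω
    simp only [hf₁def, hW1def]
    ring
  calc ∫ ω, (R ω / rho (X ω)) *
          ((Z ω / pi (X ω, V ω)) * (Y ω - mustar (1, X ω, V ω))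
            - ((1 - Z ω) / (1 - pi (X ω, V ω))) * (Y ω - mustar (0, X ω, V ω))
            + (mustar (1, X ω, V ω) - mustar (0, X ω, V ω)) - hstar (X ω))
        + hstar (X ω) ∂μ
      = ∫ ω, (R ω * f₁ (X ω, W1 ω) + hstar (X ω)) ∂μ :=
        integral_congr_ae (Filter.Eventually.of_forall step0)
    _ = (∫ ω, R ω * f₁ (X ω, W1 ω) ∂μ) + ∫ ω, hstar (X ω) ∂μ :=
        integral_add hIntRf₁ hHint
    _ = ∫ ω, (Y1 ω - Y0 ω) ∂μ := by
        rw [key1.2, integral_congr_ae hGρ]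
        rw [integral_add hInt23 hIntP3, integral_sub hInt2 hInt3,
          key2.2, key3.2, integral_congr_ae eπ, integral_congr_ae eπ',
          integral_sub hY1int hμ1int, integral_sub hY0int hμ0int,
          integral_sub hIntμμ hHint, integral_sub hμ1int hμ0int,
          integral_sub hY1int hY0int]
        ring
end

section
/- (Robustness of the triply robust functional under submodel M2: correct selection probability and outcome mean) Under Assumptions (A1)–(A4), for any ε > 0, any measurable function π* : 𝒳 × 𝒱 → [ε, 1−ε] and any bounded measurable function h* : 𝒳 → ℝ, one has E[ (R/ρ(X))·{ (Z/π*(X,V))·(Y − m(1,X,V)) − ((1−Z)/(1−π*(X,V)))·(Y − m(0,X,V)) + m(1,X,V) − m(0,X,V) − h*(X) } + h*(X) ] = τ. -/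
open MeasureTheory ProbabilityTheory

set_option linter.unusedSectionVars false

section Helpers

variable {Ω : Type*} {mΩ : MeasurableSpace Ω} {μ : Measure Ω}

lemma intg_of_bdd [IsFiniteMeasure μ] {f : Ω → ℝ}
    (hf : AEStronglyMeasurable f μ) {C : ℝ} (h : ∀ᵐ ω ∂μ, |f ω| ≤ C) :
    Integrable f μ :=
  (integrable_const C).mono' hf (by simpa [Real.norm_eq_abs] using h)

/-- values of a version of the conditional expectation of a {0,1}-valued r.v. -/
lemma cond01 [IsProbabilityMeasure μ] {m : MeasurableSpace Ω} (hm : m ≤ mΩ)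
    {B : Ω → ℝ} (hB : Measurable[mΩ] B) (hB01 : ∀ ω, B ω = 0 ∨ B ω = 1)
    {b : Ω → ℝ} (hb : b =ᵐ[μ] μ[B | m]) :
    ∀ᵐ ω ∂μ, 0 ≤ b ω ∧ b ω ≤ 1 := by
  have hBnn : (0 : Ω → ℝ) ≤ᵐ[μ] B := ae_of_all _ fun ω => by
    rcases hB01 ω with h | h <;> simp [h]
  have hB1 : B ≤ᵐ[μ] (fun _ => (1 : ℝ)) := ae_of_all _ fun ω => by
    rcases hB01 ω with h | h <;> simp [h]
  have hintB : Integrable B μ := intg_of_bdd (C := 1) hB.aestronglyMeasurable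
    (ae_of_all _ fun ω => by rcases hB01 ω with h | h <;> simp [h])
  have h0 : (0 : Ω → ℝ) ≤ᵐ[μ] μ[B | m] := condExp_nonneg hBnn
  have h1 : μ[B | m] ≤ᵐ[μ] μ[(fun _ => (1:ℝ)) | m] :=
    condExp_mono hintB (integrable_const 1) hB1
  have hc : μ[(fun _ => (1:ℝ)) | m] = fun _ => (1:ℝ) := condExp_const hm 1
  filter_upwards [hb, h0, h1] with ω hbe h0e h1e
  rw [hc] at h1e
  constructor
  · rw [hbe]; exact h0e
  · rw [hbe]; exact h1e

/-- pull-out computation for integrals -/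
lemma integral_mul_condexp [IsProbabilityMeasure μ] {m : MeasurableSpace Ω} (hm : m ≤ mΩ)
    {f g : Ω → ℝ} (hf : StronglyMeasurable[m] f) {c : ℝ} (hfc : ∀ᵐ ω ∂μ, ‖f ω‖ ≤ c)
    (hg : Integrable g μ) :
    ∫ ω, f ω * g ω ∂μ = ∫ ω, f ω * (μ[g | m]) ω ∂μ := by
  have h := condExp_stronglyMeasurable_mul_of_bound hm hf hg c hfc
  have h1 : ∫ ω, f ω * g ω ∂μ = ∫ ω, (μ[fun ω => f ω * g ω | m]) ω ∂μ :=
    (integral_condExp hm).symm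
  rw [h1]
  exact integral_congr_ae h

end Helpers

section KeyLemma

open MeasurableSpace

variable {Ω γ δ : Type*} [mΩ : MeasurableSpace Ω] [StandardBorelSpace Ω] [Nonempty Ω]
  [MeasurableSpace γ] [MeasurableSpace δ]

/-- Key lemma: if `B` is a `{0,1}`-valued r.v., conditionally independent of `W` given
`σ(U)`, then a version `b` of `E[B | σ(U)]` is also a version of `E[B | σ(U, W)]`. -/
lemma condexp_of_condIndepFun (μ : Measure Ω) [IsProbabilityMeasure μ]
    {U : Ω → γ} {W : Ω → δ} {B : Ω → ℝ}
    (hU : Measurable U) (hW : Measurable W) (hB : Measurable B)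
    (hB01 : ∀ ω, B ω = 0 ∨ B ω = 1)
    {hm' : MeasurableSpace.comap U inferInstance ≤ mΩ}
    (hCI : CondIndepFun (MeasurableSpace.comap U inferInstance) hm' B W μ)
    {b : Ω → ℝ} (hbm : Measurable[MeasurableSpace.comap U inferInstance] b)
    (hb : b =ᵐ[μ] μ[B | MeasurableSpace.comap U inferInstance]) :
    b =ᵐ[μ] μ[B | MeasurableSpace.comap (fun ω => (U ω, W ω)) inferInstance] := by
  set T : Ω → γ × δ := fun ω => (U ω, W ω) with hT_def
  have hT : Measurable T := hU.prodMk hW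
  have hmT : MeasurableSpace.comap T inferInstance ≤ mΩ := hT.comap_le
  have hmU_le_mT : MeasurableSpace.comap U inferInstance ≤
      MeasurableSpace.comap T inferInstance := by
    have hUT : U = Prod.fst ∘ T := rfl
    rw [hUT, ← MeasurableSpace.comap_comp]
    exact MeasurableSpace.comap_mono measurable_fst.comap_le
  -- integrability and bounds
  have hBabs : ∀ ω, |B ω| ≤ 1 := fun ω => by rcases hB01 ω with h | h <;> simp [h]
  have hintB : Integrable B μ := intg_of_bdd hB.aestronglyMeasurable (ae_of_all _ hBabs)
  have hb01 : ∀ᵐ ω ∂μ, 0 ≤ b ω ∧ b ω ≤ 1 := cond01 hm' hB hB01 hb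
  have hbabs : ∀ᵐ ω ∂μ, |b ω| ≤ 1 := by
    filter_upwards [hb01] with ω h; rw [abs_le]; exact ⟨by linarith [h.1], h.2⟩
  have hintb : Integrable b μ :=
    intg_of_bdd ((hbm.mono hm' le_rfl).aestronglyMeasurable) hbabs
  -- the indicator of B⁻¹ {1} is B
  have hBind : (Set.indicator (B ⁻¹' {1}) fun _ => (1:ℝ)) = B := by
    funext ω
    rcases hB01 ω with h | h <;>
      simp [Set.indicator_apply, Set.mem_preimage, h]
  -- main set-integral equality
  have main : ∀ t : Set (γ × δ), MeasurableSet t →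
      ∫ ω in T ⁻¹' t, b ω ∂μ = ∫ ω in T ⁻¹' t, B ω ∂μ := by
    have htotal : ∫ ω, b ω ∂μ = ∫ ω, B ω ∂μ := by
      rw [integral_congr_ae hb]; exact integral_condExp hm'
    intro t ht
    refine MeasurableSpace.induction_on_inter
      (C := fun t _ => ∫ ω in T ⁻¹' t, b ω ∂μ = ∫ ω in T ⁻¹' t, B ω ∂μ)
      generateFrom_prod.symm isPiSystem_prod (by simp) ?_ ?_ ?_ t ht
    · intro t ht
      obtain ⟨A, hA, A', hA', rfl⟩ := ht
      simp only [Set.mem_setOf_eq] at hA hA'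
      have hpre : T ⁻¹' (A ×ˢ A') = (U ⁻¹' A) ∩ (W ⁻¹' A') := rfl
      have hsU : MeasurableSet[MeasurableSpace.comap U inferInstance] (U ⁻¹' A) :=
        ⟨A, hA, rfl⟩
      have hsU' : MeasurableSet (U ⁻¹' A) := hU hA
      have hsW : MeasurableSet (W ⁻¹' A') := hW hA'
      -- indicator function of W ⁻¹' A'
      set ind : Ω → ℝ := Set.indicator (W ⁻¹' A') fun _ => (1:ℝ) with hind_def
      have hind_meas : Measurable ind := (measurable_const.indicator hsW)
      have hind_bd : ∀ ω, |ind ω| ≤ 1 := fun ω => by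
        by_cases h : ω ∈ W ⁻¹' A' <;> simp [ind, Set.indicator_apply, h]
      have hintind : Integrable ind μ :=
        intg_of_bdd hind_meas.aestronglyMeasurable (ae_of_all _ hind_bd)
      -- rewrite both sides as integrals over U ⁻¹' A
      have hBprod : ∀ ω, Set.indicator (B ⁻¹' {1} ∩ W ⁻¹' A') (fun _ => (1:ℝ)) ω
          = B ω * ind ω := by
        intro ω
        rcases hB01 ω with h | h <;> by_cases h' : ω ∈ W ⁻¹' A' <;>
          simp [Set.indicator_apply, Set.mem_preimage, h, h', ind]
      have hL : ∫ ω in T ⁻¹' (A ×ˢ A'), B ω ∂μ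
          = ∫ ω in U ⁻¹' A, B ω * ind ω ∂μ := by
        rw [hpre, ← setIntegral_indicator hsW]
        refine setIntegral_congr_fun hsU' fun ω _ => ?_
        by_cases h' : ω ∈ W ⁻¹' A' <;> simp [Set.indicator_apply, h', ind]
      have hLb : ∫ ω in T ⁻¹' (A ×ˢ A'), b ω ∂μ
          = ∫ ω in U ⁻¹' A, b ω * ind ω ∂μ := by
        rw [hpre, ← setIntegral_indicator hsW]
        refine setIntegral_congr_fun hsU' fun ω _ => ?_
        by_cases h' : ω ∈ W ⁻¹' A' <;> simp [Set.indicator_apply, h', ind]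
      rw [hL, hLb]
      -- left side : condition on σ(U)
      have hint_Bind : Integrable (fun ω => B ω * ind ω) μ := by
        refine intg_of_bdd (C := 1) ((hB.mul hind_meas).aestronglyMeasurable)
          (ae_of_all _ fun ω => ?_)
        calc |B ω * ind ω| = |B ω| * |ind ω| := abs_mul _ _
        _ ≤ 1 * 1 := mul_le_mul (hBabs ω) (hind_bd ω) (abs_nonneg _) zero_le_one
        _ = 1 := by norm_num
      have hBI : ∫ ω in U ⁻¹' A, B ω * ind ω ∂μ
          = ∫ ω in U ⁻¹' A, (μ[fun ω => B ω * ind ω | MeasurableSpace.comap U inferInstance]) ω ∂μ :=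
        (setIntegral_condExp hm' hint_Bind hsU).symm
      -- conditional independence on indicators
      have hCI' := (condIndepFun_iff_condExp_inter_preimage_eq_mul hB hW).mp hCI
        {1} A' (measurableSet_singleton 1) hA'
      -- identify μ[B * ind | σ U] with product of condexps
      have hBint_eq : (fun ω => B ω * ind ω)
          = Set.indicator (B ⁻¹' {1} ∩ W ⁻¹' A') (fun _ => (1:ℝ)) :=
        funext fun ω => (hBprod ω).symm
      have hcondB : μ[Set.indicator (B ⁻¹' {1}) (fun _ => (1:ℝ)) |
          MeasurableSpace.comap U inferInstance] = μ[B | MeasurableSpace.comap U inferInstance] := by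
        rw [hBind]
      have hstep : μ[fun ω => B ω * ind ω | MeasurableSpace.comap U inferInstance]
          =ᵐ[μ] fun ω => b ω *
            (μ[ind | MeasurableSpace.comap U inferInstance]) ω := by
        rw [hBint_eq]
        refine hCI'.trans ?_
        rw [hcondB]
        filter_upwards [hb] with ω h
        rw [← h]
      -- right side : pull-out
      have hpull : μ[fun ω => b ω * ind ω | MeasurableSpace.comap U inferInstance]
          =ᵐ[μ] fun ω => b ω * (μ[ind | MeasurableSpace.comap U inferInstance]) ω :=
        condExp_stronglyMeasurable_mul_of_bound hm' hbm.stronglyMeasurable hintind 1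
          (by simpa [Real.norm_eq_abs] using hbabs)
      have hint_bind : Integrable (fun ω => b ω * ind ω) μ := by
        refine intg_of_bdd (C := 1) (((hbm.mono hm' le_rfl).mul hind_meas).aestronglyMeasurable)
          ?_
        filter_upwards [hbabs] with ω h
        calc |b ω * ind ω| = |b ω| * |ind ω| := abs_mul _ _
        _ ≤ 1 * 1 := mul_le_mul h (hind_bd ω) (abs_nonneg _) zero_le_one
        _ = 1 := by norm_num
      have hbI : ∫ ω in U ⁻¹' A, b ω * ind ω ∂μ
          = ∫ ω in U ⁻¹' A, (μ[fun ω => b ω * ind ω | MeasurableSpace.comap U inferInstance]) ω ∂μ :=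
        (setIntegral_condExp hm' hint_bind hsU).symm
      rw [hBI, hbI]
      refine setIntegral_congr_ae (hm' _ hsU) ?_
      filter_upwards [hstep, hpull] with ω h1 h2 _
      rw [h2, h1]
    · intro t ht iht
      have hpc : T ⁻¹' tᶜ = (T ⁻¹' t)ᶜ := rfl
      have hmt : MeasurableSet (T ⁻¹' t) := hT ht
      have h1 : ∫ ω in T ⁻¹' t, b ω ∂μ + ∫ ω in (T ⁻¹' t)ᶜ, b ω ∂μ = ∫ ω, b ω ∂μ :=
        integral_add_compl hmt hintb
      have h2 : ∫ ω in T ⁻¹' t, B ω ∂μ + ∫ ω in (T ⁻¹' t)ᶜ, B ω ∂μ = ∫ ω, B ω ∂μ :=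
        integral_add_compl hmt hintB
      rw [hpc]
      linarith [iht, htotal]
    · intro f hdisj hfm ihf
      have hpre : T ⁻¹' (⋃ i, f i) = ⋃ i, T ⁻¹' (f i) := by simp [Set.preimage_iUnion]
      rw [hpre, integral_iUnion (fun i => hT (hfm i)) (fun i j hij => (hdisj hij).preimage T)
          hintb.integrableOn,
        integral_iUnion (fun i => hT (hfm i)) (fun i j hij => (hdisj hij).preimage T)
          hintB.integrableOn]
      exact tsum_congr fun i => ihf i
  -- conclude by uniqueness of conditional expectation
  refine ae_eq_condExp_of_forall_setIntegral_eq hmT hintB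
    (fun s _ _ => hintb.integrableOn) (fun s hs _ => ?_)
    (StronglyMeasurable.aestronglyMeasurable (hbm.mono hmU_le_mT le_rfl).stronglyMeasurable)
  obtain ⟨t, ht, rfl⟩ := hs
  exact main t ht

end KeyLemma

section MoreHelpers

variable {Ω : Type*} {mΩ : MeasurableSpace Ω}

/-- integrability of `R / ρ(X)` -/
lemma integrable_R_div {𝒳 : Type*} [MeasurableSpace 𝒳]
    (μ : Measure Ω) [IsProbabilityMeasure μ] {X : Ω → 𝒳} {R : Ω → ℝ} {rho : 𝒳 → ℝ}
    (hX : Measurable X) (hR : Measurable R) (hrhoM : Measurable rho)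
    (hR01 : ∀ ω, 0 ≤ R ω ∧ R ω ≤ 1)
    (hrho : (fun ω => rho (X ω)) =ᵐ[μ] μ[R | MeasurableSpace.comap X inferInstance])
    (hA4 : ∀ᵐ ω ∂μ, 0 < rho (X ω)) :
    Integrable (fun ω => R ω / rho (X ω)) μ := by
  have hm : MeasurableSpace.comap X inferInstance ≤ mΩ := hX.comap_le
  have hRm : Measurable (fun ω => R ω / rho (X ω)) := hR.div (hrhoM.comp hX)
  have hintR : Integrable R μ := intg_of_bdd (C := 1) hR.aestronglyMeasurable
    (ae_of_all _ fun ω => abs_le.mpr ⟨by linarith [(hR01 ω).1], (hR01 ω).2⟩)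
  have hd_pos : ∀ (n : ℕ) ω, (0:ℝ) < max (rho (X ω)) ((n+1 : ℝ))⁻¹ :=
    fun n ω => lt_max_of_lt_right (by positivity)
  have hfm : ∀ n : ℕ, Measurable (fun ω => R ω / max (rho (X ω)) ((n+1:ℝ))⁻¹) :=
    fun n => hR.div ((hrhoM.comp hX).max measurable_const)
  have hf_nn : ∀ (n : ℕ) ω, 0 ≤ R ω / max (rho (X ω)) ((n+1:ℝ))⁻¹ :=
    fun n ω => div_nonneg (hR01 ω).1 (hd_pos n ω).le
  have hf_bd : ∀ (n : ℕ) ω, |R ω / max (rho (X ω)) ((n+1:ℝ))⁻¹| ≤ (n+1:ℝ) := by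
    intro n ω
    rw [abs_of_nonneg (hf_nn n ω)]
    calc R ω / max (rho (X ω)) ((n+1:ℝ))⁻¹ ≤ 1 / ((n+1:ℝ))⁻¹ :=
      div_le_div₀ zero_le_one (hR01 ω).2 (by positivity) (le_max_right _ _)
    _ = (n+1:ℝ) := by rw [one_div, inv_inv]
  have hf_int : ∀ n : ℕ, Integrable (fun ω => R ω / max (rho (X ω)) ((n+1:ℝ))⁻¹) μ :=
    fun n => intg_of_bdd (hfm n).aestronglyMeasurable (ae_of_all _ (hf_bd n))
  have hint_le : ∀ n : ℕ, ∫ ω, R ω / max (rho (X ω)) ((n+1:ℝ))⁻¹ ∂μ ≤ 1 := by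
    intro n
    have hgm : Measurable[MeasurableSpace.comap X inferInstance]
        (fun ω => (max (rho (X ω)) ((n+1:ℝ))⁻¹)⁻¹) :=
      ((hrhoM.comp (comap_measurable X)).max measurable_const).inv
    have hgb : ∀ᵐ ω ∂μ, ‖(max (rho (X ω)) ((n+1:ℝ))⁻¹)⁻¹‖ ≤ (n+1:ℝ) := by
      refine ae_of_all _ fun ω => ?_
      rw [Real.norm_eq_abs, abs_of_nonneg (inv_nonneg.mpr (hd_pos n ω).le)]
      calc (max (rho (X ω)) ((n+1:ℝ))⁻¹)⁻¹ ≤ (((n+1:ℝ))⁻¹)⁻¹ :=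
        inv_anti₀ (by positivity) (le_max_right _ _)
      _ = (n+1:ℝ) := inv_inv _
    have heq : (fun ω => R ω / max (rho (X ω)) ((n+1:ℝ))⁻¹)
        = fun ω => (max (rho (X ω)) ((n+1:ℝ))⁻¹)⁻¹ * R ω :=
      funext fun ω => by rw [div_eq_mul_inv, mul_comm]
    have hint1 : Integrable (fun ω => rho (X ω) / max (rho (X ω)) ((n+1:ℝ))⁻¹) μ := by
      refine intg_of_bdd (C := 1) ((hrhoM.comp hX).div
        ((hrhoM.comp hX).max measurable_const)).aestronglyMeasurable ?_
      filter_upwards [hA4] with ω h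
      rw [abs_of_nonneg (div_nonneg h.le (hd_pos n ω).le)]
      exact (div_le_one (hd_pos n ω)).mpr (le_max_left _ _)
    calc ∫ ω, R ω / max (rho (X ω)) ((n+1:ℝ))⁻¹ ∂μ
        = ∫ ω, (max (rho (X ω)) ((n+1:ℝ))⁻¹)⁻¹ * R ω ∂μ := by rw [heq]
    _ = ∫ ω, (max (rho (X ω)) ((n+1:ℝ))⁻¹)⁻¹ *
          (μ[R | MeasurableSpace.comap X inferInstance]) ω ∂μ :=
        integral_mul_condexp hm hgm.stronglyMeasurable hgb hintR
    _ = ∫ ω, rho (X ω) / max (rho (X ω)) ((n+1:ℝ))⁻¹ ∂μ := by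
        refine integral_congr_ae ?_
        filter_upwards [hrho] with ω h
        rw [← h, mul_comm, div_eq_mul_inv]
    _ ≤ ∫ _ω, (1:ℝ) ∂μ := by
        refine integral_mono_ae hint1 (integrable_const 1) ?_
        filter_upwards [hA4] with ω _h
        exact (div_le_one (hd_pos n ω)).mpr (le_max_left _ _)
    _ = 1 := by simp
  refine ⟨hRm.aestronglyMeasurable, ?_⟩
  rw [hasFiniteIntegral_iff_ofReal (by
    filter_upwards [hA4] with ω h
    exact div_nonneg (hR01 ω).1 h.le)]
  have hkey : ∫⁻ ω, ENNReal.ofReal (R ω / rho (X ω)) ∂μ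
      = ⨆ n : ℕ, ∫⁻ ω, ENNReal.ofReal (R ω / max (rho (X ω)) ((n+1:ℝ))⁻¹) ∂μ := by
    rw [← lintegral_iSup' (fun n => ((hfm n).ennreal_ofReal).aemeasurable) ?_]
    · refine lintegral_congr_ae ?_
      filter_upwards [hA4] with ω hpos
      refine le_antisymm ?_ ?_
      · obtain ⟨n, hn⟩ := exists_nat_gt (rho (X ω))⁻¹
        have hn1 : (rho (X ω))⁻¹ < (n:ℝ) + 1 := lt_of_lt_of_le hn (by linarith)
        have h1 : ((n:ℝ)+1)⁻¹ ≤ rho (X ω) := by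
          have := inv_strictAnti₀ (inv_pos.mpr hpos) hn1
          rw [inv_inv] at this
          exact this.le
        have hmax : max (rho (X ω)) (((n:ℝ)+1))⁻¹ = rho (X ω) := max_eq_left h1
        calc ENNReal.ofReal (R ω / rho (X ω))
            = ENNReal.ofReal (R ω / max (rho (X ω)) (((n:ℝ)+1))⁻¹) := by rw [hmax]
        _ ≤ ⨆ n : ℕ, ENNReal.ofReal (R ω / max (rho (X ω)) ((n+1:ℝ))⁻¹) :=
          le_iSup (fun n : ℕ => ENNReal.ofReal (R ω / max (rho (X ω)) ((n+1:ℝ))⁻¹)) n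
      · refine iSup_le fun n => ENNReal.ofReal_le_ofReal ?_
        exact div_le_div_of_nonneg_left (hR01 ω).1 hpos (le_max_left _ _)
    · refine ae_of_all _ fun ω => ?_
      intro i j hij
      refine ENNReal.ofReal_le_ofReal ?_
      refine div_le_div_of_nonneg_left (hR01 ω).1 (hd_pos j ω) ?_
      refine max_le_max le_rfl ?_
      refine inv_anti₀ (by positivity) ?_
      have : (i:ℝ) ≤ (j:ℝ) := Nat.cast_le.mpr hij
      linarith
  rw [hkey]
  have hbound : ∀ n : ℕ, ∫⁻ ω, ENNReal.ofReal (R ω / max (rho (X ω)) ((n+1:ℝ))⁻¹) ∂μ ≤ 1 := by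
    intro n
    rw [← ofReal_integral_eq_lintegral_ofReal (hf_int n) (ae_of_all _ (hf_nn n))]
    calc ENNReal.ofReal (∫ ω, R ω / max (rho (X ω)) ((n+1:ℝ))⁻¹ ∂μ)
        ≤ ENNReal.ofReal 1 := ENNReal.ofReal_le_ofReal (hint_le n)
    _ = 1 := ENNReal.ofReal_one
  exact lt_of_le_of_lt (iSup_le hbound) ENNReal.one_lt_top

/-- generic vanishing term -/
lemma E_zero (μ : Measure Ω) [IsProbabilityMeasure μ]
    {m : MeasurableSpace Ω} (hm : m ≤ mΩ)
    {g q Yf : Ω → ℝ} (hgm : Measurable[m] g) {c : ℝ} (hgb : ∀ ω, |g ω| ≤ c)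
    (hYint : Integrable Yf μ)
    (hgY : Integrable (fun ω => g ω * Yf ω) μ) (hgq : Integrable (fun ω => g ω * q ω) μ)
    (hcond : (fun ω => g ω * (μ[Yf | m]) ω) =ᵐ[μ] fun ω => g ω * q ω) :
    ∫ ω, g ω * (Yf ω - q ω) ∂μ = 0 := by
  have h1 : ∫ ω, g ω * (Yf ω - q ω) ∂μ = ∫ ω, g ω * Yf ω ∂μ - ∫ ω, g ω * q ω ∂μ := by
    simp_rw [mul_sub]
    exact integral_sub hgY hgq
  rw [h1, integral_mul_condexp hm hgm.stronglyMeasurable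
    (ae_of_all _ fun ω => by rw [Real.norm_eq_abs]; exact hgb ω) hYint,
    integral_congr_ae hcond, sub_self]

/-- version of conditional expectation of `1 - Z` -/
lemma one_sub_version {μ : Measure Ω} [IsProbabilityMeasure μ]
    {m : MeasurableSpace Ω} (hm : m ≤ mΩ) {Zf p : Ω → ℝ} (hZint : Integrable Zf μ)
    (hp : p =ᵐ[μ] μ[Zf | m]) :
    (fun ω => 1 - p ω) =ᵐ[μ] μ[fun ω => 1 - Zf ω | m] := by
  have hsub : (fun ω => (1:ℝ) - Zf ω) = (fun _ => (1:ℝ)) - Zf := rfl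
  have h := condExp_sub (μ := μ) (m := m) (integrable_const (1:ℝ)) hZint
  refine Filter.EventuallyEq.symm ?_
  rw [hsub]
  refine h.trans ?_
  rw [condExp_const hm]
  filter_upwards [hp] with ω hω
  rw [Pi.sub_apply, ← hω]

/-- generic outcome-identification step -/
lemma E_out (μ : Measure Ω) [IsProbabilityMeasure μ]
    {mS mB mM : MeasurableSpace Ω} (hmS : mS ≤ mΩ) (hmB : mB ≤ mΩ) (hmM : mM ≤ mΩ)
    (hSB : mS ≤ mB) (hSM : mS ≤ mM)
    {B W Yf p q : Ω → ℝ}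
    (hB : Measurable[mΩ] B) (hB1 : ∀ ω, |B ω| ≤ 1) (hBmM : Measurable[mM] B)
    (hW : Measurable[mΩ] W) {cW : ℝ} (hWb : ∀ ω, |W ω| ≤ cW) (hWmB : Measurable[mB] W)
    (hYint : Integrable Yf μ)
    (hq : Measurable[mS] q) {cq : ℝ} (hqb : ∀ ω, |q ω| ≤ cq)
    (hp : Measurable[mS] p) (hp1 : ∀ᵐ ω ∂μ, |p ω| ≤ 1) (hppos : ∀ᵐ ω ∂μ, 0 < p ω)
    (hpS : p =ᵐ[μ] μ[B | mS]) (hpB : p =ᵐ[μ] μ[B | mB])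
    (hBW : ∀ ω, B ω * W ω = B ω * Yf ω)
    (hBq : (fun ω => B ω * (μ[Yf | mM]) ω) =ᵐ[μ] fun ω => B ω * q ω) :
    ∫ ω, q ω ∂μ = ∫ ω, W ω ∂μ := by
  have intB : Integrable B μ := intg_of_bdd (C := 1) hB.aestronglyMeasurable (ae_of_all _ hB1)
  have intW : Integrable W μ := intg_of_bdd hW.aestronglyMeasurable (ae_of_all _ hWb)
  have hWB_comm : (fun ω => B ω * W ω) = fun ω => W ω * B ω := funext fun ω => mul_comm _ _
  have hinner1 : μ[fun ω => B ω * W ω | mB] =ᵐ[μ] fun ω => p ω * W ω := by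
    rw [hWB_comm]
    refine (condExp_stronglyMeasurable_mul_of_bound hmB hWmB.stronglyMeasurable intB cW
      (ae_of_all _ fun ω => by rw [Real.norm_eq_abs]; exact hWb ω)).trans ?_
    filter_upwards [hpB] with ω h
    rw [Pi.mul_apply, ← h, mul_comm]
  have hb1 : μ[fun ω => B ω * W ω | mS] =ᵐ[μ] fun ω => p ω * (μ[W | mS]) ω := by
    refine ((condExp_condExp_of_le hSB hmB).symm.trans (condExp_congr_ae hinner1)).trans ?_
    exact condExp_stronglyMeasurable_mul_of_bound hmS hp.stronglyMeasurable intW 1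
      (by simpa [Real.norm_eq_abs] using hp1)
  have hBYf : (fun ω => B ω * W ω) = fun ω => B ω * Yf ω := funext hBW
  have hinner2 : μ[fun ω => B ω * Yf ω | mM] =ᵐ[μ] fun ω => B ω * q ω :=
    (condExp_stronglyMeasurable_mul_of_bound hmM hBmM.stronglyMeasurable hYint 1
      (ae_of_all _ fun ω => by rw [Real.norm_eq_abs]; exact hB1 ω)).trans hBq
  have hb2 : μ[fun ω => B ω * W ω | mS] =ᵐ[μ] fun ω => p ω * q ω := by
    rw [hBYf]
    refine ((condExp_condExp_of_le hSM hmM).symm.trans (condExp_congr_ae hinner2)).trans ?_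
    have hqB_comm : (fun ω => B ω * q ω) = fun ω => q ω * B ω := funext fun ω => mul_comm _ _
    rw [hqB_comm]
    refine (condExp_stronglyMeasurable_mul_of_bound hmS hq.stronglyMeasurable intB cq
      (ae_of_all _ fun ω => by rw [Real.norm_eq_abs]; exact hqb ω)).trans ?_
    filter_upwards [hpS] with ω h
    rw [Pi.mul_apply, ← h, mul_comm]
  have hqcond : (μ[W | mS]) =ᵐ[μ] q := by
    filter_upwards [hb1, hb2, hppos] with ω h1 h2 h3
    exact mul_left_cancel₀ (ne_of_gt h3) (h1.symm.trans h2)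
  calc ∫ ω, q ω ∂μ = ∫ ω, (μ[W | mS]) ω ∂μ := (integral_congr_ae hqcond).symm
  _ = ∫ ω, W ω ∂μ := integral_condExp hmS

end MoreHelpers


theorem triply_robust_M2
    {Ω 𝒳 𝒱 : Type*}
    [MeasurableSpace Ω] [StandardBorelSpace Ω] [Nonempty Ω]
    [MeasurableSpace 𝒳] [StandardBorelSpace 𝒳]
    [MeasurableSpace 𝒱] [StandardBorelSpace 𝒱]
    (μ : Measure Ω) [IsProbabilityMeasure μ]
    (X : Ω → 𝒳) (V : Ω → 𝒱) (Z R Y0 Y1 : Ω → ℝ)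
    (hX : Measurable X) (hV : Measurable V) (hZ : Measurable Z)
    (hR : Measurable R) (hY0 : Measurable Y0) (hY1 : Measurable Y1)
    (hZ01 : ∀ ω, Z ω = 0 ∨ Z ω = 1) (hR01 : ∀ ω, R ω = 0 ∨ R ω = 1)
    (hYbd : ∃ C, ∀ ω, |Y0 ω| ≤ C ∧ |Y1 ω| ≤ C)
    (Y : Ω → ℝ) (hYdef : ∀ ω, Y ω = Z ω * Y1 ω + (1 - Z ω) * Y0 ω)
    (pi : 𝒳 × 𝒱 → ℝ) (rho : 𝒳 → ℝ)
    (hpiM : Measurable pi) (hrhoM : Measurable rho)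
    (hpi : (fun ω => pi (X ω, V ω)) =ᵐ[μ]
      μ[Z | MeasurableSpace.comap (fun ω => (X ω, V ω)) inferInstance])
    (hrho : (fun ω => rho (X ω)) =ᵐ[μ]
      μ[R | MeasurableSpace.comap X inferInstance])
    (hA1 : CondIndepFun (MeasurableSpace.comap X inferInstance)
      (measurable_iff_comap_le.mp hX) R (fun ω => (Y ω, Z ω, V ω)) μ)
    (hA2 : CondIndepFun (MeasurableSpace.comap (fun ω => (X ω, V ω)) inferInstance)
      (measurable_iff_comap_le.mp (hX.prodMk hV)) Z (fun ω => (Y0 ω, Y1 ω)) μ)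
    (hA3 : ∀ᵐ ω ∂μ, 0 < pi (X ω, V ω) ∧ pi (X ω, V ω) < 1)
    (hA4 : ∀ᵐ ω ∂μ, 0 < rho (X ω))
    (mo : ℝ × 𝒳 × 𝒱 → ℝ) (hmoM : Measurable mo) (hmoBd : ∃ C, ∀ p, |mo p| ≤ C)
    (hmo : (fun ω => mo (Z ω, X ω, V ω)) =ᵐ[μ]
      μ[Y | MeasurableSpace.comap (fun ω => (Z ω, X ω, V ω)) inferInstance])
    (ε : ℝ) (hε : 0 < ε)
    (pistar : 𝒳 × 𝒱 → ℝ) (hpistarM : Measurable pistar)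
    (hpistarRange : ∀ p, ε ≤ pistar p ∧ pistar p ≤ 1 - ε)
    (hstar : 𝒳 → ℝ) (hhstarM : Measurable hstar) (hhstarBd : ∃ C, ∀ x, |hstar x| ≤ C) :
    ∫ ω, (R ω / rho (X ω)) *
          ((Z ω / pistar (X ω, V ω)) * (Y ω - mo (1, X ω, V ω))
            - ((1 - Z ω) / (1 - pistar (X ω, V ω))) * (Y ω - mo (0, X ω, V ω))
            + mo (1, X ω, V ω) - mo (0, X ω, V ω) - hstar (X ω))
        + hstar (X ω) ∂μ
      = ∫ ω, (Y1 ω - Y0 ω) ∂μ := by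
  classical
  -- basic measurability and bounds
  have hYm : Measurable Y := by
    have h : Y = fun ω => Z ω * Y1 ω + (1 - Z ω) * Y0 ω := funext hYdef
    rw [h]; exact (hZ.mul hY1).add ((measurable_const.sub hZ).mul hY0)
  obtain ⟨C, hC⟩ := hYbd
  obtain ⟨Cm, hCm⟩ := hmoBd
  obtain ⟨Ch, hCh⟩ := hhstarBd
  have hCnn : 0 ≤ C := le_trans (abs_nonneg _) (hC (Classical.arbitrary Ω)).1
  have hCmnn : 0 ≤ Cm := le_trans (abs_nonneg _)
    (hCm (1, X (Classical.arbitrary Ω), V (Classical.arbitrary Ω)))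
  have hChnn : 0 ≤ Ch := le_trans (abs_nonneg _) (hCh (X (Classical.arbitrary Ω)))
  have hYb : ∀ ω, |Y ω| ≤ C := by
    intro ω
    rcases hZ01 ω with h | h
    · rw [hYdef ω, h]; simpa using (hC ω).1
    · rw [hYdef ω, h]; simpa using (hC ω).2
  have hZ01' : ∀ ω, 0 ≤ Z ω ∧ Z ω ≤ 1 := fun ω => by
    rcases hZ01 ω with h | h <;> rw [h] <;> norm_num
  have hR01' : ∀ ω, 0 ≤ R ω ∧ R ω ≤ 1 := fun ω => by
    rcases hR01 ω with h | h <;> rw [h] <;> norm_num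
  have hZb : ∀ ω, |Z ω| ≤ 1 := fun ω => abs_le.mpr ⟨by linarith [(hZ01' ω).1], (hZ01' ω).2⟩
  have hpis : ∀ ω, ε ≤ pistar (X ω, V ω) ∧ pistar (X ω, V ω) ≤ 1 - ε :=
    fun ω => hpistarRange (X ω, V ω)
  have hpis1 : ∀ ω, ε ≤ 1 - pistar (X ω, V ω) := fun ω => by linarith [(hpis ω).2]
  -- σ-algebras
  have hmSle : MeasurableSpace.comap (fun ω => (X ω, V ω)) inferInstance
      ≤ (inferInstance : MeasurableSpace Ω) := (hX.prodMk hV).comap_le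
  have hmMle : MeasurableSpace.comap (fun ω => (Z ω, X ω, V ω)) inferInstance
      ≤ (inferInstance : MeasurableSpace Ω) := (hZ.prodMk (hX.prodMk hV)).comap_le
  have hmBle : MeasurableSpace.comap (fun ω => ((X ω, V ω), (Y0 ω, Y1 ω))) inferInstance
      ≤ (inferInstance : MeasurableSpace Ω) :=
    ((hX.prodMk hV).prodMk (hY0.prodMk hY1)).comap_le
  have hmG1le : MeasurableSpace.comap (fun ω => (X ω, (Y ω, Z ω, V ω))) inferInstance
      ≤ (inferInstance : MeasurableSpace Ω) :=
    (hX.prodMk (hYm.prodMk (hZ.prodMk hV))).comap_le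
  have hSB : MeasurableSpace.comap (fun ω => (X ω, V ω)) inferInstance
      ≤ MeasurableSpace.comap (fun ω => ((X ω, V ω), (Y0 ω, Y1 ω))) inferInstance := by
    have h : (fun ω => (X ω, V ω))
        = (Prod.fst ∘ fun ω => ((X ω, V ω), (Y0 ω, Y1 ω))) := rfl
    rw [h, ← MeasurableSpace.comap_comp]
    exact MeasurableSpace.comap_mono measurable_fst.comap_le
  have hSM : MeasurableSpace.comap (fun ω => (X ω, V ω)) inferInstance
      ≤ MeasurableSpace.comap (fun ω => (Z ω, X ω, V ω)) inferInstance := by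
    have h : (fun ω => (X ω, V ω))
        = (Prod.snd ∘ fun ω => (Z ω, X ω, V ω)) := rfl
    rw [h, ← MeasurableSpace.comap_comp]
    exact MeasurableSpace.comap_mono measurable_snd.comap_le
  -- integrabilities of basic functions
  have intY : Integrable Y μ := intg_of_bdd hYm.aestronglyMeasurable (ae_of_all _ hYb)
  have intZ : Integrable Z μ := intg_of_bdd (C := 1) hZ.aestronglyMeasurable (ae_of_all _ hZb)
  have intY1 : Integrable Y1 μ :=
    intg_of_bdd hY1.aestronglyMeasurable (ae_of_all _ fun ω => (hC ω).2)
  have intY0 : Integrable Y0 μ :=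
    intg_of_bdd hY0.aestronglyMeasurable (ae_of_all _ fun ω => (hC ω).1)
  have intRdiv : Integrable (fun ω => R ω / rho (X ω)) μ :=
    integrable_R_div μ hX hR hrhoM hR01' hrho hA4
  -- E1 : first vanishing term
  have hZmM : Measurable[MeasurableSpace.comap (fun ω => (Z ω, X ω, V ω)) inferInstance] Z :=
    measurable_fst.comp (comap_measurable _)
  have hXVmM : Measurable[MeasurableSpace.comap (fun ω => (Z ω, X ω, V ω)) inferInstance]
      (fun ω => (X ω, V ω)) := measurable_snd.comp (comap_measurable _)
  have hg1mM : Measurable[MeasurableSpace.comap (fun ω => (Z ω, X ω, V ω)) inferInstance]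
      (fun ω => Z ω / pistar (X ω, V ω)) := hZmM.div (hpistarM.comp hXVmM)
  have hg2mM : Measurable[MeasurableSpace.comap (fun ω => (Z ω, X ω, V ω)) inferInstance]
      (fun ω => (1 - Z ω) / (1 - pistar (X ω, V ω))) :=
    (measurable_const.sub hZmM).div (measurable_const.sub (hpistarM.comp hXVmM))
  have hg1b : ∀ ω, |Z ω / pistar (X ω, V ω)| ≤ ε⁻¹ := by
    intro ω
    rw [abs_div]
    calc |Z ω| / |pistar (X ω, V ω)| ≤ 1 / ε :=
      div_le_div₀ zero_le_one (hZb ω) hε (by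
        rw [abs_of_pos (lt_of_lt_of_le hε (hpis ω).1)]; exact (hpis ω).1)
    _ = ε⁻¹ := one_div _
  have hg2b : ∀ ω, |(1 - Z ω) / (1 - pistar (X ω, V ω))| ≤ ε⁻¹ := by
    intro ω
    rw [abs_div, ← one_div ε]
    refine div_le_div₀ zero_le_one ?_ hε ?_
    · exact abs_le.mpr ⟨by linarith [(hZ01' ω).2], by linarith [(hZ01' ω).1]⟩
    · rw [abs_of_pos (lt_of_lt_of_le hε (hpis1 ω))]; exact hpis1 ω
  have hmo1b : ∀ ω, |mo (1, X ω, V ω)| ≤ Cm := fun ω => hCm _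
  have hmo0b : ∀ ω, |mo (0, X ω, V ω)| ≤ Cm := fun ω => hCm _
  have hg1M : Measurable (fun ω => Z ω / pistar (X ω, V ω)) :=
    hZ.div (hpistarM.comp (hX.prodMk hV))
  have hg2M : Measurable (fun ω => (1 - Z ω) / (1 - pistar (X ω, V ω))) :=
    (measurable_const.sub hZ).div (measurable_const.sub (hpistarM.comp (hX.prodMk hV)))
  have hmo1M : Measurable (fun ω => mo (1, X ω, V ω)) :=
    hmoM.comp (measurable_const.prodMk (hX.prodMk hV))
  have hmo0M : Measurable (fun ω => mo (0, X ω, V ω)) :=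
    hmoM.comp (measurable_const.prodMk (hX.prodMk hV))
  have hmulbd : ∀ (f g : Ω → ℝ) (cf cg : ℝ), (∀ ω, |f ω| ≤ cf) → (∀ ω, |g ω| ≤ cg) →
      ∀ ω, |f ω * g ω| ≤ cf * cg := by
    intro f g cf cg hf hg ω
    rw [abs_mul]
    exact mul_le_mul (hf ω) (hg ω) (abs_nonneg _) (le_trans (abs_nonneg _) (hf ω))
  have E1 : ∫ ω, (Z ω / pistar (X ω, V ω)) * (Y ω - mo (1, X ω, V ω)) ∂μ = 0 := by
    refine E_zero μ hmMle hg1mM hg1b intY ?_ ?_ ?_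
    · exact intg_of_bdd (hg1M.mul hYm).aestronglyMeasurable
        (ae_of_all _ (hmulbd _ _ _ _ hg1b hYb))
    · exact intg_of_bdd (hg1M.mul hmo1M).aestronglyMeasurable
        (ae_of_all _ (hmulbd _ _ _ _ hg1b hmo1b))
    · filter_upwards [hmo] with ω h
      rw [← h]
      rcases hZ01 ω with hz | hz
      · simp [hz]
      · rw [hz]
  have E2 : ∫ ω, ((1 - Z ω) / (1 - pistar (X ω, V ω))) * (Y ω - mo (0, X ω, V ω)) ∂μ = 0 := by
    refine E_zero μ hmMle hg2mM hg2b intY ?_ ?_ ?_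
    · exact intg_of_bdd (hg2M.mul hYm).aestronglyMeasurable
        (ae_of_all _ (hmulbd _ _ _ _ hg2b hYb))
    · exact intg_of_bdd (hg2M.mul hmo0M).aestronglyMeasurable
        (ae_of_all _ (hmulbd _ _ _ _ hg2b hmo0b))
    · filter_upwards [hmo] with ω h
      rw [← h]
      rcases hZ01 ω with hz | hz
      · rw [hz]
      · rw [hz]; norm_num
  -- E3/E4 : outcome identification
  have hpi01 : ∀ᵐ ω ∂μ, 0 ≤ pi (X ω, V ω) ∧ pi (X ω, V ω) ≤ 1 :=
    cond01 hmSle hZ hZ01 hpi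
  have hpB : (fun ω => pi (X ω, V ω)) =ᵐ[μ]
      μ[Z | MeasurableSpace.comap (fun ω => ((X ω, V ω), (Y0 ω, Y1 ω))) inferInstance] :=
    condexp_of_condIndepFun μ (hX.prodMk hV) (hY0.prodMk hY1) hZ hZ01 hA2
      (hpiM.comp (comap_measurable _)) hpi
  have hpmS : Measurable[MeasurableSpace.comap (fun ω => (X ω, V ω)) inferInstance]
      (fun ω => pi (X ω, V ω)) := hpiM.comp (comap_measurable _)
  have hmo1mS : Measurable[MeasurableSpace.comap (fun ω => (X ω, V ω)) inferInstance]
      (fun ω => mo (1, X ω, V ω)) :=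
    (hmoM.comp measurable_prodMk_left).comp (comap_measurable _)
  have hmo0mS : Measurable[MeasurableSpace.comap (fun ω => (X ω, V ω)) inferInstance]
      (fun ω => mo (0, X ω, V ω)) :=
    (hmoM.comp measurable_prodMk_left).comp (comap_measurable _)
  have hY1mB : Measurable[MeasurableSpace.comap
      (fun ω => ((X ω, V ω), (Y0 ω, Y1 ω))) inferInstance] Y1 :=
    measurable_snd.comp (measurable_snd.comp (comap_measurable _))
  have hY0mB : Measurable[MeasurableSpace.comap
      (fun ω => ((X ω, V ω), (Y0 ω, Y1 ω))) inferInstance] Y0 :=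
    measurable_fst.comp (measurable_snd.comp (comap_measurable _))
  have E3 : ∫ ω, mo (1, X ω, V ω) ∂μ = ∫ ω, Y1 ω ∂μ := by
    refine E_out μ hmSle hmBle hmMle hSB hSM hZ hZb hZmM hY1 (fun ω => (hC ω).2) hY1mB intY
      hmo1mS hmo1b hpmS ?_ ?_ hpi hpB ?_ ?_
    · filter_upwards [hpi01] with ω h
      exact abs_le.mpr ⟨by linarith [h.1], h.2⟩
    · filter_upwards [hA3] with ω h
      exact h.1
    · intro ω
      rcases hZ01 ω with h | h <;> rw [hYdef ω, h] <;> ring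
    · filter_upwards [hmo] with ω h
      rw [← h]
      rcases hZ01 ω with hz | hz
      · rw [hz]; simp
      · rw [hz]
  have E4 : ∫ ω, mo (0, X ω, V ω) ∂μ = ∫ ω, Y0 ω ∂μ := by
    refine E_out μ (B := fun ω => (1:ℝ) - Z ω) (p := fun ω => 1 - pi (X ω, V ω))
      hmSle hmBle hmMle hSB hSM (measurable_const.sub hZ)
      (fun ω => show |(1:ℝ) - Z ω| ≤ 1 from
        abs_le.mpr ⟨by linarith [(hZ01' ω).2], by linarith [(hZ01' ω).1]⟩)
      (measurable_const.sub hZmM) hY0 (fun ω => (hC ω).1) hY0mB intY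
      hmo0mS hmo0b (measurable_const.sub hpmS) ?_ ?_ ?_ ?_ ?_ ?_
    · filter_upwards [hpi01] with ω h
      exact abs_le.mpr ⟨by linarith [h.2], by linarith [h.1]⟩
    · filter_upwards [hA3] with ω h
      simpa using h.2
    · exact one_sub_version hmSle intZ hpi
    · exact one_sub_version hmBle intZ hpB
    · intro ω
      show (1 - Z ω) * Y0 ω = (1 - Z ω) * Y ω
      rcases hZ01 ω with h | h <;> rw [hYdef ω, h] <;> ring
    · filter_upwards [hmo] with ω h
      rw [← h]
      rcases hZ01 ω with hz | hz
      · rw [hz]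
      · rw [hz]; norm_num
  -- φ and its properties
  set φ : Ω → ℝ := fun ω => (Z ω / pistar (X ω, V ω)) * (Y ω - mo (1, X ω, V ω))
      - ((1 - Z ω) / (1 - pistar (X ω, V ω))) * (Y ω - mo (0, X ω, V ω))
      + mo (1, X ω, V ω) - mo (0, X ω, V ω) - hstar (X ω) with hφ
  have hφM : Measurable φ := by
    rw [hφ]
    exact ((((hg1M.mul (hYm.sub hmo1M)).sub (hg2M.mul (hYm.sub hmo0M))).add hmo1M).sub
      hmo0M).sub (hhstarM.comp hX)
  have hφb : ∀ ω, |φ ω| ≤ ε⁻¹ * (C + Cm) + ε⁻¹ * (C + Cm) + Cm + Cm + Ch := by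
    intro ω
    rw [hφ]
    have h1 : |(Z ω / pistar (X ω, V ω)) * (Y ω - mo (1, X ω, V ω))| ≤ ε⁻¹ * (C + Cm) := by
      rw [abs_mul]
      refine mul_le_mul (hg1b ω) ?_ (abs_nonneg _) (by positivity)
      calc |Y ω - mo (1, X ω, V ω)| ≤ |Y ω| + |mo (1, X ω, V ω)| := abs_sub _ _
      _ ≤ C + Cm := add_le_add (hYb ω) (hmo1b ω)
    have h2 : |((1 - Z ω) / (1 - pistar (X ω, V ω))) * (Y ω - mo (0, X ω, V ω))|
        ≤ ε⁻¹ * (C + Cm) := by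
      rw [abs_mul]
      refine mul_le_mul (hg2b ω) ?_ (abs_nonneg _) (by positivity)
      calc |Y ω - mo (0, X ω, V ω)| ≤ |Y ω| + |mo (0, X ω, V ω)| := abs_sub _ _
      _ ≤ C + Cm := add_le_add (hYb ω) (hmo0b ω)
    calc |(Z ω / pistar (X ω, V ω)) * (Y ω - mo (1, X ω, V ω))
          - ((1 - Z ω) / (1 - pistar (X ω, V ω))) * (Y ω - mo (0, X ω, V ω))
          + mo (1, X ω, V ω) - mo (0, X ω, V ω) - hstar (X ω)|
        ≤ |(Z ω / pistar (X ω, V ω)) * (Y ω - mo (1, X ω, V ω))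
          - ((1 - Z ω) / (1 - pistar (X ω, V ω))) * (Y ω - mo (0, X ω, V ω))
          + mo (1, X ω, V ω) - mo (0, X ω, V ω)| + |hstar (X ω)| := abs_sub _ _
    _ ≤ (|(Z ω / pistar (X ω, V ω)) * (Y ω - mo (1, X ω, V ω))
          - ((1 - Z ω) / (1 - pistar (X ω, V ω))) * (Y ω - mo (0, X ω, V ω))
          + mo (1, X ω, V ω)| + |mo (0, X ω, V ω)|) + |hstar (X ω)| :=
        add_le_add_left (abs_sub _ _) _
    _ ≤ ((|(Z ω / pistar (X ω, V ω)) * (Y ω - mo (1, X ω, V ω))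
          - ((1 - Z ω) / (1 - pistar (X ω, V ω))) * (Y ω - mo (0, X ω, V ω))|
          + |mo (1, X ω, V ω)|) + |mo (0, X ω, V ω)|) + |hstar (X ω)| :=
        add_le_add_left (add_le_add_left (abs_add_le _ _) _) _
    _ ≤ (((|(Z ω / pistar (X ω, V ω)) * (Y ω - mo (1, X ω, V ω))|
          + |((1 - Z ω) / (1 - pistar (X ω, V ω))) * (Y ω - mo (0, X ω, V ω))|)
          + |mo (1, X ω, V ω)|) + |mo (0, X ω, V ω)|) + |hstar (X ω)| :=
        add_le_add_left (add_le_add_left (add_le_add_left (abs_sub _ _) _) _) _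
    _ ≤ ε⁻¹ * (C + Cm) + ε⁻¹ * (C + Cm) + Cm + Cm + Ch := by
        have := hmo1b ω; have := hmo0b ω; have := hCh (X ω)
        linarith [h1, h2]
  have intφ : Integrable φ μ := intg_of_bdd hφM.aestronglyMeasurable (ae_of_all _ hφb)
  have inths : Integrable (fun ω => hstar (X ω)) μ :=
    intg_of_bdd (hhstarM.comp hX).aestronglyMeasurable (ae_of_all _ fun ω => hCh _)
  -- Step 1 : remove R / rho(X)
  have hRdivM : Measurable (fun ω => R ω / rho (X ω)) := hR.div (hrhoM.comp hX)
  have intRφ : Integrable (fun ω => (R ω / rho (X ω)) * φ ω) μ := by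
    refine (intRdiv.abs.const_mul (ε⁻¹ * (C + Cm) + ε⁻¹ * (C + Cm) + Cm + Cm + Ch)).mono'
      ((hRdivM.mul hφM).aestronglyMeasurable) (ae_of_all _ fun ω => ?_)
    rw [Real.norm_eq_abs, abs_mul, mul_comm]
    exact mul_le_mul_of_nonneg_right (hφb ω) (abs_nonneg _)
  have heqg : (fun ω => (φ ω / rho (X ω)) * R ω) = fun ω => (R ω / rho (X ω)) * φ ω :=
    funext fun ω => by ring
  have intgR : Integrable (fun ω => (φ ω / rho (X ω)) * R ω) μ := by rw [heqg]; exact intRφ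
  have intR : Integrable R μ := intg_of_bdd (C := 1) hR.aestronglyMeasurable
    (ae_of_all _ fun ω => abs_le.mpr ⟨by linarith [(hR01' ω).1], (hR01' ω).2⟩)
  -- G1 measurability
  have hMT1 : Measurable[MeasurableSpace.comap (fun ω => (X ω, (Y ω, Z ω, V ω))) inferInstance]
      (fun ω => (X ω, (Y ω, Z ω, V ω))) := comap_measurable _
  have hXG1 : Measurable[MeasurableSpace.comap (fun ω => (X ω, (Y ω, Z ω, V ω))) inferInstance]
      X := measurable_fst.comp hMT1
  have hYG1 : Measurable[MeasurableSpace.comap (fun ω => (X ω, (Y ω, Z ω, V ω))) inferInstance]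
      Y := measurable_fst.comp (measurable_snd.comp hMT1)
  have hZG1 : Measurable[MeasurableSpace.comap (fun ω => (X ω, (Y ω, Z ω, V ω))) inferInstance]
      Z := measurable_fst.comp (measurable_snd.comp (measurable_snd.comp hMT1))
  have hVG1 : Measurable[MeasurableSpace.comap (fun ω => (X ω, (Y ω, Z ω, V ω))) inferInstance]
      V := measurable_snd.comp (measurable_snd.comp (measurable_snd.comp hMT1))
  have hXVG1 : Measurable[MeasurableSpace.comap (fun ω => (X ω, (Y ω, Z ω, V ω))) inferInstance]
      (fun ω => (X ω, V ω)) := hXG1.prodMk hVG1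
  have hφG1 : Measurable[MeasurableSpace.comap (fun ω => (X ω, (Y ω, Z ω, V ω))) inferInstance]
      φ := by
    rw [hφ]
    exact (((((hZG1.div (hpistarM.comp hXVG1)).mul
      (hYG1.sub (hmoM.comp (measurable_const.prodMk hXVG1)))).sub
      (((measurable_const.sub hZG1).div
        (measurable_const.sub (hpistarM.comp hXVG1))).mul
      (hYG1.sub (hmoM.comp (measurable_const.prodMk hXVG1))))).add
      (hmoM.comp (measurable_const.prodMk hXVG1))).sub
      (hmoM.comp (measurable_const.prodMk hXVG1))).sub
      (hhstarM.comp hXG1)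
  have hgG1 : Measurable[MeasurableSpace.comap (fun ω => (X ω, (Y ω, Z ω, V ω))) inferInstance]
      (fun ω => φ ω / rho (X ω)) := hφG1.div (hrhoM.comp hXG1)
  have hF1 : (fun ω => rho (X ω)) =ᵐ[μ]
      μ[R | MeasurableSpace.comap (fun ω => (X ω, (Y ω, Z ω, V ω))) inferInstance] :=
    condexp_of_condIndepFun μ hX (hYm.prodMk (hZ.prodMk hV)) hR hR01 hA1
      (hrhoM.comp (comap_measurable _)) hrho
  have step1 : ∫ ω, (R ω / rho (X ω)) * φ ω ∂μ = ∫ ω, φ ω ∂μ := by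
    calc ∫ ω, (R ω / rho (X ω)) * φ ω ∂μ = ∫ ω, (φ ω / rho (X ω)) * R ω ∂μ := by rw [heqg]
    _ = ∫ ω, (μ[fun ω => (φ ω / rho (X ω)) * R ω |
          MeasurableSpace.comap (fun ω => (X ω, (Y ω, Z ω, V ω))) inferInstance]) ω ∂μ :=
        (integral_condExp hmG1le).symm
    _ = ∫ ω, (φ ω / rho (X ω)) * (μ[R |
          MeasurableSpace.comap (fun ω => (X ω, (Y ω, Z ω, V ω))) inferInstance]) ω ∂μ :=
        integral_congr_ae (condExp_mul_of_stronglyMeasurable_left hgG1.stronglyMeasurable intgR intR)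
    _ = ∫ ω, φ ω ∂μ := by
        refine integral_congr_ae ?_
        filter_upwards [hF1, hA4] with ω h1 h2
        rw [← h1, div_mul_cancel₀ _ (ne_of_gt h2)]
  -- assemble
  have intE1 : Integrable (fun ω => (Z ω / pistar (X ω, V ω)) * (Y ω - mo (1, X ω, V ω))) μ := by
    refine intg_of_bdd (C := ε⁻¹ * (C + Cm)) ((hg1M.mul (hYm.sub hmo1M)).aestronglyMeasurable)
      (ae_of_all _ fun ω => ?_)
    rw [abs_mul]
    refine mul_le_mul (hg1b ω) ?_ (abs_nonneg _) (by positivity)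
    calc |Y ω - mo (1, X ω, V ω)| ≤ |Y ω| + |mo (1, X ω, V ω)| := abs_sub _ _
    _ ≤ C + Cm := add_le_add (hYb ω) (hmo1b ω)
  have intE2 : Integrable
      (fun ω => ((1 - Z ω) / (1 - pistar (X ω, V ω))) * (Y ω - mo (0, X ω, V ω))) μ := by
    refine intg_of_bdd (C := ε⁻¹ * (C + Cm)) ((hg2M.mul (hYm.sub hmo0M)).aestronglyMeasurable)
      (ae_of_all _ fun ω => ?_)
    rw [abs_mul]
    refine mul_le_mul (hg2b ω) ?_ (abs_nonneg _) (by positivity)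
    calc |Y ω - mo (0, X ω, V ω)| ≤ |Y ω| + |mo (0, X ω, V ω)| := abs_sub _ _
    _ ≤ C + Cm := add_le_add (hYb ω) (hmo0b ω)
  have intmo1 : Integrable (fun ω => mo (1, X ω, V ω)) μ :=
    intg_of_bdd hmo1M.aestronglyMeasurable (ae_of_all _ hmo1b)
  have intmo0 : Integrable (fun ω => mo (0, X ω, V ω)) μ :=
    intg_of_bdd hmo0M.aestronglyMeasurable (ae_of_all _ hmo0b)
  have hφsplit : ∫ ω, φ ω ∂μ
      = ∫ ω, (Z ω / pistar (X ω, V ω)) * (Y ω - mo (1, X ω, V ω)) ∂μ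
        - ∫ ω, ((1 - Z ω) / (1 - pistar (X ω, V ω))) * (Y ω - mo (0, X ω, V ω)) ∂μ
        + ∫ ω, mo (1, X ω, V ω) ∂μ - ∫ ω, mo (0, X ω, V ω) ∂μ
        - ∫ ω, hstar (X ω) ∂μ := by
    have i1 : Integrable (fun ω => (Z ω / pistar (X ω, V ω)) * (Y ω - mo (1, X ω, V ω))
        - ((1 - Z ω) / (1 - pistar (X ω, V ω))) * (Y ω - mo (0, X ω, V ω))) μ :=
      intE1.sub intE2
    have i2 : Integrable (fun ω => (Z ω / pistar (X ω, V ω)) * (Y ω - mo (1, X ω, V ω))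
        - ((1 - Z ω) / (1 - pistar (X ω, V ω))) * (Y ω - mo (0, X ω, V ω))
        + mo (1, X ω, V ω)) μ := i1.add intmo1
    have i3 : Integrable (fun ω => (Z ω / pistar (X ω, V ω)) * (Y ω - mo (1, X ω, V ω))
        - ((1 - Z ω) / (1 - pistar (X ω, V ω))) * (Y ω - mo (0, X ω, V ω))
        + mo (1, X ω, V ω) - mo (0, X ω, V ω)) μ := i2.sub intmo0
    simp only [hφ]
    rw [integral_sub i3 inths, integral_sub i2 intmo0, integral_add i1 intmo1,
      integral_sub intE1 intE2]
  have hgoal : (fun ω => (R ω / rho (X ω)) *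
          ((Z ω / pistar (X ω, V ω)) * (Y ω - mo (1, X ω, V ω))
            - ((1 - Z ω) / (1 - pistar (X ω, V ω))) * (Y ω - mo (0, X ω, V ω))
            + mo (1, X ω, V ω) - mo (0, X ω, V ω) - hstar (X ω))
        + hstar (X ω))
      = fun ω => (R ω / rho (X ω)) * φ ω + hstar (X ω) := by rw [hφ]
  rw [hgoal, integral_add intRφ inths, step1, hφsplit, E1, E2, E3, E4,
    integral_sub intY1 intY0]
  ring
end
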